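/- arXiv:1706.04544 — 7 statements merged into one kernel-verified Lean document; each statement's English description precedes it below -/
import Mathlib

section
/- Let 0 < ε < 1/200, let G be a countable discrete group that admits a left-invariant mean (i.e. G is amenable), let H be a complex Hilbert space, and let φ : G → B(H) be a map such that each φ(g) is a unitary operator and ‖φ(gh) − φ(g)φ(h)‖_op < ε for all g, h ∈ G. Then there exists a group homomorphism π : G → U(H) into the unitary group of B(H) such that ‖φ(g) − π(g)‖_op < 2ε for all g ∈ G. -/
set_option linter.unusedSectionVars false


/-- A left-invariant mean on the space of bounded real-valued functions on a group `G`: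
a linear functional `m` with `m 1 = 1`, `m f ≥ 0` whenever `f ≥ 0` pointwise, and
`m (x ↦ f (g x)) = m f` for all `g ∈ G`. -/
structure LeftInvariantMean (G : Type*) [Group G] where
  m : (G → ℝ) → ℝ
  add : ∀ f g : G → ℝ, (∃ C, ∀ x, |f x| ≤ C) → (∃ C, ∀ x, |g x| ≤ C) →
    m (fun x => f x + g x) = m f + m g
  smul : ∀ (c : ℝ) (f : G → ℝ), (∃ C, ∀ x, |f x| ≤ C) →
    m (fun x => c * f x) = c * m f
  one : m (fun _ => 1) = 1
  pos : ∀ f : G → ℝ, (∃ C, ∀ x, |f x| ≤ C) → (∀ x, 0 ≤ f x) → 0 ≤ m f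
  left_inv : ∀ (g : G) (f : G → ℝ), (∃ C, ∀ x, |f x| ≤ C) →
    m (fun x => f (g * x)) = m f

namespace KS

variable {G : Type*} [Group G]

/-- Bounded real function -/
def Bdd (f : G → ℝ) : Prop := ∃ C, ∀ x, |f x| ≤ C

lemma Bdd.of_le {f : G → ℝ} {C : ℝ} (h : ∀ x, |f x| ≤ C) : Bdd f := ⟨C, h⟩

lemma bdd_const (c : ℝ) : Bdd (fun _ : G => c) := ⟨|c|, fun _ => le_rfl⟩

lemma Bdd.add {f g : G → ℝ} (hf : Bdd f) (hg : Bdd g) : Bdd (fun x => f x + g x) := by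
  obtain ⟨C, hC⟩ := hf; obtain ⟨D, hD⟩ := hg
  exact ⟨C + D, fun x => (abs_add_le _ _).trans (add_le_add (hC x) (hD x))⟩

lemma Bdd.neg {f : G → ℝ} (hf : Bdd f) : Bdd (fun x => -f x) := by
  obtain ⟨C, hC⟩ := hf; exact ⟨C, fun x => by rw [abs_neg]; exact hC x⟩

lemma Bdd.sub {f g : G → ℝ} (hf : Bdd f) (hg : Bdd g) : Bdd (fun x => f x - g x) := by
  simpa [sub_eq_add_neg] using hf.add hg.neg

variable (M : LeftInvariantMean G)

lemma m_const (c : ℝ) : M.m (fun _ => c) = c := by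
  have := M.smul c (fun _ => 1) (bdd_const 1)
  simpa [M.one] using this

lemma m_neg {f : G → ℝ} (hf : Bdd f) : M.m (fun x => -f x) = - M.m f := by
  have := M.smul (-1) f hf
  simpa using this

lemma m_mono {f g : G → ℝ} (hf : Bdd f) (hg : Bdd g) (h : ∀ x, f x ≤ g x) :
    M.m f ≤ M.m g := by
  have h1 : M.m (fun x => g x + -f x) = M.m g + M.m (fun x => -f x) :=
    M.add g (fun x => -f x) hg hf.neg
  have h2 : 0 ≤ M.m (fun x => g x + -f x) :=
    M.pos _ (hg.add hf.neg) (fun x => by linarith [h x])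
  have h3 := m_neg M hf
  linarith

lemma m_le_of_le {f : G → ℝ} {C : ℝ} (h : ∀ x, f x ≤ C) (hf : Bdd f) : M.m f ≤ C := by
  have := m_mono M hf (bdd_const C) h
  rwa [m_const] at this

/-- Bounded complex function -/
def CBdd (f : G → ℂ) : Prop := ∃ C, ∀ x, ‖f x‖ ≤ C

lemma CBdd.of_le {f : G → ℂ} {C : ℝ} (h : ∀ x, ‖f x‖ ≤ C) : CBdd f := ⟨C, h⟩

lemma CBdd.re {f : G → ℂ} (hf : CBdd f) : Bdd (fun x => (f x).re) := by
  obtain ⟨C, hC⟩ := hf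
  exact ⟨C, fun x => (Complex.abs_re_le_norm _).trans (hC x)⟩

lemma CBdd.im {f : G → ℂ} (hf : CBdd f) : Bdd (fun x => (f x).im) := by
  obtain ⟨C, hC⟩ := hf
  exact ⟨C, fun x => (Complex.abs_im_le_norm _).trans (hC x)⟩

lemma CBdd.add {f g : G → ℂ} (hf : CBdd f) (hg : CBdd g) : CBdd (fun x => f x + g x) := by
  obtain ⟨C, hC⟩ := hf; obtain ⟨D, hD⟩ := hg
  exact ⟨C + D, fun x => (norm_add_le _ _).trans (add_le_add (hC x) (hD x))⟩

lemma CBdd.const_mul {f : G → ℂ} (hf : CBdd f) (c : ℂ) : CBdd (fun x => c * f x) := by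
  obtain ⟨C, hC⟩ := hf
  exact ⟨‖c‖ * C, fun x => by
    rw [norm_mul]
    exact mul_le_mul_of_nonneg_left (hC x) (norm_nonneg c)⟩

/-- The complex-valued mean. -/
noncomputable def mC (f : G → ℂ) : ℂ :=
  ⟨M.m (fun x => (f x).re), M.m (fun x => (f x).im)⟩

lemma mC_re (f : G → ℂ) : (mC M f).re = M.m (fun x => (f x).re) := rfl
lemma mC_im (f : G → ℂ) : (mC M f).im = M.m (fun x => (f x).im) := rfl

lemma mC_add {f g : G → ℂ} (hf : CBdd f) (hg : CBdd g) :
    mC M (fun x => f x + g x) = mC M f + mC M g := by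
  apply Complex.ext
  · simpa [mC_re] using M.add _ _ hf.re hg.re
  · simpa [mC_im] using M.add _ _ hf.im hg.im

lemma mC_const (c : ℂ) : mC M (fun _ => c) = c := by
  apply Complex.ext <;> simp [mC_re, mC_im, m_const]

lemma mC_real_smul {f : G → ℂ} (hf : CBdd f) (r : ℝ) :
    mC M (fun x => (r : ℂ) * f x) = (r : ℂ) * mC M f := by
  have hre : (fun x => ((r:ℂ) * f x).re) = fun x => r * (f x).re := by
    funext x; simp [Complex.mul_re]
  have him : (fun x => ((r:ℂ) * f x).im) = fun x => r * (f x).im := by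
    funext x; simp [Complex.mul_im]
  apply Complex.ext
  · rw [mC_re, hre, M.smul r _ hf.re]
    simp [Complex.mul_re, mC_re, mC_im]
  · rw [mC_im, him, M.smul r _ hf.im]
    simp [Complex.mul_im, mC_re, mC_im]

lemma mC_I_smul {f : G → ℂ} (hf : CBdd f) :
    mC M (fun x => Complex.I * f x) = Complex.I * mC M f := by
  have hre : (fun x => (Complex.I * f x).re) = fun x => -(f x).im := by
    funext x; simp [Complex.mul_re]
  have him : (fun x => (Complex.I * f x).im) = fun x => (f x).re := by
    funext x; simp [Complex.mul_im]
  apply Complex.ext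
  · rw [mC_re, hre, m_neg M hf.im]
    simp [Complex.mul_re, mC_re, mC_im]
  · rw [mC_im, him]
    simp [Complex.mul_im, mC_re, mC_im]

lemma mC_smul {f : G → ℂ} (hf : CBdd f) (c : ℂ) :
    mC M (fun x => c * f x) = c * mC M f := by
  have h1 : ∀ x, c * f x = (c.re : ℂ) * f x + Complex.I * ((c.im : ℂ) * f x) := by
    intro x
    rw [← mul_assoc, mul_comm Complex.I, mul_assoc]
    nth_rewrite 1 [← Complex.re_add_im c]
    ring
  calc mC M (fun x => c * f x)
      = mC M (fun x => (c.re : ℂ) * f x + Complex.I * ((c.im : ℂ) * f x)) := by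
        simp only [h1]
    _ = (c.re : ℂ) * mC M f + Complex.I * ((c.im : ℂ) * mC M f) := by
        rw [mC_add M (hf.const_mul _) ((hf.const_mul _).const_mul _),
          mC_real_smul M hf, mC_I_smul M (hf.const_mul _), mC_real_smul M hf]
    _ = c * mC M f := by
        rw [← mul_assoc, mul_comm Complex.I, mul_assoc]
        nth_rewrite 3 [← Complex.re_add_im c]
        ring

lemma mC_conj {f : G → ℂ} (hf : CBdd f) :
    mC M (fun x => starRingEnd ℂ (f x)) = starRingEnd ℂ (mC M f) := by
  apply Complex.ext
  · simp [mC_re, Complex.conj_re]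
  · simpa [mC_im, Complex.conj_im] using m_neg M hf.im

lemma mC_left_inv {f : G → ℂ} (hf : CBdd f) (g : G) :
    mC M (fun x => f (g * x)) = mC M f := by
  apply Complex.ext
  · simpa [mC_re] using M.left_inv g _ hf.re
  · simpa [mC_im] using M.left_inv g _ hf.im

lemma mC_norm_le {f : G → ℂ} {C : ℝ} (h : ∀ x, ‖f x‖ ≤ C) : ‖mC M f‖ ≤ C := by
  have hf : CBdd f := ⟨C, h⟩
  by_cases hz : mC M f = 0
  · rw [hz, norm_zero]
    exact le_trans (norm_nonneg _) (h 1)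
  · set z := mC M f with hzdef
    have hzpos : 0 < ‖z‖ := norm_pos_iff.mpr hz
    have key : ‖z‖ ^ 2 ≤ ‖z‖ * C := by
      have h2 : mC M (fun x => starRingEnd ℂ z * f x) = starRingEnd ℂ z * z :=
        mC_smul M hf _
      have h3 : ‖z‖ ^ 2 = M.m (fun x => (starRingEnd ℂ z * f x).re) := by
        rw [← mC_re, h2]
        simp [Complex.mul_re, Complex.sq_norm, Complex.normSq_apply]
      rw [h3]
      apply m_le_of_le
      · intro x
        calc (starRingEnd ℂ z * f x).re ≤ ‖starRingEnd ℂ z * f x‖ := Complex.re_le_norm _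
          _ = ‖z‖ * ‖f x‖ := by rw [norm_mul, RCLike.norm_conj]
          _ ≤ ‖z‖ * C := mul_le_mul_of_nonneg_left (h x) (norm_nonneg z)
      · exact (CBdd.const_mul hf _).re
    nlinarith


open scoped InnerProductSpace

variable {H : Type*} [NormedAddCommGroup H] [InnerProductSpace ℂ H] [CompleteSpace H]

lemma inner_bdd {A : G → H →L[ℂ] H} {C : ℝ} (hC : ∀ g, ‖A g‖ ≤ C) (ξ η : H) :
    ∀ g, ‖⟪A g ξ, η⟫_ℂ‖ ≤ C * ‖ξ‖ * ‖η‖ := by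
  intro g
  calc ‖⟪A g ξ, η⟫_ℂ‖ ≤ ‖A g ξ‖ * ‖η‖ := norm_inner_le_norm _ _
    _ ≤ (C * ‖ξ‖) * ‖η‖ := by
        apply mul_le_mul_of_nonneg_right _ (norm_nonneg η)
        exact (A g).le_of_opNorm_le (hC g) ξ

/-- auxiliary construction of the operator mean, given a bound -/
noncomputable def opMeanAux (A : G → H →L[ℂ] H) (C : ℝ) (hC : ∀ g, ‖A g‖ ≤ C) :
    H →L[ℂ] H := by
  have hC0 : 0 ≤ C := le_trans (norm_nonneg _) (hC 1)
  refine LinearMap.mkContinuous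
    { toFun := fun ξ => (InnerProductSpace.toDual ℂ H).symm
        (LinearMap.mkContinuous
          { toFun := fun η => mC M (fun g => ⟪A g ξ, η⟫_ℂ)
            map_add' := fun η₁ η₂ => by
              rw [show (fun g => ⟪A g ξ, η₁ + η₂⟫_ℂ) =
                  fun g => ⟪A g ξ, η₁⟫_ℂ + ⟪A g ξ, η₂⟫_ℂ from
                    funext fun g => inner_add_right _ _ _]
              exact mC_add M ⟨_, inner_bdd hC ξ η₁⟩ ⟨_, inner_bdd hC ξ η₂⟩
            map_smul' := fun c η => by
              dsimp only [RingHom.id_apply]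
              rw [show (fun g => ⟪A g ξ, c • η⟫_ℂ) = fun g => c * ⟪A g ξ, η⟫_ℂ from
                funext fun g => inner_smul_right _ _ _]
              exact mC_smul M ⟨_, inner_bdd hC ξ η⟩ c }
          (C * ‖ξ‖)
          (fun η => by simpa [mul_assoc] using mC_norm_le M (inner_bdd hC ξ η)))
      map_add' := ?_
      map_smul' := ?_ }
    C ?_
  · intro ξ₁ ξ₂
    apply ext_inner_right ℂ
    intro η
    rw [inner_add_left]
    simp only [InnerProductSpace.toDual_symm_apply, LinearMap.mkContinuous_apply,
      LinearMap.coe_mk, AddHom.coe_mk]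
    rw [show (fun g => ⟪A g (ξ₁ + ξ₂), η⟫_ℂ) =
        fun g => ⟪A g ξ₁, η⟫_ℂ + ⟪A g ξ₂, η⟫_ℂ from
      funext fun g => by rw [map_add, inner_add_left]]
    exact mC_add M ⟨_, inner_bdd hC ξ₁ η⟩ ⟨_, inner_bdd hC ξ₂ η⟩
  · intro c ξ
    apply ext_inner_right ℂ
    intro η
    simp only [RingHom.id_apply]
    rw [inner_smul_left]
    simp only [InnerProductSpace.toDual_symm_apply, LinearMap.mkContinuous_apply,
      LinearMap.coe_mk, AddHom.coe_mk]
    rw [show (fun g => ⟪A g (c • ξ), η⟫_ℂ) =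
        fun g => (starRingEnd ℂ) c * ⟪A g ξ, η⟫_ℂ from
      funext fun g => by rw [map_smul, inner_smul_left]]
    exact mC_smul M ⟨_, inner_bdd hC ξ η⟩ _
  · intro ξ
    simp only [LinearMap.coe_mk, AddHom.coe_mk, LinearIsometryEquiv.norm_map]
    exact LinearMap.mkContinuous_norm_le _ (by positivity) _

lemma inner_opMeanAux {A : G → H →L[ℂ] H} {C : ℝ} (hC : ∀ g, ‖A g‖ ≤ C) (ξ η : H) :
    ⟪opMeanAux M A C hC ξ, η⟫_ℂ = mC M (fun g => ⟪A g ξ, η⟫_ℂ) := by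
  simp only [opMeanAux, LinearMap.mkContinuous_apply, LinearMap.coe_mk, AddHom.coe_mk,
    InnerProductSpace.toDual_symm_apply]

open Classical in
/-- the mean of a family of operators (zero if unbounded) -/
noncomputable def opMean (A : G → H →L[ℂ] H) : H →L[ℂ] H :=
  if h : ∃ C, ∀ g, ‖A g‖ ≤ C then opMeanAux M A h.choose h.choose_spec else 0

lemma inner_opMean {A : G → H →L[ℂ] H} {C : ℝ} (hC : ∀ g, ‖A g‖ ≤ C) (ξ η : H) :
    ⟪opMean M A ξ, η⟫_ℂ = mC M (fun g => ⟪A g ξ, η⟫_ℂ) := by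
  have h : ∃ C, ∀ g, ‖A g‖ ≤ C := ⟨C, hC⟩
  rw [opMean]
  rw [dif_pos h]
  exact inner_opMeanAux M h.choose_spec ξ η

lemma opMean_norm_le {A : G → H →L[ℂ] H} {C : ℝ} (hC : ∀ g, ‖A g‖ ≤ C) :
    ‖opMean M A‖ ≤ C := by
  have hC0 : 0 ≤ C := le_trans (norm_nonneg _) (hC 1)
  apply ContinuousLinearMap.opNorm_le_bound _ hC0
  intro ξ
  set T := opMean M A
  rcases eq_or_lt_of_le (norm_nonneg (T ξ)) with h0 | h0
  · rw [← h0]; positivity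
  · have h1 : ‖T ξ‖ ^ 2 ≤ (C * ‖ξ‖) * ‖T ξ‖ := by
      have h2 : (‖T ξ‖ : ℝ) ^ 2 = RCLike.re ⟪T ξ, T ξ⟫_ℂ := norm_sq_eq_re_inner (𝕜 := ℂ) _
      rw [h2]
      calc RCLike.re ⟪T ξ, T ξ⟫_ℂ ≤ ‖⟪T ξ, T ξ⟫_ℂ‖ := RCLike.re_le_norm _
        _ = ‖mC M (fun g => ⟪A g ξ, T ξ⟫_ℂ)‖ := by rw [inner_opMean M hC]
        _ ≤ C * ‖ξ‖ * ‖T ξ‖ := mC_norm_le M (inner_bdd hC ξ (T ξ))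
    nlinarith

lemma opMean_add {A B : G → H →L[ℂ] H} {C D : ℝ} (hC : ∀ g, ‖A g‖ ≤ C)
    (hD : ∀ g, ‖B g‖ ≤ D) :
    opMean M (fun g => A g + B g) = opMean M A + opMean M B := by
  apply ContinuousLinearMap.ext
  intro ξ
  apply ext_inner_right ℂ
  intro η
  have hAB : ∀ g, ‖A g + B g‖ ≤ C + D := fun g =>
    (norm_add_le _ _).trans (add_le_add (hC g) (hD g))
  rw [ContinuousLinearMap.add_apply, inner_add_left, inner_opMean M hAB,
    inner_opMean M hC, inner_opMean M hD,
    show (fun g => ⟪(A g + B g) ξ, η⟫_ℂ) = fun g => ⟪A g ξ, η⟫_ℂ + ⟪B g ξ, η⟫_ℂ from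
      funext fun g => by rw [ContinuousLinearMap.add_apply, inner_add_left]]
  exact mC_add M ⟨_, inner_bdd hC ξ η⟩ ⟨_, inner_bdd hD ξ η⟩

lemma opMean_const (D : H →L[ℂ] H) : opMean M (fun _ : G => D) = D := by
  apply ContinuousLinearMap.ext
  intro ξ
  apply ext_inner_right ℂ
  intro η
  rw [inner_opMean M (fun _ : G => le_refl ‖D‖), mC_const]

lemma opMean_star {A : G → H →L[ℂ] H} {C : ℝ} (hC : ∀ g, ‖A g‖ ≤ C) :
    star (opMean M A) = opMean M (fun g => star (A g)) := by
  have hC' : ∀ g, ‖star (A g)‖ ≤ C := fun g => by rw [norm_star]; exact hC g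
  apply ContinuousLinearMap.ext
  intro ξ
  apply ext_inner_right ℂ
  intro η
  calc ⟪star (opMean M A) ξ, η⟫_ℂ = ⟪ξ, opMean M A η⟫_ℂ := by
        rw [ContinuousLinearMap.star_eq_adjoint, ContinuousLinearMap.adjoint_inner_left]
    _ = starRingEnd ℂ ⟪opMean M A η, ξ⟫_ℂ := (inner_conj_symm _ _).symm
    _ = starRingEnd ℂ (mC M fun g => ⟪A g η, ξ⟫_ℂ) := by rw [inner_opMean M hC]
    _ = mC M (fun g => starRingEnd ℂ ⟪A g η, ξ⟫_ℂ) := (mC_conj M ⟨_, inner_bdd hC η ξ⟩).symm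
    _ = mC M (fun g => ⟪(star (A g)) ξ, η⟫_ℂ) := by
        congr 1
        funext g
        rw [ContinuousLinearMap.star_eq_adjoint, ContinuousLinearMap.adjoint_inner_left,
          inner_conj_symm]
    _ = ⟪opMean M (fun g => star (A g)) ξ, η⟫_ℂ := (inner_opMean M hC' ξ η).symm

lemma opMean_mul_const {A : G → H →L[ℂ] H} {C : ℝ} (hC : ∀ g, ‖A g‖ ≤ C)
    (D : H →L[ℂ] H) : opMean M A * D = opMean M (fun g => A g * D) := by
  have hC' : ∀ g, ‖A g * D‖ ≤ C * ‖D‖ := fun g =>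
    (norm_mul_le _ _).trans (mul_le_mul_of_nonneg_right (hC g) (norm_nonneg D))
  apply ContinuousLinearMap.ext
  intro ξ
  apply ext_inner_right ℂ
  intro η
  rw [ContinuousLinearMap.mul_apply, inner_opMean M hC, inner_opMean M hC']
  rfl

lemma opMean_const_mul {A : G → H →L[ℂ] H} {C : ℝ} (hC : ∀ g, ‖A g‖ ≤ C)
    (D : H →L[ℂ] H) : D * opMean M A = opMean M (fun g => D * A g) := by
  have hC' : ∀ g, ‖D * A g‖ ≤ ‖D‖ * C := fun g =>
    (norm_mul_le _ _).trans (mul_le_mul_of_nonneg_left (hC g) (norm_nonneg D))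
  apply ContinuousLinearMap.ext
  intro ξ
  apply ext_inner_right ℂ
  intro η
  rw [ContinuousLinearMap.mul_apply, inner_opMean M hC',
    show ⟪D (opMean M A ξ), η⟫_ℂ = ⟪opMean M A ξ, ContinuousLinearMap.adjoint D η⟫_ℂ from
      (ContinuousLinearMap.adjoint_inner_right _ _ _).symm,
    inner_opMean M hC]
  congr 1
  funext g
  rw [ContinuousLinearMap.mul_apply,
    ContinuousLinearMap.adjoint_inner_right]

lemma opMean_left_inv {A : G → H →L[ℂ] H} {C : ℝ} (hC : ∀ g, ‖A g‖ ≤ C) (x : G) :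
    opMean M (fun g => A (x * g)) = opMean M A := by
  have hC' : ∀ g, ‖A (x * g)‖ ≤ C := fun g => hC _
  apply ContinuousLinearMap.ext
  intro ξ
  apply ext_inner_right ℂ
  intro η
  rw [inner_opMean M hC', inner_opMean M hC]
  exact mC_left_inv M ⟨_, inner_bdd hC ξ η⟩ x

/-- main estimate: the mean is close to anything the family is uniformly close to -/
lemma opMean_sub_const_norm_le {A : G → H →L[ℂ] H} {C r : ℝ}
    (hC : ∀ g, ‖A g‖ ≤ C) (D : H →L[ℂ] H) (hr : ∀ g, ‖A g - D‖ ≤ r) :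
    ‖opMean M A - D‖ ≤ r := by
  have key : opMean M A - D = opMean M (fun g => A g - D) := by
    have h1 : opMean M (fun g => (A g - D) + D) = opMean M (fun g => A g - D) + opMean M (fun _ => D) :=
      opMean_add M hr (fun _ => le_refl ‖D‖)
    simp only [sub_add_cancel] at h1
    rw [h1, opMean_const]
    abel
  rw [key]
  exact opMean_norm_le M hr

section Unitaries

variable [Nontrivial H]

instance : Nontrivial (H →L[ℂ] H) := by
  obtain ⟨x, hx⟩ := exists_ne (0 : H)
  refine ⟨1, 0, fun h => hx ?_⟩
  have := ContinuousLinearMap.ext_iff.mp h x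
  simpa using this

lemma norm_unitary_mul {u : H →L[ℂ] H} (hu : u ∈ unitary (H →L[ℂ] H))
    (z : H →L[ℂ] H) : ‖u * z‖ = ‖z‖ :=
  CStarRing.norm_coe_unitary_mul (⟨u, hu⟩ : unitary (H →L[ℂ] H)) z

lemma inverse_of_unitary {u : H →L[ℂ] H} (hu : u ∈ unitary (H →L[ℂ] H)) :
    Ring.inverse u = star u := by
  have h : IsUnit u := ⟨Unitary.toUnits ⟨u, hu⟩, rfl⟩
  obtain ⟨v, hv⟩ := h
  rw [← hv, Ring.inverse_unit]
  have h1 : (v : H →L[ℂ] H) * star (v : H →L[ℂ] H) = 1 := by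
    rw [hv]; exact (Unitary.mem_iff.mp hu).2
  calc (↑v⁻¹ : H →L[ℂ] H) = ↑v⁻¹ * ((v : H →L[ℂ] H) * star (v : H →L[ℂ] H)) := by
        rw [h1, mul_one]
    _ = star (v : H →L[ℂ] H) := by rw [← mul_assoc, Units.inv_mul, one_mul]

lemma near_unitary_inverse {u T : H →L[ℂ] H} (hu : u ∈ unitary (H →L[ℂ] H))
    {r : ℝ} (hr : r < 1) (h : ‖T - u‖ ≤ r) :
    IsUnit T ∧ ‖Ring.inverse T‖ ≤ (1 - r)⁻¹ := by
  have hr0 : 0 ≤ r := le_trans (norm_nonneg _) h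
  set t : H →L[ℂ] H := -(star u * (T - u)) with htdef
  have ht : ‖t‖ ≤ r := by
    calc ‖t‖ = ‖star u * (T - u)‖ := norm_neg _
      _ = ‖T - u‖ := norm_unitary_mul (Unitary.star_mem hu) _
      _ ≤ r := h
  have htl : ‖t‖ < 1 := lt_of_le_of_lt ht hr
  have hsu : star u * u = 1 := (Unitary.mem_iff.mp hu).1
  have hus : u * star u = 1 := (Unitary.mem_iff.mp hu).2
  have h1 : (1 : H →L[ℂ] H) - t = star u * T := by
    rw [htdef, mul_sub, hsu, sub_neg_eq_add]
    abel
  have h2 : u * ((1 : H →L[ℂ] H) - t) = T := by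
    rw [h1, ← mul_assoc, hus, one_mul]
  set V : (H →L[ℂ] H)ˣ := (Unitary.toUnits ⟨u, hu⟩) * Units.oneSub t htl with hV
  have hVval : (V : H →L[ℂ] H) = T := by
    rw [hV, Units.val_mul]
    simpa using h2
  have hunit : IsUnit T := ⟨V, hVval⟩
  refine ⟨hunit, ?_⟩
  have hinv : Ring.inverse T = (↑V⁻¹ : H →L[ℂ] H) := by
    rw [← hVval, Ring.inverse_unit]
  rw [hinv, hV, mul_inv_rev, Units.val_mul]
  have h3 : ‖(↑(Units.oneSub t htl)⁻¹ : H →L[ℂ] H)‖ ≤ (1 - r)⁻¹ := by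
    have h4 : (↑(Units.oneSub t htl)⁻¹ : H →L[ℂ] H) = ∑' n : ℕ, t ^ n := rfl
    rw [h4]
    calc ‖∑' n : ℕ, t ^ n‖ ≤ ‖(1 : H →L[ℂ] H)‖ - 1 + (1 - ‖t‖)⁻¹ :=
          tsum_geometric_le_of_norm_lt_one t htl
      _ = (1 - ‖t‖)⁻¹ := by rw [norm_one]; ring
      _ ≤ (1 - r)⁻¹ := by
          apply inv_anti₀ (by linarith) (by linarith)
  have h5 : ‖(↑((Unitary.toUnits (⟨u, hu⟩ : unitary (H →L[ℂ] H)))⁻¹) : H →L[ℂ] H)‖ = 1 := by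
    have he : (↑((Unitary.toUnits (⟨u, hu⟩ : unitary (H →L[ℂ] H)))⁻¹) : H →L[ℂ] H) = star u :=
      rfl
    rw [he, norm_star]
    exact CStarRing.norm_of_mem_unitary hu
  calc ‖(↑(Units.oneSub t htl)⁻¹ : H →L[ℂ] H) *
        ↑((Unitary.toUnits (⟨u, hu⟩ : unitary (H →L[ℂ] H)))⁻¹)‖
      ≤ ‖(↑(Units.oneSub t htl)⁻¹ : H →L[ℂ] H)‖ *
        ‖(↑((Unitary.toUnits (⟨u, hu⟩ : unitary (H →L[ℂ] H)))⁻¹) : H →L[ℂ] H)‖ :=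
        norm_mul_le _ _
    _ ≤ (1 - r)⁻¹ := by rw [h5, mul_one]; exact h3

end Unitaries

lemma opMean_neg {A : G → H →L[ℂ] H} {C : ℝ} (hC : ∀ g, ‖A g‖ ≤ C) :
    opMean M (fun g => -(A g)) = -(opMean M A) := by
  have hC' : ∀ g, ‖-(A g)‖ ≤ C := fun g => by rw [norm_neg]; exact hC g
  apply ContinuousLinearMap.ext
  intro ξ
  apply ext_inner_right ℂ
  intro η
  rw [ContinuousLinearMap.neg_apply, inner_neg_left, inner_opMean M hC', inner_opMean M hC]
  have hfun : (fun g => ⟪(-(A g)) ξ, η⟫_ℂ) = fun g => (-1 : ℂ) * ⟪A g ξ, η⟫_ℂ := by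
    funext g
    rw [ContinuousLinearMap.neg_apply, inner_neg_left]
    ring
  rw [hfun, mC_smul M ⟨_, inner_bdd hC ξ η⟩]
  ring

lemma opMean_add4 {f1 f2 f3 f4 : G → H →L[ℂ] H} {C1 C2 C3 C4 : ℝ}
    (h1 : ∀ g, ‖f1 g‖ ≤ C1) (h2 : ∀ g, ‖f2 g‖ ≤ C2) (h3 : ∀ g, ‖f3 g‖ ≤ C3)
    (h4 : ∀ g, ‖f4 g‖ ≤ C4) :
    opMean M (fun g => f1 g + f2 g + f3 g + f4 g) =
      opMean M f1 + opMean M f2 + opMean M f3 + opMean M f4 := by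
  have h12 : ∀ g, ‖f1 g + f2 g‖ ≤ C1 + C2 := fun g =>
    (norm_add_le _ _).trans (add_le_add (h1 g) (h2 g))
  have h123 : ∀ g, ‖f1 g + f2 g + f3 g‖ ≤ C1 + C2 + C3 := fun g =>
    (norm_add_le _ _).trans (add_le_add (h12 g) (h3 g))
  rw [opMean_add M h123 h4, opMean_add M h12 h3, opMean_add M h1 h2]

section Step

variable [Nontrivial H] (M : LeftInvariantMean G)

/-- one averaging step -/
noncomputable def avg (ρ : G → H →L[ℂ] H) : G → H →L[ℂ] H :=
  fun x => opMean M (fun g => ρ (x * g) * Ring.inverse (ρ g))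

variable {ρ : G → H →L[ℂ] H} {δ γ β : ℝ}

lemma step_bound (hγ : ∀ g, ‖Ring.inverse (ρ g)‖ ≤ γ) (hβ : ∀ g, ‖ρ g‖ ≤ β) :
    ∀ x g : G, ‖ρ (x * g) * Ring.inverse (ρ g)‖ ≤ β * γ := fun x g =>
  (norm_mul_le _ _).trans
    (mul_le_mul (hβ _) (hγ g) (norm_nonneg _) (le_trans (norm_nonneg _) (hβ 1)))

lemma delta_dist (hρu : ∀ g, IsUnit (ρ g)) (hγ : ∀ g, ‖Ring.inverse (ρ g)‖ ≤ γ)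
    (hdef : ∀ x y, ‖ρ (x * y) - ρ x * ρ y‖ ≤ δ) :
    ∀ x w : G, ‖ρ (x * w) * Ring.inverse (ρ w) - ρ x‖ ≤ δ * γ := by
  intro x w
  have hkey : ρ (x * w) * Ring.inverse (ρ w) - ρ x
      = (ρ (x * w) - ρ x * ρ w) * Ring.inverse (ρ w) := by
    rw [sub_mul, mul_assoc, Ring.mul_inverse_cancel _ (hρu w), mul_one]
  rw [hkey]
  exact (norm_mul_le _ _).trans
    (mul_le_mul (hdef x w) (hγ w) (norm_nonneg _) (le_trans (norm_nonneg _) (hdef x w)))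

lemma avg_dist (hρu : ∀ g, IsUnit (ρ g)) (hγ : ∀ g, ‖Ring.inverse (ρ g)‖ ≤ γ)
    (hβ : ∀ g, ‖ρ g‖ ≤ β) (hdef : ∀ x y, ‖ρ (x * y) - ρ x * ρ y‖ ≤ δ) :
    ∀ x : G, ‖avg M ρ x - ρ x‖ ≤ δ * γ := by
  intro x
  exact opMean_sub_const_norm_le M (step_bound hγ hβ x) (ρ x)
    (fun g => delta_dist hρu hγ hdef x g)

lemma avg_delta_dist (hρu : ∀ g, IsUnit (ρ g)) (hγ : ∀ g, ‖Ring.inverse (ρ g)‖ ≤ γ)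
    (hβ : ∀ g, ‖ρ g‖ ≤ β) (hdef : ∀ x y, ‖ρ (x * y) - ρ x * ρ y‖ ≤ δ) :
    ∀ x w : G, ‖ρ (x * w) * Ring.inverse (ρ w) - avg M ρ x‖ ≤ 2 * (δ * γ) := by
  intro x w
  calc ‖ρ (x * w) * Ring.inverse (ρ w) - avg M ρ x‖
      ≤ ‖ρ (x * w) * Ring.inverse (ρ w) - ρ x‖ + ‖ρ x - avg M ρ x‖ := by
        rw [show ρ (x * w) * Ring.inverse (ρ w) - avg M ρ x
          = (ρ (x * w) * Ring.inverse (ρ w) - ρ x) + (ρ x - avg M ρ x) from by abel]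
        exact norm_add_le _ _
    _ ≤ δ * γ + δ * γ := by
        refine add_le_add (delta_dist hρu hγ hdef x w) ?_
        rw [norm_sub_rev]
        exact avg_dist M hρu hγ hβ hdef x
    _ = 2 * (δ * γ) := by ring

lemma avg_defect (hρu : ∀ g, IsUnit (ρ g)) (hγ : ∀ g, ‖Ring.inverse (ρ g)‖ ≤ γ)
    (hβ : ∀ g, ‖ρ g‖ ≤ β) (hdef : ∀ x y, ‖ρ (x * y) - ρ x * ρ y‖ ≤ δ) :
    ∀ x y : G, ‖avg M ρ (x * y) - avg M ρ x * avg M ρ y‖ ≤ (2 * (δ * γ)) ^ 2 := by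
  intro x y
  set R1 := avg M ρ x with hR1
  set R2 := avg M ρ y with hR2
  have hΔ1b : ∀ g : G, ‖ρ (x * (y * g)) * Ring.inverse (ρ (y * g))‖ ≤ β * γ :=
    fun g => step_bound hγ hβ x (y * g)
  have hΔ2b : ∀ g : G, ‖ρ (y * g) * Ring.inverse (ρ g)‖ ≤ β * γ :=
    fun g => step_bound hγ hβ y g
  have hax : ‖R1‖ ≤ β * γ := opMean_norm_le M (fun g => step_bound hγ hβ x g)
  have hay : ‖R2‖ ≤ β * γ := opMean_norm_le M (fun g => step_bound hγ hβ y g)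
  have hprod : ∀ g : G, (ρ (x * (y * g)) * Ring.inverse (ρ (y * g))) *
      (ρ (y * g) * Ring.inverse (ρ g)) = ρ (x * y * g) * Ring.inverse (ρ g) := by
    intro g
    rw [mul_assoc (ρ (x * (y * g))), ← mul_assoc (Ring.inverse (ρ (y * g))),
      Ring.inverse_mul_cancel _ (hρu (y * g)), one_mul, ← mul_assoc x y g]
  have hfun : (fun g => (ρ (x * (y * g)) * Ring.inverse (ρ (y * g)) - R1) *
        (ρ (y * g) * Ring.inverse (ρ g) - R2))
      = fun g => (ρ (x * y * g) * Ring.inverse (ρ g)) +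
          (-(R1 * (ρ (y * g) * Ring.inverse (ρ g)))) +
          (-((ρ (x * (y * g)) * Ring.inverse (ρ (y * g))) * R2)) + R1 * R2 := by
    funext g
    rw [← hprod g]
    noncomm_ring
  have hmean : opMean M (fun g => (ρ (x * (y * g)) * Ring.inverse (ρ (y * g)) - R1) *
        (ρ (y * g) * Ring.inverse (ρ g) - R2))
      = avg M ρ (x * y) - R1 * R2 := by
    rw [hfun]
    have b1 : ∀ g : G, ‖ρ (x * y * g) * Ring.inverse (ρ g)‖ ≤ β * γ :=
      fun g => step_bound hγ hβ (x * y) g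
    have b2 : ∀ g : G, ‖-(R1 * (ρ (y * g) * Ring.inverse (ρ g)))‖ ≤ (β * γ) * (β * γ) :=
      fun g => by
        rw [norm_neg]
        exact (norm_mul_le _ _).trans
          (mul_le_mul hax (hΔ2b g) (norm_nonneg _) (le_trans (norm_nonneg _) hax))
    have b3 : ∀ g : G, ‖-((ρ (x * (y * g)) * Ring.inverse (ρ (y * g))) * R2)‖
        ≤ (β * γ) * (β * γ) := fun g => by
      rw [norm_neg]
      exact (norm_mul_le _ _).trans
        (mul_le_mul (hΔ1b g) hay (norm_nonneg _) (le_trans (norm_nonneg _) (hΔ1b g)))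
    have b4 : ∀ _g : G, ‖R1 * R2‖ ≤ ‖R1 * R2‖ := fun _ => le_rfl
    rw [opMean_add4 M b1 b2 b3 b4]
    have e1 : opMean M (fun g => ρ (x * y * g) * Ring.inverse (ρ g)) = avg M ρ (x * y) := rfl
    have e2 : opMean M (fun g => -(R1 * (ρ (y * g) * Ring.inverse (ρ g)))) = -(R1 * R2) := by
      rw [opMean_neg M (fun g => (norm_mul_le _ _).trans
        (mul_le_mul hax (hΔ2b g) (norm_nonneg _) (le_trans (norm_nonneg _) hax)))]
      rw [← opMean_const_mul M hΔ2b R1]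
      rfl
    have e3 : opMean M (fun g => -((ρ (x * (y * g)) * Ring.inverse (ρ (y * g))) * R2))
        = -(R1 * R2) := by
      rw [opMean_neg M (fun g => (norm_mul_le _ _).trans
        (mul_le_mul (hΔ1b g) hay (norm_nonneg _) (le_trans (norm_nonneg _) (hΔ1b g))))]
      rw [← opMean_mul_const M hΔ1b R2]
      have e3' : opMean M (fun g => ρ (x * (y * g)) * Ring.inverse (ρ (y * g))) = R1 :=
        opMean_left_inv M (fun w => step_bound hγ hβ x w) y
      rw [e3']
    have e4 : opMean M (fun _ : G => R1 * R2) = R1 * R2 := opMean_const M _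
    rw [e1, e2, e3, e4]
    abel
  rw [← hmean]
  apply opMean_norm_le M
  intro g
  rw [sq]
  exact (norm_mul_le _ _).trans
    (mul_le_mul (avg_delta_dist M hρu hγ hβ hdef x (y * g))
      (avg_delta_dist M hρu hγ hβ hdef y g) (norm_nonneg _)
      (le_trans (norm_nonneg _) (avg_delta_dist M hρu hγ hβ hdef x 1)))

lemma avg_star_unitary {φ : G → H →L[ℂ] H} (hφ : ∀ g, φ g ∈ unitary (H →L[ℂ] H))
    (x : G) : star (avg M φ x) = avg M φ x⁻¹ := by
  have hφn : ∀ g, ‖φ g‖ ≤ 1 := fun g => le_of_eq (CStarRing.norm_of_mem_unitary (hφ g))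
  have hφi : ∀ g, ‖Ring.inverse (φ g)‖ ≤ 1 := fun g => by
    rw [inverse_of_unitary (hφ g), norm_star]
    exact hφn g
  have hb : ∀ g, ‖φ (x * g) * Ring.inverse (φ g)‖ ≤ 1 * 1 := step_bound hφi hφn x
  rw [show avg M φ x = opMean M (fun g => φ (x * g) * Ring.inverse (φ g)) from rfl,
    opMean_star M hb]
  have hfun : (fun g => star (φ (x * g) * Ring.inverse (φ g)))
      = fun g => φ (x⁻¹ * (x * g)) * Ring.inverse (φ (x * g)) := by
    funext g
    rw [star_mul, inverse_of_unitary (hφ g), star_star, inverse_of_unitary (hφ (x * g)),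
      inv_mul_cancel_left]
  rw [hfun]
  exact opMean_left_inv M (fun w => step_bound hφi hφn x⁻¹ w) x

end Step

section Iterate

variable [Nontrivial H] (M : LeftInvariantMean G)

/-- symmetrized averaging step (preserves the star property) -/
noncomputable def symStep (ρ : G → H →L[ℂ] H) : G → H →L[ℂ] H :=
  fun x => (2⁻¹ : ℂ) • (avg M ρ x + star (avg M ρ x⁻¹))

lemma star_half : star (2⁻¹ : ℂ) = 2⁻¹ := by
  rw [show (2⁻¹ : ℂ) = ((2⁻¹ : ℝ) : ℂ) by norm_num, RCLike.star_def, Complex.conj_ofReal]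

lemma norm_half : ‖(2⁻¹ : ℂ)‖ = 2⁻¹ := by
  rw [norm_inv]
  norm_num

lemma step_package {φ ρ : G → H →L[ℂ] H} {δ r : ℝ}
    (hφ : ∀ g, φ g ∈ unitary (H →L[ℂ] H))
    (hdef : ∀ x y, ‖ρ (x * y) - ρ x * ρ y‖ ≤ δ)
    (hstar : ∀ x, star (ρ x) = ρ x⁻¹)
    (hdist : ∀ x, ‖ρ x - φ x‖ ≤ r) (hr : r ≤ 1 / 2) :
    (∀ x y, ‖symStep M ρ (x * y) - symStep M ρ x * symStep M ρ y‖ ≤ 20 * δ ^ 2) ∧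
    (∀ x, star (symStep M ρ x) = symStep M ρ x⁻¹) ∧
    (∀ x, ‖symStep M ρ x - ρ x‖ ≤ 2 * δ) := by
  have hδ0 : 0 ≤ δ := le_trans (norm_nonneg _) (hdef 1 1)
  have hr1 : r < 1 := lt_of_le_of_lt hr (by norm_num)
  have hρu : ∀ g, IsUnit (ρ g) := fun g =>
    (near_unitary_inverse (hφ g) hr1 (hdist g)).1
  have hγ : ∀ g, ‖Ring.inverse (ρ g)‖ ≤ 2 := by
    intro g
    refine le_trans (near_unitary_inverse (hφ g) hr1 (hdist g)).2 ?_
    rw [show (2 : ℝ) = (2⁻¹)⁻¹ by norm_num]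
    apply inv_anti₀ (by norm_num) (by linarith)
  have hβ : ∀ g, ‖ρ g‖ ≤ 2 := by
    intro g
    calc ‖ρ g‖ ≤ ‖ρ g - φ g‖ + ‖φ g‖ := by
          simpa using norm_add_le (ρ g - φ g) (φ g)
      _ ≤ r + 1 := add_le_add (hdist g) (le_of_eq (CStarRing.norm_of_mem_unitary (hφ g)))
      _ ≤ 2 := by linarith
  set A := avg M ρ with hA
  have hAdef : ∀ x y, ‖A (x * y) - A x * A y‖ ≤ 16 * δ ^ 2 := by
    intro x y
    refine le_trans (avg_defect M hρu hγ hβ hdef x y) (le_of_eq ?_)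
    ring
  have hAdist : ∀ x, ‖A x - ρ x‖ ≤ 2 * δ := by
    intro x
    refine le_trans (avg_dist M hρu hγ hβ hdef x) ?_
    linarith
  have hBdist : ∀ x, ‖star (A x⁻¹) - ρ x‖ ≤ 2 * δ := by
    intro x
    have h1 : ρ x = star (ρ x⁻¹) := by rw [hstar x⁻¹, inv_inv]
    calc ‖star (A x⁻¹) - ρ x‖ = ‖star (A x⁻¹) - star (ρ x⁻¹)‖ := by rw [← h1]
      _ = ‖star (A x⁻¹ - ρ x⁻¹)‖ := by rw [star_sub]
      _ = ‖A x⁻¹ - ρ x⁻¹‖ := norm_star _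
      _ ≤ 2 * δ := hAdist x⁻¹
  have hABdist : ∀ x, ‖A x - star (A x⁻¹)‖ ≤ 4 * δ := by
    intro x
    calc ‖A x - star (A x⁻¹)‖ = ‖(A x - ρ x) - (star (A x⁻¹) - ρ x)‖ := by
          congr 1; abel
      _ ≤ ‖A x - ρ x‖ + ‖star (A x⁻¹) - ρ x‖ := norm_sub_le _ _
      _ ≤ 2 * δ + 2 * δ := add_le_add (hAdist x) (hBdist x)
      _ = 4 * δ := by ring
  refine ⟨?_, ?_, ?_⟩
  · intro x y
    have hiden : symStep M ρ (x * y) - symStep M ρ x * symStep M ρ y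
        = (2⁻¹ : ℂ) • (A (x * y) - A x * A y)
          + (2⁻¹ : ℂ) • (star (A (y⁻¹ * x⁻¹)) - star (A x⁻¹) * star (A y⁻¹))
          + ((2⁻¹ : ℂ) * 2⁻¹) • ((A x - star (A x⁻¹)) * (A y - star (A y⁻¹))) := by
      simp only [symStep, mul_inv_rev, ← hA]
      simp only [smul_add, add_mul, mul_add, smul_mul_assoc, mul_smul_comm, smul_smul,
        sub_mul, mul_sub]
      module
    rw [hiden]
    have t1 : ‖(2⁻¹ : ℂ) • (A (x * y) - A x * A y)‖ ≤ 2⁻¹ * (16 * δ ^ 2) := by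
      rw [norm_smul, norm_half]
      exact mul_le_mul_of_nonneg_left (hAdef x y) (by norm_num)
    have t2 : ‖(2⁻¹ : ℂ) • (star (A (y⁻¹ * x⁻¹)) - star (A x⁻¹) * star (A y⁻¹))‖
        ≤ 2⁻¹ * (16 * δ ^ 2) := by
      rw [norm_smul, norm_half]
      apply mul_le_mul_of_nonneg_left _ (by norm_num)
      have : star (A (y⁻¹ * x⁻¹)) - star (A x⁻¹) * star (A y⁻¹)
          = star (A (y⁻¹ * x⁻¹) - A y⁻¹ * A x⁻¹) := by
        rw [star_sub, star_mul]
      rw [this, norm_star]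
      exact hAdef y⁻¹ x⁻¹
    have t3 : ‖((2⁻¹ : ℂ) * 2⁻¹) • ((A x - star (A x⁻¹)) * (A y - star (A y⁻¹)))‖
        ≤ (2⁻¹ * 2⁻¹) * ((4 * δ) * (4 * δ)) := by
      rw [norm_smul, norm_mul, norm_half]
      apply mul_le_mul_of_nonneg_left _ (by norm_num)
      exact (norm_mul_le _ _).trans
        (mul_le_mul (hABdist x) (hABdist y) (norm_nonneg _) (by linarith))
    calc ‖(2⁻¹ : ℂ) • (A (x * y) - A x * A y)
          + (2⁻¹ : ℂ) • (star (A (y⁻¹ * x⁻¹)) - star (A x⁻¹) * star (A y⁻¹))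
          + ((2⁻¹ : ℂ) * 2⁻¹) • ((A x - star (A x⁻¹)) * (A y - star (A y⁻¹)))‖
        ≤ ‖(2⁻¹ : ℂ) • (A (x * y) - A x * A y)
          + (2⁻¹ : ℂ) • (star (A (y⁻¹ * x⁻¹)) - star (A x⁻¹) * star (A y⁻¹))‖
          + ‖((2⁻¹ : ℂ) * 2⁻¹) • ((A x - star (A x⁻¹)) * (A y - star (A y⁻¹)))‖ :=
          norm_add_le _ _
      _ ≤ ‖(2⁻¹ : ℂ) • (A (x * y) - A x * A y)‖
          + ‖(2⁻¹ : ℂ) • (star (A (y⁻¹ * x⁻¹)) - star (A x⁻¹) * star (A y⁻¹))‖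
          + ‖((2⁻¹ : ℂ) * 2⁻¹) • ((A x - star (A x⁻¹)) * (A y - star (A y⁻¹)))‖ :=
          add_le_add_left (norm_add_le _ _) _
      _ ≤ 2⁻¹ * (16 * δ ^ 2) + 2⁻¹ * (16 * δ ^ 2) + (2⁻¹ * 2⁻¹) * ((4 * δ) * (4 * δ)) :=
          add_le_add (add_le_add t1 t2) t3
      _ = 20 * δ ^ 2 := by ring
  · intro x
    rw [symStep, symStep, star_smul, star_half, star_add, star_star, inv_inv]
    rw [add_comm]
  · intro x
    have hiden2 : symStep M ρ x - ρ x
        = (2⁻¹ : ℂ) • ((A x - ρ x) + (star (A x⁻¹) - ρ x)) := by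
      simp only [symStep, ← hA]
      module
    rw [hiden2, norm_smul, norm_half]
    calc 2⁻¹ * ‖(A x - ρ x) + (star (A x⁻¹) - ρ x)‖
        ≤ 2⁻¹ * (‖A x - ρ x‖ + ‖star (A x⁻¹) - ρ x‖) :=
          mul_le_mul_of_nonneg_left (norm_add_le _ _) (by norm_num)
      _ ≤ 2⁻¹ * (2 * δ + 2 * δ) := by
          apply mul_le_mul_of_nonneg_left (add_le_add (hAdist x) (hBdist x)) (by norm_num)
      _ = 2 * δ := by ring

/-- the iteration -/
noncomputable def iter (φ : G → H →L[ℂ] H) : ℕ → G → H →L[ℂ] H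
  | 0 => avg M φ
  | n + 1 => symStep M (iter φ n)

end Iterate

section Main

variable [Nontrivial H] (M : LeftInvariantMean G)

lemma iter_inv {φ : G → H →L[ℂ] H} {ε : ℝ}
    (hφ : ∀ g, φ g ∈ unitary (H →L[ℂ] H))
    (happ : ∀ x y, ‖φ (x * y) - φ x * φ y‖ ≤ ε)
    (hε0 : 0 < ε) (hε : ε < 1 / 200) : ∀ n : ℕ,
    (∀ x y, ‖iter M φ n (x * y) - iter M φ n x * iter M φ n y‖ ≤ 4 * ε ^ 2 * (1 / 2) ^ n) ∧
    (∀ x, star (iter M φ n x) = iter M φ n x⁻¹) ∧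
    (∀ x, ‖iter M φ n x - φ x‖ ≤ ε + 16 * ε ^ 2 * (1 - (1 / 2) ^ n)) := by
  intro n
  induction n with
  | zero =>
    have hφn : ∀ g, ‖φ g‖ ≤ 1 := fun g => le_of_eq (CStarRing.norm_of_mem_unitary (hφ g))
    have hφi : ∀ g, ‖Ring.inverse (φ g)‖ ≤ 1 := fun g => by
      rw [inverse_of_unitary (hφ g), norm_star]
      exact hφn g
    have hφu : ∀ g, IsUnit (φ g) := fun g => ⟨Unitary.toUnits ⟨φ g, hφ g⟩, rfl⟩
    refine ⟨?_, ?_, ?_⟩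
    · intro x y
      refine le_trans (avg_defect M hφu hφi hφn happ x y) (le_of_eq ?_)
      ring
    · exact fun x => avg_star_unitary M hφ x
    · intro x
      refine le_trans (avg_dist M hφu hφi hφn happ x) (le_of_eq ?_)
      ring
  | succ n ih =>
    obtain ⟨h1, h2, h3⟩ := ih
    have hεsq : ε ^ 2 ≤ ε * (1 / 200) := by nlinarith
    have hpow0 : (0 : ℝ) < (1 / 2 : ℝ) ^ n := by positivity
    have hpow1 : ((1 / 2 : ℝ)) ^ n ≤ 1 := pow_le_one₀ (by norm_num) (by norm_num)
    have hr : ε + 16 * ε ^ 2 * (1 - (1 / 2) ^ n) ≤ 1 / 2 := by nlinarith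
    have pack := step_package M hφ h1 h2 h3 hr
    have hδ : 4 * ε ^ 2 * (1 / 2) ^ n ≤ 1 / 40 := by nlinarith
    have hδ0 : (0 : ℝ) ≤ 4 * ε ^ 2 * (1 / 2) ^ n := by positivity
    refine ⟨?_, pack.2.1, ?_⟩
    · intro x y
      refine le_trans (pack.1 x y) ?_
      have e : ((1 : ℝ) / 2) ^ (n + 1) = (1 / 2) ^ n * (1 / 2) := pow_succ _ _
      rw [e]
      nlinarith
    · intro x
      have hstep := pack.2.2 x
      calc ‖iter M φ (n + 1) x - φ x‖
          ≤ ‖iter M φ (n + 1) x - iter M φ n x‖ + ‖iter M φ n x - φ x‖ := by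
            simpa using norm_add_le (iter M φ (n + 1) x - iter M φ n x) (iter M φ n x - φ x)
        _ ≤ 2 * (4 * ε ^ 2 * (1 / 2) ^ n) + (ε + 16 * ε ^ 2 * (1 - (1 / 2) ^ n)) :=
            add_le_add hstep (h3 x)
        _ = ε + 16 * ε ^ 2 * (1 - (1 / 2) ^ (n + 1)) := by
            rw [pow_succ]
            ring

lemma iter_increment {φ : G → H →L[ℂ] H} {ε : ℝ}
    (hφ : ∀ g, φ g ∈ unitary (H →L[ℂ] H))
    (happ : ∀ x y, ‖φ (x * y) - φ x * φ y‖ ≤ ε)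
    (hε0 : 0 < ε) (hε : ε < 1 / 200) (n : ℕ) (x : G) :
    ‖iter M φ (n + 1) x - iter M φ n x‖ ≤ 8 * ε ^ 2 * (1 / 2) ^ n := by
  obtain ⟨h1, h2, h3⟩ := iter_inv M hφ happ hε0 hε n
  have hεsq : ε ^ 2 ≤ ε * (1 / 200) := by nlinarith
  have hpow1 : ((1 / 2 : ℝ)) ^ n ≤ 1 := pow_le_one₀ (by norm_num) (by norm_num)
  have hpow0 : (0 : ℝ) < (1 / 2 : ℝ) ^ n := by positivity
  have hr : ε + 16 * ε ^ 2 * (1 - (1 / 2) ^ n) ≤ 1 / 2 := by nlinarith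
  have pack := step_package M hφ h1 h2 h3 hr
  refine le_trans (pack.2.2 x) (le_of_eq ?_)
  ring

include M in
lemma main_nontrivial {φ : G → H →L[ℂ] H} {ε : ℝ}
    (hε0 : 0 < ε) (hε : ε < 1 / 200)
    (hunit : ∀ g : G, φ g ∈ unitary (H →L[ℂ] H))
    (happrox : ∀ g h : G, ‖φ (g * h) - φ g * φ h‖ < ε) :
    ∃ π : G →* unitary (H →L[ℂ] H),
      ∀ g : G, ‖φ g - (π g : H →L[ℂ] H)‖ < 2 * ε := by
  have happ : ∀ x y, ‖φ (x * y) - φ x * φ y‖ ≤ ε := fun x y => le_of_lt (happrox x y)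
  set Φ := iter M φ with hΦ
  obtain inv := iter_inv M hunit happ hε0 hε
  have hcauchy : ∀ x : G, ∃ L, Filter.Tendsto (fun n => Φ n x) Filter.atTop (nhds L) := by
    intro x
    apply cauchySeq_tendsto_of_complete
    apply cauchySeq_of_le_geometric (1 / 2) (8 * ε ^ 2) (by norm_num)
    intro n
    rw [dist_eq_norm, norm_sub_rev]
    exact iter_increment M hunit happ hε0 hε n x
  set π₀ : G → H →L[ℂ] H := fun x => (hcauchy x).choose with hπ₀def
  have hπ₀ : ∀ x, Filter.Tendsto (fun n => Φ n x) Filter.atTop (nhds (π₀ x)) :=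
    fun x => (hcauchy x).choose_spec
  have hdistlim : ∀ x, ‖π₀ x - φ x‖ ≤ ε + 16 * ε ^ 2 := by
    intro x
    have h1 : Filter.Tendsto (fun n => ‖Φ n x - φ x‖) Filter.atTop (nhds ‖π₀ x - φ x‖) :=
      ((hπ₀ x).sub tendsto_const_nhds).norm
    apply le_of_tendsto h1
    apply Filter.Eventually.of_forall
    intro n
    refine le_trans ((inv n).2.2 x) ?_
    have hpow0 : (0 : ℝ) ≤ (1 / 2 : ℝ) ^ n := by positivity
    nlinarith
  have hmul : ∀ x y, π₀ (x * y) = π₀ x * π₀ y := by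
    intro x y
    have h1 : Filter.Tendsto (fun n => Φ n (x * y) - Φ n x * Φ n y) Filter.atTop
        (nhds (π₀ (x * y) - π₀ x * π₀ y)) := (hπ₀ _).sub ((hπ₀ x).mul (hπ₀ y))
    have h2 : Filter.Tendsto (fun n => Φ n (x * y) - Φ n x * Φ n y) Filter.atTop
        (nhds 0) := by
      apply squeeze_zero_norm (fun n => (inv n).1 x y)
      have h3 : Filter.Tendsto (fun n : ℕ => (4 * ε ^ 2) * (1 / 2 : ℝ) ^ n) Filter.atTop
          (nhds ((4 * ε ^ 2) * 0)) :=
        (tendsto_pow_atTop_nhds_zero_of_lt_one (by norm_num) (by norm_num)).const_mul _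
      simpa [mul_assoc] using h3
    have := tendsto_nhds_unique h1 h2
    rwa [sub_eq_zero] at this
  have hstar : ∀ x, star (π₀ x) = π₀ x⁻¹ := by
    intro x
    have h1 : Filter.Tendsto (fun n => star (Φ n x)) Filter.atTop (nhds (star (π₀ x))) :=
      (hπ₀ x).star
    have h2 : (fun n => star (Φ n x)) = fun n => Φ n x⁻¹ :=
      funext fun n => (inv n).2.1 x
    rw [h2] at h1
    exact tendsto_nhds_unique h1 (hπ₀ x⁻¹)
  have hφ1 : ‖φ 1 - 1‖ ≤ ε := by
    have h1 := happ 1 1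
    rw [one_mul] at h1
    have h2 : φ 1 - φ 1 * φ 1 = φ 1 * (1 - φ 1) := by
      rw [mul_sub, mul_one]
    rw [h2, norm_unitary_mul (hunit 1), norm_sub_rev] at h1
    exact h1
  have hone : π₀ 1 = 1 := by
    have ha : π₀ 1 * π₀ 1 = π₀ 1 * 1 := by
      rw [mul_one, ← hmul 1 1, one_mul]
    have hnear : ‖1 - π₀ 1‖ < 1 := by
      calc ‖1 - π₀ 1‖ = ‖π₀ 1 - 1‖ := norm_sub_rev _ _
        _ ≤ ‖π₀ 1 - φ 1‖ + ‖φ 1 - 1‖ := by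
            simpa using norm_add_le (π₀ 1 - φ 1) (φ 1 - 1)
        _ ≤ (ε + 16 * ε ^ 2) + ε := add_le_add (hdistlim 1) hφ1
        _ < 1 := by nlinarith
    have hu : IsUnit (π₀ 1) := by
      have := isUnit_one_sub_of_norm_lt_one hnear
      rwa [sub_sub_cancel] at this
    exact hu.mul_left_cancel ha
  have hmem : ∀ x, π₀ x ∈ unitary (H →L[ℂ] H) := by
    intro x
    rw [Unitary.mem_iff]
    constructor
    · rw [hstar x, ← hmul, inv_mul_cancel, hone]
    · rw [hstar x, ← hmul, mul_inv_cancel, hone]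
  refine ⟨{ toFun := fun x => ⟨π₀ x, hmem x⟩
            map_one' := Subtype.ext hone
            map_mul' := fun x y => Subtype.ext (hmul x y) }, ?_⟩
  intro g
  calc ‖φ g - π₀ g‖ = ‖π₀ g - φ g‖ := norm_sub_rev _ _
    _ ≤ ε + 16 * ε ^ 2 := hdistlim g
    _ < 2 * ε := by nlinarith

end Main

end KS

/-- **Kazhdan's stability theorem**: an `ε`-representation (in operator norm) of a countable
discrete amenable group on a Hilbert space is `2ε`-close to a genuine unitary
representation. -/
theorem kazhdan_stability
    {G : Type*} [Group G] [Countable G] (hG : Nonempty (LeftInvariantMean G))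
    {H : Type*} [NormedAddCommGroup H] [InnerProductSpace ℂ H] [CompleteSpace H]
    (ε : ℝ) (hε0 : 0 < ε) (hε : ε < 1 / 200)
    (φ : G → (H →L[ℂ] H))
    (hunit : ∀ g : G, φ g ∈ unitary (H →L[ℂ] H))
    (happrox : ∀ g h : G, ‖φ (g * h) - φ g * φ h‖ < ε) :
    ∃ π : G →* unitary (H →L[ℂ] H),
      ∀ g : G, ‖φ g - (π g : H →L[ℂ] H)‖ < 2 * ε := by

  obtain ⟨M⟩ := hG
  rcases subsingleton_or_nontrivial H with hsub | hnt
  · haveI : Subsingleton (H →L[ℂ] H) :=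
      ⟨fun a b => ContinuousLinearMap.ext fun v => Subsingleton.elim _ _⟩
    refine ⟨1, fun g => ?_⟩
    have h0 : φ g - ((1 : G →* unitary (H →L[ℂ] H)) g : H →L[ℂ] H) = 0 :=
      Subsingleton.elim _ _
    rw [h0, norm_zero]
    linarith
  · exact KS.main_nontrivial M hε0 hε hunit happrox
end

section
/- Let G be a (countable, discrete) group, let m be a left-invariant mean on the bounded complex-valued functions on G, let H be a complex Hilbert space, and let φ : G → B(H) satisfy sup_{x ∈ G} ‖φ(x)‖_op < ∞. Suppose ψ : G → B(H) is a map satisfying ⟨ψ(x)ξ, η⟩ = m(y ↦ ⟨φ(xy)φ(y)*ξ, η⟩) for all x ∈ G and all ξ, η ∈ H. Then ψ is positive definite: for every finite subset F ⊆ G and every family of vectors (ξ_x)_{x ∈ F} in H, the sum ∑_{x,y ∈ F} ⟨ψ(x y⁻¹) ξ_y, ξ_x⟩ is a nonnegative real number. -/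
/-- A left-invariant mean on the space of bounded complex-valued functions on a group `G`:
a linear functional `m` with `m 1 = 1`, `m f` real for real-valued `f`, `m f ≥ 0` for
pointwise nonnegative (real-valued) `f`, and `m (y ↦ f (g y)) = m f` for all `g ∈ G`. -/
structure LeftInvariantMeanC (G : Type*) [Group G] where
  m : (G → ℂ) → ℂ
  add : ∀ f g : G → ℂ, (∃ C, ∀ x, ‖f x‖ ≤ C) → (∃ C, ∀ x, ‖g x‖ ≤ C) →
    m (fun x => f x + g x) = m f + m g
  smul : ∀ (c : ℂ) (f : G → ℂ), (∃ C, ∀ x, ‖f x‖ ≤ C) →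
    m (fun x => c * f x) = c * m f
  one : m (fun _ => 1) = 1
  real : ∀ f : G → ℂ, (∃ C, ∀ x, ‖f x‖ ≤ C) → (∀ x, (f x).im = 0) → (m f).im = 0
  pos : ∀ f : G → ℂ, (∃ C, ∀ x, ‖f x‖ ≤ C) → (∀ x, (f x).im = 0 ∧ 0 ≤ (f x).re) →
    0 ≤ (m f).re
  left_inv : ∀ (g : G) (f : G → ℂ), (∃ C, ∀ x, ‖f x‖ ≤ C) →
    m (fun x => f (g * x)) = m f

private lemma LIM_zero {G : Type*} [Group G] (M : LeftInvariantMeanC G) :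
    M.m (fun _ => 0) = 0 := by
  have := M.smul 0 (fun _ => 1) ⟨1, fun x => by simp⟩
  simpa using this

private lemma bdd_sum {G ι : Type*} (s : Finset ι) (f : ι → G → ℂ)
    (hf : ∀ i ∈ s, ∃ C, ∀ x, ‖f i x‖ ≤ C) :
    ∃ C, ∀ x, ‖∑ i ∈ s, f i x‖ ≤ C := by
  classical
  induction s using Finset.induction with
  | empty => exact ⟨0, fun x => by simp⟩
  | @insert a s ha ih =>
    obtain ⟨C1, hC1⟩ := hf a (Finset.mem_insert_self a s)
    obtain ⟨C2, hC2⟩ := ih (fun i hi => hf i (Finset.mem_insert_of_mem hi))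
    exact ⟨C1 + C2, fun x => by
      rw [Finset.sum_insert ha]
      exact (norm_add_le _ _).trans (add_le_add (hC1 x) (hC2 x))⟩

private lemma LIM_sum {G ι : Type*} [Group G] (M : LeftInvariantMeanC G)
    (s : Finset ι) (f : ι → G → ℂ) (hf : ∀ i ∈ s, ∃ C, ∀ x, ‖f i x‖ ≤ C) :
    M.m (fun z => ∑ i ∈ s, f i z) = ∑ i ∈ s, M.m (f i) := by
  classical
  induction s using Finset.induction with
  | empty => simpa using LIM_zero M
  | @insert a s ha ih =>
    have h1 := hf a (Finset.mem_insert_self a s)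
    have h2 : ∀ i ∈ s, ∃ C, ∀ x, ‖f i x‖ ≤ C :=
      fun i hi => hf i (Finset.mem_insert_of_mem hi)
    have hs := bdd_sum s f h2
    have : M.m (fun z => f a z + ∑ i ∈ s, f i z) = M.m (f a) + M.m (fun z => ∑ i ∈ s, f i z) :=
      M.add _ _ h1 hs
    simp only [Finset.sum_insert ha]
    rw [this, ih h2]

open scoped InnerProductSpace in
/-- If `φ : G → B(H)` is uniformly bounded, then the map
`ψ(x) = 𝔼_y φ(xy) φ(y)*` (defined weakly via a left-invariant mean) is positive definite. -/
theorem mean_convolution_positive_definite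
    {G : Type*} [Group G] [Countable G] (M : LeftInvariantMeanC G)
    {H : Type*} [NormedAddCommGroup H] [InnerProductSpace ℂ H] [CompleteSpace H]
    (φ : G → (H →L[ℂ] H)) (hbdd : ∃ C, ∀ x : G, ‖φ x‖ ≤ C)
    (ψ : G → (H →L[ℂ] H))
    (hψ : ∀ (x : G) (ξ η : H),
      ⟪η, ψ x ξ⟫_ℂ = M.m (fun y => ⟪η, φ (x * y) (ContinuousLinearMap.adjoint (φ y) ξ)⟫_ℂ)) :
    ∀ (F : Finset G) (ξ : G → H),
      (∑ x ∈ F, ∑ y ∈ F, ⟪ξ x, ψ (x * y⁻¹) (ξ y)⟫_ℂ).im = 0 ∧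
      0 ≤ (∑ x ∈ F, ∑ y ∈ F, ⟪ξ x, ψ (x * y⁻¹) (ξ y)⟫_ℂ).re := by
  classical
  intro F ξ
  obtain ⟨C0, hC0⟩ := hbdd
  set C : ℝ := max C0 0 with hCdef
  have hC : ∀ x : G, ‖φ x‖ ≤ C := fun x => (hC0 x).trans (le_max_left _ _)
  have hCnn : 0 ≤ C := le_max_right _ _
  -- the vector family
  set A : G → G → H := fun x z => ContinuousLinearMap.adjoint (φ (x * z)) (ξ x) with hA
  have hAnorm : ∀ x z, ‖A x z‖ ≤ C * ‖ξ x‖ := by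
    intro x z
    calc ‖A x z‖ ≤ ‖ContinuousLinearMap.adjoint (φ (x * z))‖ * ‖ξ x‖ :=
          ContinuousLinearMap.le_opNorm _ _
      _ = ‖φ (x * z)‖ * ‖ξ x‖ := by rw [LinearIsometryEquiv.norm_map]
      _ ≤ C * ‖ξ x‖ := mul_le_mul_of_nonneg_right (hC _) (norm_nonneg _)
  have hinnerbdd : ∀ x y : G, ∃ C', ∀ z, ‖⟪A x z, A y z⟫_ℂ‖ ≤ C' := by
    intro x y
    refine ⟨(C * ‖ξ x‖) * (C * ‖ξ y‖), fun z => ?_⟩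
    calc ‖⟪A x z, A y z⟫_ℂ‖ ≤ ‖A x z‖ * ‖A y z‖ := norm_inner_le_norm _ _
      _ ≤ (C * ‖ξ x‖) * (C * ‖ξ y‖) :=
          mul_le_mul (hAnorm x z) (hAnorm y z) (norm_nonneg _)
            (mul_nonneg hCnn (norm_nonneg _))
  -- Step 1: rewrite each term using left invariance
  have key : ∀ x y : G, ⟪ξ x, ψ (x * y⁻¹) (ξ y)⟫_ℂ = M.m (fun z => ⟪A x z, A y z⟫_ℂ) := by
    intro x y
    rw [hψ]
    have hb : ∃ C', ∀ z : G,
        ‖⟪ξ x, φ (x * y⁻¹ * z) (ContinuousLinearMap.adjoint (φ z) (ξ y))⟫_ℂ‖ ≤ C' := by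
      refine ⟨‖ξ x‖ * (C * (C * ‖ξ y‖)), fun z => ?_⟩
      calc ‖⟪ξ x, φ (x * y⁻¹ * z) (ContinuousLinearMap.adjoint (φ z) (ξ y))⟫_ℂ‖
          ≤ ‖ξ x‖ * ‖φ (x * y⁻¹ * z) (ContinuousLinearMap.adjoint (φ z) (ξ y))‖ :=
            norm_inner_le_norm _ _
        _ ≤ ‖ξ x‖ * (C * (C * ‖ξ y‖)) := by
            refine mul_le_mul_of_nonneg_left ?_ (norm_nonneg _)
            calc ‖φ (x * y⁻¹ * z) (ContinuousLinearMap.adjoint (φ z) (ξ y))‖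
                ≤ ‖φ (x * y⁻¹ * z)‖ * ‖ContinuousLinearMap.adjoint (φ z) (ξ y)‖ :=
                  ContinuousLinearMap.le_opNorm _ _
              _ ≤ C * (C * ‖ξ y‖) := by
                  refine mul_le_mul (hC _) ?_ (norm_nonneg _) hCnn
                  calc ‖ContinuousLinearMap.adjoint (φ z) (ξ y)‖
                      ≤ ‖ContinuousLinearMap.adjoint (φ z)‖ * ‖ξ y‖ :=
                        ContinuousLinearMap.le_opNorm _ _
                    _ = ‖φ z‖ * ‖ξ y‖ := by rw [LinearIsometryEquiv.norm_map]
                    _ ≤ C * ‖ξ y‖ := mul_le_mul_of_nonneg_right (hC _) (norm_nonneg _)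
    rw [← M.left_inv y _ hb]
    congr 1
    funext z
    have hxz : x * y⁻¹ * (y * z) = x * z := by group
    rw [hxz, hA]
    exact (ContinuousLinearMap.adjoint_inner_left _ _ _).symm
  -- Step 2: pull the sum inside the mean
  have hsum : (∑ x ∈ F, ∑ y ∈ F, ⟪ξ x, ψ (x * y⁻¹) (ξ y)⟫_ℂ)
      = M.m (fun z => ∑ x ∈ F, ∑ y ∈ F, ⟪A x z, A y z⟫_ℂ) := by
    have hfun : (fun z => ∑ x ∈ F, ∑ y ∈ F, ⟪A x z, A y z⟫_ℂ)
        = fun z => ∑ p ∈ F ×ˢ F, ⟪A p.1 z, A p.2 z⟫_ℂ := by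
      funext z; rw [← Finset.sum_product']
    rw [← Finset.sum_product', hfun]
    rw [LIM_sum M (F ×ˢ F) (fun p z => ⟪A p.1 z, A p.2 z⟫_ℂ)
      (fun p _ => hinnerbdd p.1 p.2)]
    exact Finset.sum_congr rfl fun p _ => key p.1 p.2
  -- Step 3: the integrand is a pointwise squared norm
  have hsq : ∀ z : G, (∑ x ∈ F, ∑ y ∈ F, ⟪A x z, A y z⟫_ℂ)
      = ⟪∑ x ∈ F, A x z, ∑ y ∈ F, A y z⟫_ℂ := by
    intro z
    rw [sum_inner]
    exact Finset.sum_congr rfl fun x _ => (inner_sum _ _ _).symm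
  have hbddQ : ∃ C', ∀ z : G, ‖∑ x ∈ F, ∑ y ∈ F, ⟪A x z, A y z⟫_ℂ‖ ≤ C' := by
    refine ⟨(∑ x ∈ F, C * ‖ξ x‖) * (∑ x ∈ F, C * ‖ξ x‖), fun z => ?_⟩
    rw [hsq z]
    have hS : ‖∑ x ∈ F, A x z‖ ≤ ∑ x ∈ F, C * ‖ξ x‖ :=
      (norm_sum_le _ _).trans (Finset.sum_le_sum fun x _ => hAnorm x z)
    calc ‖⟪∑ x ∈ F, A x z, ∑ y ∈ F, A y z⟫_ℂ‖ ≤ ‖∑ x ∈ F, A x z‖ * ‖∑ y ∈ F, A y z‖ :=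
          norm_inner_le_norm _ _
      _ ≤ (∑ x ∈ F, C * ‖ξ x‖) * (∑ x ∈ F, C * ‖ξ x‖) :=
          mul_le_mul hS hS (norm_nonneg _)
            ((norm_nonneg _).trans hS)
  have hptwise : ∀ z : G, (∑ x ∈ F, ∑ y ∈ F, ⟪A x z, A y z⟫_ℂ).im = 0 ∧
      0 ≤ (∑ x ∈ F, ∑ y ∈ F, ⟪A x z, A y z⟫_ℂ).re := by
    intro z
    rw [hsq z]
    constructor
    · rw [← RCLike.im_to_complex]
      exact inner_self_im _
    · rw [← RCLike.re_to_complex]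
      exact inner_self_nonneg
  rw [hsum]
  exact ⟨M.real _ hbddQ (fun z => (hptwise z).1), M.pos _ hbddQ hptwise⟩
end

section
/- Let G be a group, let H be a complex Hilbert space, and let φ : G → B(H) be a positive definite map, i.e. for every finite subset F ⊆ G and every family of vectors (ξ_x)_{x ∈ F} in H, the sum ∑_{x,y ∈ F} ⟨φ(x y⁻¹) ξ_y, ξ_x⟩ is a nonnegative real number. Then there exist a complex Hilbert space K, a unitary representation π : G → U(K) (a group homomorphism into the unitary group of B(K)), and a bounded linear map U : H → K such that φ(g) = U* π(g) U for all g ∈ G, and ‖U‖_op² = ‖φ(e)‖_op, where e is the identity element of G. -/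
noncomputable section
open scoped InnerProductSpace
open Finsupp

namespace GNSAux

variable {G : Type v} [Group G]
variable {H : Type u} [NormedAddCommGroup H] [InnerProductSpace ℂ H]

/-- The sesquilinear form on `G →₀ H` induced by `φ`. -/
def B (φ : G → (H →L[ℂ] H)) (ξ η : G →₀ H) : ℂ :=
  ξ.sum fun x u => η.sum fun y v => ⟪u, φ (x * y⁻¹) v⟫_ℂ

variable (φ : G → (H →L[ℂ] H))

lemma B_zero_left (η : G →₀ H) : B φ 0 η = 0 := by simp [B]

lemma B_zero_right (ξ : G →₀ H) : B φ ξ 0 = 0 := by simp [B]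

lemma B_single_single (x y : G) (u v : H) :
    B φ (single x u) (single y v) = ⟪u, φ (x * y⁻¹) v⟫_ℂ := by
  rw [B, Finsupp.sum_single_index, Finsupp.sum_single_index]
  · simp
  · simp

lemma B_add_left (ξ₁ ξ₂ η : G →₀ H) :
    B φ (ξ₁ + ξ₂) η = B φ ξ₁ η + B φ ξ₂ η := by
  rw [B, Finsupp.sum_add_index']
  · rfl
  · intro x; simp
  · intro x u₁ u₂
    rw [← Finsupp.sum_add]
    congr 1; ext y v; rw [inner_add_left]

lemma B_add_right (ξ η₁ η₂ : G →₀ H) :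
    B φ ξ (η₁ + η₂) = B φ ξ η₁ + B φ ξ η₂ := by
  rw [B]
  calc (ξ.sum fun x u => (η₁ + η₂).sum fun y v => ⟪u, φ (x * y⁻¹) v⟫_ℂ)
      = ξ.sum fun x u => (η₁.sum fun y v => ⟪u, φ (x * y⁻¹) v⟫_ℂ)
          + η₂.sum fun y v => ⟪u, φ (x * y⁻¹) v⟫_ℂ :=
        Finsupp.sum_congr fun x _ => Finsupp.sum_add_index' (fun y => by simp)
          (fun y v₁ v₂ => by rw [map_add, inner_add_right])
    _ = B φ ξ η₁ + B φ ξ η₂ := Finsupp.sum_add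

lemma B_smul_left (c : ℂ) (ξ η : G →₀ H) :
    B φ (c • ξ) η = (starRingEnd ℂ) c * B φ ξ η := by
  rw [B, Finsupp.sum_smul_index' (fun x => by simp)]
  calc (ξ.sum fun x u => η.sum fun y v => ⟪c • u, φ (x * y⁻¹) v⟫_ℂ)
      = ξ.sum fun x u => η.sum fun y v =>
          (starRingEnd ℂ) c * ⟪u, φ (x * y⁻¹) v⟫_ℂ :=
        Finsupp.sum_congr fun x _ => Finsupp.sum_congr fun y _ => inner_smul_left _ _ _
    _ = ξ.sum fun x u => (starRingEnd ℂ) c * η.sum fun y v => ⟪u, φ (x * y⁻¹) v⟫_ℂ :=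
        Finsupp.sum_congr fun x _ => by simp [Finsupp.sum, Finset.mul_sum]
    _ = (starRingEnd ℂ) c * B φ ξ η := by rw [B]; simp [Finsupp.sum, Finset.mul_sum]

lemma B_smul_right (c : ℂ) (ξ η : G →₀ H) :
    B φ ξ (c • η) = c * B φ ξ η := by
  rw [B]
  calc (ξ.sum fun x u => (c • η).sum fun y v => ⟪u, φ (x * y⁻¹) v⟫_ℂ)
      = ξ.sum fun x u => η.sum fun y v => c * ⟪u, φ (x * y⁻¹) v⟫_ℂ :=
        Finsupp.sum_congr fun x _ => by
          rw [Finsupp.sum_smul_index' (fun y => by simp)]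
          exact Finsupp.sum_congr fun y _ => by rw [map_smul, inner_smul_right]
    _ = ξ.sum fun x u => c * η.sum fun y v => ⟪u, φ (x * y⁻¹) v⟫_ℂ :=
        Finsupp.sum_congr fun x _ => by simp [Finsupp.sum, Finset.mul_sum]
    _ = c * B φ ξ η := by rw [B]; simp [Finsupp.sum, Finset.mul_sum]

lemma B_self (ξ : G →₀ H) :
    B φ ξ ξ = ∑ x ∈ ξ.support, ∑ y ∈ ξ.support, ⟪ξ x, φ (x * y⁻¹) (ξ y)⟫_ℂ := rfl


section T

/-- Right translation on `G →₀ H`. -/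
def T (g : G) : (G →₀ H) →ₗ[ℂ] (G →₀ H) := Finsupp.lmapDomain H ℂ (fun x => x * g⁻¹)

lemma T_single (g x : G) (u : H) : T (H := H) g (single x u) = single (x * g⁻¹) u :=
  Finsupp.mapDomain_single

lemma T_T (g h : G) (ξ : G →₀ H) : T g (T h ξ) = T (g * h) ξ := by
  show Finsupp.mapDomain _ (Finsupp.mapDomain _ ξ) = Finsupp.mapDomain _ ξ
  rw [← Finsupp.mapDomain_comp]
  congr 1
  funext x
  show x * h⁻¹ * g⁻¹ = x * (g * h)⁻¹
  group

lemma T_one (ξ : G →₀ H) : T 1 ξ = ξ := by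
  show Finsupp.mapDomain _ ξ = ξ
  have : (fun x : G => x * (1 : G)⁻¹) = id := by funext x; simp
  rw [this, Finsupp.mapDomain_id]

lemma B_T (g : G) (ξ η : G →₀ H) : B φ (T g ξ) (T g η) = B φ ξ η := by
  induction ξ using Finsupp.induction_linear with
  | zero => simp [B_zero_left, map_zero]
  | add f f' hf hf' => simp only [map_add, B_add_left, hf, hf']
  | single x u =>
    induction η using Finsupp.induction_linear with
    | zero => simp [B_zero_right, map_zero]
    | add f f' hf hf' => simp only [map_add, B_add_right, hf, hf']
    | single y v =>
      rw [T_single, T_single, B_single_single, B_single_single]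
      have : (x * g⁻¹) * (y * g⁻¹)⁻¹ = x * y⁻¹ := by group
      rw [this]

end T

section hpd

variable (hpd : ∀ (F : Finset G) (ξ : G → H),
      (∑ x ∈ F, ∑ y ∈ F, ⟪ξ x, φ (x * y⁻¹) (ξ y)⟫_ℂ).im = 0 ∧
      0 ≤ (∑ x ∈ F, ∑ y ∈ F, ⟪ξ x, φ (x * y⁻¹) (ξ y)⟫_ℂ).re)

include hpd

lemma B_self_im (ξ : G →₀ H) : (B φ ξ ξ).im = 0 := by
  rw [B_self]; exact (hpd ξ.support ξ).1

lemma B_self_re_nonneg (ξ : G →₀ H) : 0 ≤ (B φ ξ ξ).re := by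
  rw [B_self]; exact (hpd ξ.support ξ).2

lemma B_conj_symm (ξ η : G →₀ H) : (starRingEnd ℂ) (B φ η ξ) = B φ ξ η := by
  have hξ := B_self_im φ hpd ξ
  have hη := B_self_im φ hpd η
  have h1 := B_self_im φ hpd (ξ + η)
  have h2 := B_self_im φ hpd (ξ + Complex.I • η)
  simp only [B_add_left, B_add_right, B_smul_left, B_smul_right, Complex.conj_I,
    Complex.add_im, Complex.add_re, Complex.mul_im, Complex.neg_re, Complex.neg_im,
    Complex.I_re, Complex.I_im, Complex.mul_re, neg_mul, one_mul, zero_mul, mul_zero,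
    mul_one, zero_add, add_zero, zero_sub, sub_zero] at h1 h2
  rw [Complex.ext_iff]
  constructor
  · simp only [Complex.conj_re]; linarith
  · simp only [Complex.conj_im]; linarith

/-- The pre-inner-product structure on `G →₀ H`. -/
def preCore : PreInnerProductSpace.Core ℂ (G →₀ H) where
  inner := B φ
  conj_inner_symm x y := B_conj_symm φ hpd x y
  re_inner_nonneg x := B_self_re_nonneg φ hpd x
  add_left := B_add_left φ
  smul_left x y r := B_smul_left φ r x y

end hpd

end GNSAux


open UniformSpace GNSAux in

open scoped InnerProductSpace in
/-- **Stinespring/GNS dilation** for positive definite operator-valued maps on groups: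
a positive definite map `φ : G → B(H)` dilates to a unitary representation
`π : G → U(K)` on a Hilbert space `K`, i.e. `φ(g) = U* π(g) U` for a bounded operator
`U : H → K` with `‖U‖² = ‖φ(e)‖`. -/
theorem stinespring_dilation_of_positive_definite
    {G : Type v} [Group G]
    {H : Type u} [NormedAddCommGroup H] [InnerProductSpace ℂ H] [CompleteSpace H]
    (φ : G → (H →L[ℂ] H))
    (hpd : ∀ (F : Finset G) (ξ : G → H),
      (∑ x ∈ F, ∑ y ∈ F, ⟪ξ x, φ (x * y⁻¹) (ξ y)⟫_ℂ).im = 0 ∧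
      0 ≤ (∑ x ∈ F, ∑ y ∈ F, ⟪ξ x, φ (x * y⁻¹) (ξ y)⟫_ℂ).re) :
    ∃ (K : Type (max u v)) (_ : NormedAddCommGroup K) (_ : InnerProductSpace ℂ K)
      (_ : CompleteSpace K) (π : G →* unitary (K →L[ℂ] K)) (U : H →L[ℂ] K),
      (∀ g : G, φ g = ContinuousLinearMap.adjoint U ∘L ((π g : K →L[ℂ] K) ∘L U)) ∧
      ‖U‖ ^ 2 = ‖φ 1‖ := by
  classical
  letI c : PreInnerProductSpace.Core ℂ (G →₀ H) := preCore φ hpd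
  letI : SeminormedAddCommGroup (G →₀ H) :=
    @InnerProductSpace.Core.toSeminormedAddCommGroup ℂ _ _ _ _ c
  letI : NormedSpace ℂ (G →₀ H) := @InnerProductSpace.Core.toNormedSpace ℂ _ _ _ _ c
  letI : InnerProductSpace ℂ (G →₀ H) :=
    { toInner := c.toInner
      norm_sq_eq_re_inner := fun x => Real.sq_sqrt (c.re_inner_nonneg x)
      conj_inner_symm := c.conj_inner_symm
      add_left := c.add_left
      smul_left := c.smul_left }
  have hnorm : ∀ ξ : G →₀ H, ‖ξ‖ = Real.sqrt (B φ ξ ξ).re := fun _ => rfl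
  have hinnerV : ∀ ξ η : G →₀ H, ⟪ξ, η⟫_ℂ = B φ ξ η := fun _ _ => rfl
  set K := Completion (G →₀ H) with hK
  -- the translation operators, extended to the completion
  have hTnorm : ∀ (g : G) (ξ : G →₀ H), ‖T (H := H) g ξ‖ = ‖ξ‖ := by
    intro g ξ; rw [hnorm, hnorm, B_T]
  have hTu : ∀ g : G, UniformContinuous (T (H := H) g) := fun g =>
    (AddMonoidHomClass.isometry_of_norm _ (hTnorm g)).uniformContinuous
  set mapK : G → K → K := fun g => Completion.map (T (H := H) g) with hmapK
  have hmc : ∀ (g : G) (ξ : G →₀ H), mapK g ξ = ((T g ξ : G →₀ H) : K) := fun g ξ =>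
    Completion.map_coe (hTu g) ξ
  have hcomp : ∀ (g h : G) (a : K), mapK g (mapK h a) = mapK (g * h) a := by
    intro g h a
    have h2 : ⇑(T (H := H) g) ∘ ⇑(T (H := H) h) = ⇑(T (H := H) (g * h)) :=
      funext fun ξ => T_T g h ξ
    have h1 : (Completion.map (T (H := H) g)) ∘ (Completion.map (T (H := H) h)) =
        Completion.map (T (H := H) (g * h)) :=
      (Completion.map_comp (hTu g) (hTu h)).trans (congrArg Completion.map h2)
    exact congrFun h1 a
  have hone : ∀ a : K, mapK 1 a = a := by
    intro a
    have h1 : ⇑(T (G := G) (H := H) 1) = id := funext fun ξ => T_one ξ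
    simp only [hmapK, h1, Completion.map_id, id]
  have hmapKc : ∀ g : G, Continuous (mapK g) := fun g => Completion.continuous_map
  have hadd : ∀ (g : G) (a b : K), mapK g (a + b) = mapK g a + mapK g b := by
    intro g a b
    refine Completion.induction_on₂ a b ?_ ?_
    · exact isClosed_eq ((hmapKc g).comp continuous_add)
        (((hmapKc g).comp continuous_fst).add ((hmapKc g).comp continuous_snd))
    · intro x y
      rw [← Completion.coe_add, hmc, hmc, hmc, map_add, Completion.coe_add]
  have hsmul : ∀ (g : G) (r : ℂ) (a : K), mapK g (r • a) = r • mapK g a := by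
    intro g r a
    refine Completion.induction_on a ?_ ?_
    · exact isClosed_eq ((hmapKc g).comp (continuous_const_smul r))
        ((continuous_const_smul r).comp (hmapKc g))
    · intro x
      rw [← Completion.coe_smul, hmc, hmc, map_smul, Completion.coe_smul]
  have hnormK : ∀ (g : G) (a : K), ‖mapK g a‖ = ‖a‖ := by
    intro g a
    refine Completion.induction_on a ?_ ?_
    · exact isClosed_eq (continuous_norm.comp (hmapKc g)) continuous_norm
    · intro x
      rw [hmc, Completion.norm_coe, Completion.norm_coe, hTnorm]
  set W : G → (K ≃ₗᵢ[ℂ] K) := fun g =>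
    { toLinearEquiv :=
      { toFun := mapK g
        map_add' := hadd g
        map_smul' := hsmul g
        invFun := mapK g⁻¹
        left_inv := fun a => by
          show mapK g⁻¹ (mapK g a) = a
          rw [hcomp, inv_mul_cancel, hone]
        right_inv := fun a => by
          show mapK g (mapK g⁻¹ a) = a
          rw [hcomp, mul_inv_cancel, hone] }
      norm_map' := hnormK g } with hW
  set A : G → (K →L[ℂ] K) := fun g => (W g).toLinearIsometry.toContinuousLinearMap with hA
  have hAapp : ∀ (g : G) (a : K), A g a = mapK g a := fun g a => rfl
  have hadj : ∀ g : G, ContinuousLinearMap.adjoint (A g) = A g⁻¹ := by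
    intro g
    symm
    rw [ContinuousLinearMap.eq_adjoint_iff]
    intro x y
    have h1 : ⟪(W g) ((W g⁻¹) x), (W g) y⟫_ℂ = ⟪(W g⁻¹) x, y⟫_ℂ :=
      (W g).inner_map_map _ _
    have h2 : (W g) ((W g⁻¹) x) = x := by
      show mapK g (mapK g⁻¹ x) = x
      rw [hcomp, mul_inv_cancel, hone]
    rw [h2] at h1
    exact h1.symm
  have hmem : ∀ g : G, A g ∈ unitary (K →L[ℂ] K) := by
    intro g
    rw [Unitary.mem_iff, ContinuousLinearMap.star_eq_adjoint, hadj]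
    constructor
    · ext a
      show A g⁻¹ (A g a) = a
      rw [hAapp, hAapp, hcomp, inv_mul_cancel, hone]
    · ext a
      show A g (A g⁻¹ a) = a
      rw [hAapp, hAapp, hcomp, mul_inv_cancel, hone]
  set π : G →* unitary (K →L[ℂ] K) :=
    { toFun := fun g => ⟨A g, hmem g⟩
      map_one' := by
        apply Subtype.ext
        ext a
        show A 1 a = a
        rw [hAapp, hone]
      map_mul' := fun g h => by
        apply Subtype.ext
        ext a
        show A (g * h) a = A g (A h a)
        rw [hAapp, hAapp, hAapp, hcomp] } with hπ
  -- the embedding U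
  have hSb : ∀ ξ : H, ‖(Finsupp.lsingle (R := ℂ) (1 : G) : H →ₗ[ℂ] (G →₀ H)) ξ‖ ≤
      Real.sqrt ‖φ 1‖ * ‖ξ‖ := by
    intro ξ
    show ‖(single (1 : G) ξ : G →₀ H)‖ ≤ _
    rw [hnorm]
    have h1 : B φ (single (1 : G) ξ) (single 1 ξ) = ⟪ξ, φ 1 ξ⟫_ℂ := by
      rw [B_single_single]; simp
    rw [h1]
    have h2 : (⟪ξ, φ 1 ξ⟫_ℂ).re ≤ ‖φ 1‖ * (‖ξ‖ * ‖ξ‖) := by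
      calc (⟪ξ, φ 1 ξ⟫_ℂ).re ≤ ‖⟪ξ, φ 1 ξ⟫_ℂ‖ := Complex.re_le_norm _
        _ ≤ ‖ξ‖ * ‖φ 1 ξ‖ := norm_inner_le_norm _ _
        _ ≤ ‖ξ‖ * (‖φ 1‖ * ‖ξ‖) := by
            gcongr
            exact (φ 1).le_opNorm ξ
        _ = ‖φ 1‖ * (‖ξ‖ * ‖ξ‖) := by ring
    calc Real.sqrt (⟪ξ, φ 1 ξ⟫_ℂ).re ≤ Real.sqrt (‖φ 1‖ * (‖ξ‖ * ‖ξ‖)) :=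
          Real.sqrt_le_sqrt h2
      _ = Real.sqrt ‖φ 1‖ * ‖ξ‖ := by
          rw [Real.sqrt_mul (norm_nonneg _), Real.sqrt_mul_self (norm_nonneg _)]
  set U0 : H →L[ℂ] (G →₀ H) :=
    LinearMap.mkContinuous (Finsupp.lsingle (R := ℂ) (1 : G)) (Real.sqrt ‖φ 1‖) hSb with hU0
  set U : H →L[ℂ] K := (Completion.toComplL (E := G →₀ H)).comp U0 with hU
  have hUapp : ∀ ξ : H, U ξ = ((single (1 : G) ξ : G →₀ H) : K) := fun ξ => rfl
  have hdil : ∀ g : G, φ g = ContinuousLinearMap.adjoint U ∘L ((π g : K →L[ℂ] K) ∘L U) := by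
    intro g
    ext η
    apply ext_inner_left ℂ
    intro ξ
    rw [ContinuousLinearMap.comp_apply, ContinuousLinearMap.comp_apply,
      ContinuousLinearMap.adjoint_inner_right]
    have hπg : ((π g : K →L[ℂ] K) : K → K) = mapK g := rfl
    rw [hUapp, hUapp, hπg, hmc, T_single, one_mul]
    rw [Completion.inner_coe, hinnerV, B_single_single, one_mul, inv_inv]
  refine ⟨K, inferInstance, inferInstance, inferInstance, π, U, hdil, ?_⟩
  have hπ1 : ((π 1 : unitary (K →L[ℂ] K)) : K →L[ℂ] K) = 1 := by
    rw [map_one]; rfl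
  have h1 : φ 1 = ContinuousLinearMap.adjoint U ∘L U := by
    rw [hdil 1, hπ1, ContinuousLinearMap.one_def, ContinuousLinearMap.id_comp]
  rw [h1, ContinuousLinearMap.norm_adjoint_comp_self, sq]
end
end

section
/- Let H be a complex Hilbert space and let N : B(H) → ℝ be a unitarily invariant seminorm. Then for every T ∈ B(H) one has N(T*T) = N(TT*). -/
open Filter Topology

set_option maxHeartbeats 2000000

section CStarAux

variable {A : Type*} [CStarAlgebra A]

lemma auxNormOneLe : ‖(1 : A)‖ ≤ 1 := by
  have h : ‖star (1 : A) * 1‖ = ‖(1 : A)‖ * ‖(1 : A)‖ := CStarRing.norm_star_mul_self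
  simp only [star_one, mul_one] at h
  nlinarith [norm_nonneg (1 : A)]

lemma auxIsUnitOfSq {a : A} (h : IsUnit (a * a)) : IsUnit a := by
  obtain ⟨u, hu⟩ := h
  have hc : Commute a (↑u⁻¹ : A) := by
    have h1 : Commute a (↑u : A) := by
      rw [hu]; exact (Commute.refl a).mul_right (Commute.refl a)
    exact h1.units_inv_right
  refine ⟨⟨a, a * ↑u⁻¹, ?_, ?_⟩, rfl⟩
  · calc a * (a * ↑u⁻¹) = (a * a) * ↑u⁻¹ := by rw [mul_assoc]
    _ = ↑u * ↑u⁻¹ := by rw [hu]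
    _ = 1 := u.mul_inv
  · calc (a * ↑u⁻¹) * a = a * (↑u⁻¹ * a) := by rw [mul_assoc]
    _ = a * (a * ↑u⁻¹) := by rw [hc.eq]
    _ = (a * a) * ↑u⁻¹ := by rw [mul_assoc]
    _ = ↑u * ↑u⁻¹ := by rw [hu]
    _ = 1 := u.mul_inv

lemma auxMemUnitary {u : A} (h1 : star u * u = 1) (h2 : IsUnit u) : u ∈ unitary A := by
  rw [Unitary.mem_iff]
  refine ⟨h1, ?_⟩
  obtain ⟨v, rfl⟩ := h2
  have hs : star (v : A) = ↑v⁻¹ := by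
    calc star (v : A) = star (v : A) * ((v : A) * ↑v⁻¹) := by rw [v.mul_inv, mul_one]
    _ = (star (v : A) * (v : A)) * ↑v⁻¹ := by rw [mul_assoc]
    _ = ↑v⁻¹ := by rw [h1, one_mul]
  rw [hs, v.mul_inv]

/-- A selfadjoint contraction is the mean of two unitaries. -/
lemma auxSaMean {h : A} (hsa : IsSelfAdjoint h) (hn : ‖h‖ ≤ 1) :
    ∃ u ∈ unitary A, ∃ v ∈ unitary A, u + v = h + h := by
  have hspec : ∀ x ∈ spectrum ℝ h, 0 ≤ 1 - x ^ 2 := by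
    intro x hx
    have h1 := spectrum.norm_le_norm_mul_of_mem hx
    have h2 : ‖h‖ * ‖(1 : A)‖ ≤ 1 := by
      nlinarith [auxNormOneLe (A := A), norm_nonneg h, norm_nonneg (1 : A)]
    have h3 : |x| ≤ 1 := by
      rw [Real.norm_eq_abs] at h1; linarith
    nlinarith [sq_abs x, abs_nonneg x]
  set f : ℝ → ℝ := fun x => Real.sqrt (1 - x ^ 2) with hf
  have hfc : ContinuousOn f (spectrum ℝ h) :=
    (Real.continuous_sqrt.comp (by continuity)).continuousOn
  set k : A := cfc f h with hk
  have hksa : IsSelfAdjoint k := cfc_predicate f h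
  have hcomm : h * k = k * h := by
    have h1 : h * k = cfc (fun x : ℝ => x * f x) h := by
      rw [cfc_mul (fun x : ℝ => x) f h (continuousOn_id' _) hfc, cfc_id' ℝ h, hk]
    have h2 : k * h = cfc (fun x : ℝ => f x * x) h := by
      rw [cfc_mul f (fun x : ℝ => x) h hfc (continuousOn_id' _), cfc_id' ℝ h, hk]
    rw [h1, h2]
    exact cfc_congr fun x _ => mul_comm x (f x)
  have hkk : k * k = cfc (fun x : ℝ => 1 - x ^ 2) h := by
    rw [hk, ← cfc_mul f f h hfc hfc]
    exact cfc_congr fun x hx => Real.mul_self_sqrt (hspec x hx)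
  have hhh : h * h = cfc (fun x : ℝ => x ^ 2) h := by
    conv_lhs => rw [← cfc_id' ℝ h]
    rw [← cfc_mul (fun x : ℝ => x) (fun x : ℝ => x) h (continuousOn_id' _) (continuousOn_id' _)]
    exact cfc_congr fun x _ => (sq x).symm
  have hsum : h * h + k * k = 1 := by
    have hc1 : ContinuousOn (fun x : ℝ => x ^ 2) (spectrum ℝ h) := by fun_prop
    have hc2 : ContinuousOn (fun x : ℝ => 1 - x ^ 2) (spectrum ℝ h) := by fun_prop
    rw [hhh, hkk, ← cfc_add h (fun x : ℝ => x ^ 2) (fun x : ℝ => 1 - x ^ 2) hc1 hc2]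
    calc cfc (fun x : ℝ => x ^ 2 + (1 - x ^ 2)) h = cfc (fun _ : ℝ => (1 : ℝ)) h :=
          cfc_congr fun x _ => by ring
    _ = 1 := cfc_const_one ℝ h
  have mul_eq : ∀ c : ℂ, (h + c • k) * (h - c • k) = h * h - (c * c) • (k * k) := by
    intro c
    simp only [mul_sub, add_mul, mul_smul_comm, smul_mul_assoc, smul_add, smul_smul]
    rw [hcomm]
    abel
  set u : A := h + Complex.I • k with hu
  have hstaru : star u = h - Complex.I • k := by
    rw [hu, star_add, star_smul, hsa.star_eq, hksa.star_eq, Complex.star_def, Complex.conj_I,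
      neg_smul, ← sub_eq_add_neg]
  have huu : u * star u = 1 := by
    rw [hu, hstaru, mul_eq, Complex.I_mul_I, neg_one_smul, sub_neg_eq_add, hsum]
  have hsuu : star u * u = 1 := by
    have h1 : star u = h + (-Complex.I) • k := by rw [hstaru, neg_smul, ← sub_eq_add_neg]
    have h2 : u = h - (-Complex.I) • k := by rw [hu, neg_smul, sub_neg_eq_add]
    rw [h1, h2, mul_eq]
    have : (-Complex.I) * (-Complex.I) = -1 := by
      simp [Complex.I_mul_I]
    rw [this, neg_one_smul, sub_neg_eq_add, hsum]
  have humem : u ∈ unitary A := Unitary.mem_iff.mpr ⟨hsuu, huu⟩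
  refine ⟨u, humem, star u, Unitary.star_mem humem, ?_⟩
  rw [hstaru, hu]
  abel

variable [PartialOrder A] [StarOrderedRing A]

/-- An invertible contraction is the mean of two unitaries. -/
lemma auxInvMean {x : A} (hx : IsUnit x) (hn : ‖x‖ ≤ 1) :
    ∃ u ∈ unitary A, ∃ v ∈ unitary A, u + v = x + x := by
  set h : A := CFC.sqrt (star x * x) with hh
  have hpos : (0 : A) ≤ star x * x := star_mul_self_nonneg x
  have hhnn : (0 : A) ≤ h := by rw [hh]; exact CFC.sqrt_nonneg (star x * x)
  have hhsa : IsSelfAdjoint h := .of_nonneg hhnn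
  have hmul : h * h = star x * x := CFC.sqrt_mul_sqrt_self _ hpos
  have hhu : IsUnit h := auxIsUnitOfSq (hmul ▸ (hx.star.mul hx))
  have hhn : ‖h‖ ≤ 1 := by
    have h1 : ‖star h * h‖ = ‖h‖ * ‖h‖ := CStarRing.norm_star_mul_self
    rw [hhsa.star_eq, hmul] at h1
    have h2 : ‖star x * x‖ = ‖x‖ * ‖x‖ := CStarRing.norm_star_mul_self
    nlinarith [norm_nonneg h, norm_nonneg x]
  obtain ⟨u, hu, v, hv, huv⟩ := auxSaMean hhsa hhn
  set z : A := ↑hhu.unit⁻¹ with hz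
  have hz1 : z * h = 1 := by
    have := hhu.unit.inv_mul
    rwa [IsUnit.unit_spec] at this
  have hz2 : h * z = 1 := by
    have := hhu.unit.mul_inv
    rwa [IsUnit.unit_spec] at this
  have hzstar : star z = z := by
    calc star z = star z * (h * z) := by rw [hz2, mul_one]
    _ = (star z * star h) * z := by rw [← mul_assoc, hhsa.star_eq]
    _ = star (h * z) * z := by rw [star_mul, hhsa.star_eq]
    _ = z := by rw [hz2, star_one, one_mul]
  set w : A := x * z with hw
  have hwstar : star w * w = 1 := by
    rw [hw, star_mul, hzstar]
    calc z * star x * (x * z) = z * (star x * x) * z := by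
          simp only [mul_assoc]
    _ = z * (h * h) * z := by rw [hmul]
    _ = (z * h) * (h * z) := by simp only [mul_assoc]
    _ = 1 := by rw [hz1, hz2, one_mul]
  have hwu : IsUnit w := hx.mul hhu.unit⁻¹.isUnit
  have hwmem : w ∈ unitary A := auxMemUnitary hwstar hwu
  have hwh : w * h = x := by rw [hw, mul_assoc, hz1, mul_one]
  refine ⟨w * u, mul_mem hwmem hu, w * v, mul_mem hwmem hv, ?_⟩
  rw [← mul_add, huv, mul_add, hwh]

/-- Adding a unitary to a strict contraction yields a sum of two unitaries. -/
lemma auxAddUnitary {c u : A} (hc : ‖c‖ < 1) (hu : u ∈ unitary A) :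
    ∃ v ∈ unitary A, ∃ w ∈ unitary A, v + w = u + c := by
  have hun : ‖u‖ ≤ 1 := by
    have h1 : ‖star u * u‖ = ‖u‖ * ‖u‖ := CStarRing.norm_star_mul_self
    rw [(Unitary.mem_iff.mp hu).1] at h1
    nlinarith [auxNormOneLe (A := A), norm_nonneg u]
  set d : A := star u * c with hd
  have hdn : ‖d‖ < 1 := by
    calc ‖d‖ ≤ ‖star u‖ * ‖c‖ := norm_mul_le _ _
    _ = ‖u‖ * ‖c‖ := by rw [norm_star]
    _ ≤ 1 * ‖c‖ := mul_le_mul_of_nonneg_right hun (norm_nonneg c)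
    _ < 1 := by rwa [one_mul]
  have hdu : IsUnit (1 + d) := by
    have := (Units.oneSub (-d) (by simpa using hdn)).isUnit
    simpa [sub_neg_eq_add] using this
  have hxu : IsUnit ((2⁻¹ : ℂ) • (1 + d)) := by
    rw [Algebra.smul_def]
    exact (IsUnit.map (algebraMap ℂ A) (isUnit_iff_ne_zero.mpr (by norm_num))).mul hdu
  have hxn : ‖(2⁻¹ : ℂ) • (1 + d)‖ ≤ 1 := by
    rw [norm_smul]
    have h1 : ‖(1 : A) + d‖ ≤ ‖(1 : A)‖ + ‖d‖ := norm_add_le _ _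
    have h2 : ‖(2⁻¹ : ℂ)‖ = 2⁻¹ := by simp
    rw [h2]
    nlinarith [auxNormOneLe (A := A)]
  obtain ⟨p, hp, q, hq, hpq⟩ := auxInvMean hxu hxn
  have hsum : p + q = 1 + d := by
    rw [hpq, ← add_smul]
    norm_num
  refine ⟨u * p, mul_mem hu hp, u * q, mul_mem hu hq, ?_⟩
  rw [← mul_add, hsum, mul_add, mul_one, hd, ← mul_assoc, (Unitary.mem_iff.mp hu).2, one_mul]

/-- Russo–Dye: for `‖c‖ < 1`, `n • c` is a sum of `n + 2` unitaries. -/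
lemma auxRusso {c : A} (hc : ‖c‖ < 1) (n : ℕ) :
    ∃ f : Fin (n + 2) → A, (∀ i, f i ∈ unitary A) ∧ (n : ℂ) • c = ∑ i, f i := by
  induction n with
  | zero =>
    refine ⟨![1, -1], ?_, ?_⟩
    · intro i
      fin_cases i
      · exact one_mem (unitary A)
      · rw [Unitary.mem_iff]
        constructor <;> simp
    · simp [Fin.sum_univ_two]
  | succ n ih =>
    obtain ⟨f, hfu, hfs⟩ := ih
    obtain ⟨v, hv, w, hw, hvw⟩ := auxAddUnitary hc (hfu 0)
    refine ⟨Fin.cons v (Fin.cons w fun i => f i.succ), ?_, ?_⟩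
    · intro i
      refine Fin.cases hv (fun j => ?_) i
      exact Fin.cases hw (fun l => hfu l.succ) j
    · rw [Fin.sum_cons, Fin.sum_cons, ← add_assoc, hvw]
      push_cast
      rw [add_smul, one_smul, hfs, Fin.sum_univ_succ f]
      abel

end CStarAux

/-- A unitarily invariant seminorm on `B(H)`: a nonnegative, subadditive, absolutely
homogeneous function `N` with `N (U T V) = N T` for all unitaries `U, V`. -/
structure UnitarilyInvariantSeminorm (H : Type*) [NormedAddCommGroup H]
    [InnerProductSpace ℂ H] [CompleteSpace H] where
  N : (H →L[ℂ] H) → ℝ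
  nonneg : ∀ T, 0 ≤ N T
  add_le : ∀ S T, N (S + T) ≤ N S + N T
  smul : ∀ (c : ℂ) (T : H →L[ℂ] H), N (c • T) = ‖c‖ * N T
  unitary_invariant : ∀ U V T : H →L[ℂ] H, U ∈ unitary (H →L[ℂ] H) →
    V ∈ unitary (H →L[ℂ] H) → N (U * T * V) = N T

section SeminormAux

variable {H : Type*} [NormedAddCommGroup H] [InnerProductSpace ℂ H] [CompleteSpace H]
  (𝒩 : UnitarilyInvariantSeminorm H)

lemma auxNZero : 𝒩.N 0 = 0 := by
  have := 𝒩.smul 0 0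
  simpa using this

lemma auxNSumLe {m : ℕ} (f : Fin m → (H →L[ℂ] H)) :
    𝒩.N (∑ i, f i) ≤ ∑ i, 𝒩.N (f i) :=
  Finset.le_sum_of_subadditive 𝒩.N (auxNZero 𝒩).le 𝒩.add_le Finset.univ f

lemma auxNConjLt {a b : H →L[ℂ] H} (X : H →L[ℂ] H) (ha : ‖a‖ < 1) (hb : ‖b‖ < 1) :
    𝒩.N (a * X * b) ≤ 𝒩.N X := by
  have key : ∀ n : ℕ, (n : ℝ) ^ 2 * 𝒩.N (a * X * b) ≤ ((n : ℝ) + 2) ^ 2 * 𝒩.N X := by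
    intro n
    obtain ⟨f, hfu, hfs⟩ := auxRusso ha n
    obtain ⟨g, hgu, hgs⟩ := auxRusso hb n
    have hexp : ((n : ℂ)) ^ 2 • (a * X * b) = ∑ i, ∑ j, f i * X * g j := by
      calc ((n : ℂ)) ^ 2 • (a * X * b) = ((n : ℂ) • a) * X * ((n : ℂ) • b) := by
            simp [smul_mul_assoc, mul_smul_comm, smul_smul, sq]
      _ = (∑ i, f i) * X * (∑ j, g j) := by rw [hfs, hgs]
      _ = ∑ i, ∑ j, f i * X * g j := by
            rw [Finset.sum_mul, Finset.sum_mul]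
            exact Finset.sum_congr rfl fun i _ => Finset.mul_sum _ _ _
    have h1 : 𝒩.N (((n : ℂ)) ^ 2 • (a * X * b)) = (n : ℝ) ^ 2 * 𝒩.N (a * X * b) := by
      rw [𝒩.smul]
      norm_num
    have h2 : 𝒩.N (∑ i, ∑ j, f i * X * g j) ≤ ((n : ℝ) + 2) ^ 2 * 𝒩.N X := by
      calc 𝒩.N (∑ i, ∑ j, f i * X * g j) ≤ ∑ i, 𝒩.N (∑ j, f i * X * g j) := auxNSumLe 𝒩 _
      _ ≤ ∑ _i : Fin (n + 2), ∑ _j : Fin (n + 2), 𝒩.N X := by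
            refine Finset.sum_le_sum fun i _ => ?_
            refine (auxNSumLe 𝒩 _).trans ?_
            refine Finset.sum_le_sum fun j _ => ?_
            exact le_of_eq (𝒩.unitary_invariant _ _ _ (hfu i) (hgu j))
      _ = ((n + 2 : ℕ) : ℝ) * (((n + 2 : ℕ) : ℝ) * 𝒩.N X) := by
            simp [Finset.sum_const, Finset.card_univ]
      _ = ((n : ℝ) + 2) ^ 2 * 𝒩.N X := by push_cast; ring
    rw [← h1, hexp]
    exact h2
  have hlim : Tendsto (fun n : ℕ => (((n : ℝ) + 2) / (n : ℝ)) ^ 2 * 𝒩.N X) atTop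
      (𝓝 (𝒩.N X)) := by
    have h0 : Tendsto (fun n : ℕ => ((n : ℝ) + 2) / (n : ℝ)) atTop (𝓝 1) := by
      have h00 : (fun n : ℕ => (1 : ℝ) + 2 / (n : ℝ)) =ᶠ[atTop]
          fun n : ℕ => ((n : ℝ) + 2) / (n : ℝ) := by
        filter_upwards [eventually_gt_atTop 0] with n hn
        have : (n : ℝ) ≠ 0 := Nat.cast_ne_zero.mpr hn.ne'
        field_simp
      refine Tendsto.congr' h00 ?_
      simpa using tendsto_const_nhds.add (tendsto_const_div_atTop_nhds_zero_nat (𝕜 := ℝ) 2)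
    have := (h0.pow 2).mul_const (𝒩.N X)
    simpa using this
  refine ge_of_tendsto hlim ?_
  filter_upwards [eventually_ge_atTop 1] with n hn
  have hn1 : (1 : ℝ) ≤ (n : ℝ) := by exact_mod_cast hn
  have hn' : (0 : ℝ) < (n : ℝ) ^ 2 := by positivity
  rw [div_pow, div_mul_eq_mul_div, le_div_iff₀ hn']
  calc 𝒩.N (a * X * b) * (n : ℝ) ^ 2 = (n : ℝ) ^ 2 * 𝒩.N (a * X * b) := mul_comm _ _
  _ ≤ ((n : ℝ) + 2) ^ 2 * 𝒩.N X := key n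

lemma auxNConj (a X b : H →L[ℂ] H) : 𝒩.N (a * X * b) ≤ ‖a‖ * ‖b‖ * 𝒩.N X := by
  have step : ∀ r s : ℝ, ‖a‖ < r → ‖b‖ < s → 𝒩.N (a * X * b) ≤ r * s * 𝒩.N X := by
    intro r s har hbs
    have hr : (0 : ℝ) < r := lt_of_le_of_lt (norm_nonneg a) har
    have hs : (0 : ℝ) < s := lt_of_le_of_lt (norm_nonneg b) hbs
    set a' : H →L[ℂ] H := ((r : ℂ))⁻¹ • a with ha'
    set b' : H →L[ℂ] H := ((s : ℂ))⁻¹ • b with hb'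
    have ha'n : ‖a'‖ < 1 := by
      rw [ha', norm_smul]
      have : ‖((r : ℂ))⁻¹‖ = r⁻¹ := by
        rw [norm_inv, Complex.norm_real, Real.norm_of_nonneg hr.le]
      rw [this]
      rw [inv_mul_lt_iff₀ hr, mul_one]
      exact har
    have hb'n : ‖b'‖ < 1 := by
      rw [hb', norm_smul]
      have : ‖((s : ℂ))⁻¹‖ = s⁻¹ := by
        rw [norm_inv, Complex.norm_real, Real.norm_of_nonneg hs.le]
      rw [this]
      rw [inv_mul_lt_iff₀ hs, mul_one]
      exact hbs
    have hr0 : (r : ℂ) ≠ 0 := by exact_mod_cast hr.ne'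
    have hs0 : (s : ℂ) ≠ 0 := by exact_mod_cast hs.ne'
    have hra : (r : ℂ) • a' = a := by
      rw [ha', smul_smul, mul_inv_cancel₀ hr0, one_smul]
    have hrb : (s : ℂ) • b' = b := by
      rw [hb', smul_smul, mul_inv_cancel₀ hs0, one_smul]
    have hrw : a * X * b = ((r : ℂ) * (s : ℂ)) • (a' * X * b') := by
      conv_lhs => rw [← hra, ← hrb]
      simp only [smul_mul_assoc, mul_smul_comm, smul_smul]
      rw [mul_comm ((s : ℂ)) ((r : ℂ))]
    rw [hrw, 𝒩.smul]
    have hnorm : ‖(r : ℂ) * (s : ℂ)‖ = r * s := by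
      rw [norm_mul, Complex.norm_real, Complex.norm_real,
        Real.norm_of_nonneg hr.le, Real.norm_of_nonneg hs.le]
    rw [hnorm, mul_assoc]
    have := auxNConjLt 𝒩 X ha'n hb'n
    have hrs : (0 : ℝ) ≤ r * s := by positivity
    calc r * (s * 𝒩.N (a' * X * b')) = (r * s) * 𝒩.N (a' * X * b') := by ring
    _ ≤ (r * s) * 𝒩.N X := by
          exact mul_le_mul_of_nonneg_left this hrs
    _ = r * s * 𝒩.N X := rfl
  have hlim : Tendsto
      (fun n : ℕ => (‖a‖ + 1 / ((n : ℝ) + 1)) * (‖b‖ + 1 / ((n : ℝ) + 1)) * 𝒩.N X) atTop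
      (𝓝 (‖a‖ * ‖b‖ * 𝒩.N X)) := by
    have h1 : Tendsto (fun n : ℕ => ‖a‖ + 1 / ((n : ℝ) + 1)) atTop (𝓝 ‖a‖) := by
      simpa using tendsto_const_nhds.add (tendsto_one_div_add_atTop_nhds_zero_nat (𝕜 := ℝ))
    have h2 : Tendsto (fun n : ℕ => ‖b‖ + 1 / ((n : ℝ) + 1)) atTop (𝓝 ‖b‖) := by
      simpa using tendsto_const_nhds.add (tendsto_one_div_add_atTop_nhds_zero_nat (𝕜 := ℝ))
    exact (h1.mul h2).mul_const _
  refine ge_of_tendsto hlim (Eventually.of_forall fun n => ?_)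
  have hpos : (0 : ℝ) < 1 / ((n : ℝ) + 1) := by positivity
  exact step _ _ (lt_add_of_pos_right _ hpos) (lt_add_of_pos_right _ hpos)

lemma auxNLeNorm (Y : H →L[ℂ] H) : 𝒩.N Y ≤ ‖Y‖ * 𝒩.N 1 := by
  have h := auxNConj 𝒩 Y 1 1
  rw [mul_one, mul_one] at h
  have h1 : ‖(1 : H →L[ℂ] H)‖ ≤ 1 := auxNormOneLe
  have h2 : ‖Y‖ * ‖(1 : H →L[ℂ] H)‖ * 𝒩.N 1 ≤ ‖Y‖ * 1 * 𝒩.N 1 :=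
    mul_le_mul_of_nonneg_right (mul_le_mul_of_nonneg_left h1 (norm_nonneg Y)) (𝒩.nonneg 1)
  rw [mul_one] at h2
  exact h.trans h2

lemma auxHalf (T : H →L[ℂ] H) : 𝒩.N (T * star T) ≤ 𝒩.N (star T * T) := by
  refine le_of_forall_pos_le_add fun δ hδ => ?_
  set ε : ℝ := δ / (𝒩.N 1 + 1) with hεdef
  have hN1 : (0 : ℝ) ≤ 𝒩.N 1 := 𝒩.nonneg 1
  have hε0 : 0 < ε := div_pos hδ (by linarith)
  set a : H →L[ℂ] H := star T * T with ha
  have hpos : (0 : H →L[ℂ] H) ≤ a := star_mul_self_nonneg T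
  have hspec : ∀ x ∈ spectrum ℝ a, 0 ≤ x := fun x hx => spectrum_nonneg_of_nonneg hpos hx
  classical
  -- the "approximate polar isometry"
  set f : ℝ → ℝ := fun x => (Real.sqrt (x + ε))⁻¹ with hf
  have hfc : ContinuousOn f (spectrum ℝ a) := by
    apply ContinuousOn.inv₀
    · exact (Real.continuous_sqrt.comp (continuous_id.add continuous_const)).continuousOn
    · intro x hx
      exact ne_of_gt (Real.sqrt_pos.mpr (by linarith [hspec x hx]))
  set g : ℝ → ℝ := fun x => x / (x + ε) with hg
  have hgc : ContinuousOn g (spectrum ℝ a) := by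
    apply ContinuousOn.div continuous_id.continuousOn
      (continuous_id.add continuous_const).continuousOn
    intro x hx
    have := hspec x hx
    exact ne_of_gt (by show (0:ℝ) < x + ε; linarith)
  set g' : ℝ → ℝ := fun x => ε / (x + ε) with hg'
  have hg'c : ContinuousOn g' (spectrum ℝ a) := by
    apply ContinuousOn.div continuous_const.continuousOn
      (continuous_id.add continuous_const).continuousOn
    intro x hx
    have := hspec x hx
    exact ne_of_gt (by show (0:ℝ) < x + ε; linarith)
  have hasa : IsSelfAdjoint a := .of_nonneg hpos
  have hRsa : IsSelfAdjoint (cfc f a) := cfc_predicate f a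
  have hRaR : cfc f a * a * cfc f a = cfc g a := by
    nth_rw 2 [← cfc_id' ℝ a]
    rw [← cfc_mul f _ a hfc (continuousOn_id' _),
      ← cfc_mul (fun x => f x * x) f a (hfc.mul (continuousOn_id' _)) hfc]
    refine cfc_congr fun x hx => ?_
    have hx0 := hspec x hx
    have hxε : (0 : ℝ) < x + ε := by linarith
    have hsq : Real.sqrt (x + ε) * Real.sqrt (x + ε) = x + ε := Real.mul_self_sqrt hxε.le
    have hsne : Real.sqrt (x + ε) ≠ 0 := ne_of_gt (Real.sqrt_pos.mpr hxε)
    field_simp [hf, hg]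
    try rw [mul_comm x (Real.sqrt (x + ε)), mul_assoc, ← mul_assoc (Real.sqrt (x + ε)), hsq]
    try ring
    simp only [hf, hg]
    rw [inv_pow, Real.sq_sqrt hxε.le, inv_mul_eq_div]
  set u : H →L[ℂ] H := T * cfc f a with hu
  have hustar : star u = cfc f a * star T := by
    rw [hu, star_mul, hRsa.star_eq]
  have hsuu : star u * u = cfc g a := by
    rw [hustar, hu, ← hRaR]
    nth_rw 4 [ha]
    simp only [mul_assoc]
  have hgn : ‖cfc g a‖ ≤ 1 := by
    apply norm_cfc_le zero_le_one
    intro x hx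
    have hx0 := hspec x hx
    rw [Real.norm_eq_abs, hg, abs_of_nonneg (by positivity)]
    rw [div_le_one (by positivity)]
    linarith
  have hun : ‖u‖ ≤ 1 := by
    have h1 : ‖star u * u‖ = ‖u‖ * ‖u‖ := CStarRing.norm_star_mul_self
    rw [hsuu] at h1
    nlinarith [norm_nonneg u, norm_nonneg (cfc g a)]
  have hsplit : cfc g a + cfc g' a = 1 := by
    rw [← cfc_add a g g' hgc hg'c]
    calc cfc (fun x : ℝ => g x + g' x) a = cfc (fun _ : ℝ => (1 : ℝ)) a := by
          refine cfc_congr fun x hx => ?_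
          have hx0 := hspec x hx
          rw [hg, hg']
          field_simp
    _ = 1 := cfc_const_one ℝ a
  have hdecomp : T * star T = u * a * star u + T * cfc g' a * star T := by
    have h1 : u * a * star u = T * cfc g a * star T := by
      rw [hu, hustar, ← hRaR]
      simp only [mul_assoc]
    rw [h1]
    calc T * star T = T * ((cfc g a + cfc g' a) * star T) := by rw [hsplit, one_mul]
    _ = T * cfc g a * star T + T * cfc g' a * star T := by
          rw [add_mul, mul_add, ← mul_assoc, ← mul_assoc]
  set s : ℝ → ℝ := fun x => Real.sqrt (ε / (x + ε)) with hsdef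
  have hsc : ContinuousOn s (spectrum ℝ a) := Real.continuous_sqrt.comp_continuousOn hg'c
  have hssa : IsSelfAdjoint (cfc s a) := cfc_predicate s a
  have hss : cfc s a * cfc s a = cfc g' a := by
    rw [← cfc_mul s s a hsc hsc]
    refine cfc_congr fun x hx => ?_
    have hx0 := hspec x hx
    simp only [hsdef, hg']
    exact Real.mul_self_sqrt (by positivity)
  have hE : ‖T * cfc g' a * star T‖ ≤ ε := by
    have h1 : T * cfc g' a * star T = (T * cfc s a) * star (T * cfc s a) := by
      rw [star_mul, hssa.star_eq]
      simp only [← hss, mul_assoc]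
    have hSaS : cfc s a * a * cfc s a = cfc (fun x => s x * x * s x) a := by
      nth_rw 2 [← cfc_id' ℝ a]
      rw [← cfc_mul s _ a hsc (continuousOn_id' _),
        ← cfc_mul (fun x => s x * x) s a (hsc.mul (continuousOn_id' _)) hsc]
    have h2 : ‖T * cfc s a‖ * ‖T * cfc s a‖ ≤ ε := by
      rw [← CStarRing.norm_star_mul_self]
      have h3 : star (T * cfc s a) * (T * cfc s a) = cfc s a * a * cfc s a := by
        rw [star_mul, hssa.star_eq]
        nth_rw 4 [ha]
        simp only [mul_assoc]
      rw [h3, hSaS]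
      apply norm_cfc_le hε0.le
      intro x hx
      have hx0 := hspec x hx
      have hxε : (0 : ℝ) < x + ε := by linarith
      have hsx : s x * x * s x = ε * x / (x + ε) := by
        simp only [hsdef]
        calc Real.sqrt (ε / (x + ε)) * x * Real.sqrt (ε / (x + ε))
            = x * (Real.sqrt (ε / (x + ε)) * Real.sqrt (ε / (x + ε))) := by ring
        _ = x * (ε / (x + ε)) := by rw [Real.mul_self_sqrt (by positivity)]
        _ = ε * x / (x + ε) := by ring
      rw [hsx, Real.norm_eq_abs, abs_of_nonneg (by positivity), div_le_iff₀ hxε]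
      nlinarith
    rw [h1, CStarRing.norm_self_mul_star]
    exact h2
  have hsun : ‖star u‖ ≤ 1 := by rwa [norm_star]
  have hmain : 𝒩.N (T * star T) ≤ 𝒩.N a + ε * 𝒩.N 1 := by
    calc 𝒩.N (T * star T) = 𝒩.N (u * a * star u + T * cfc g' a * star T) := by rw [← hdecomp]
    _ ≤ 𝒩.N (u * a * star u) + 𝒩.N (T * cfc g' a * star T) := 𝒩.add_le _ _
    _ ≤ ‖u‖ * ‖star u‖ * 𝒩.N a + ‖T * cfc g' a * star T‖ * 𝒩.N 1 :=
          add_le_add (auxNConj 𝒩 u a (star u)) (auxNLeNorm 𝒩 _)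
    _ ≤ 1 * 𝒩.N a + ε * 𝒩.N 1 := by
          refine add_le_add ?_ (mul_le_mul_of_nonneg_right hE hN1)
          refine mul_le_mul_of_nonneg_right ?_ (𝒩.nonneg a)
          exact mul_le_one₀ hun (norm_nonneg _) hsun
    _ = 𝒩.N a + ε * 𝒩.N 1 := by rw [one_mul]
  refine hmain.trans ?_
  have hfinal : ε * 𝒩.N 1 ≤ δ := by
    rw [hεdef, div_mul_eq_mul_div, div_le_iff₀ (by linarith)]
    nlinarith
  linarith

end SeminormAux

/-- For a unitarily invariant seminorm `N` on `B(H)`: `N (T* T) = N (T T*)`. -/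
theorem uiSeminorm_star_mul_self
    {H : Type*} [NormedAddCommGroup H] [InnerProductSpace ℂ H] [CompleteSpace H]
    (𝒩 : UnitarilyInvariantSeminorm H) (T : H →L[ℂ] H) :
    𝒩.N (star T * T) = 𝒩.N (T * star T) := by
  have h1 := auxHalf 𝒩 T
  have h2 := auxHalf 𝒩 (star T)
  rw [star_star] at h2
  exact le_antisymm h2 h1
end

section
/- Let H be a complex Hilbert space and let N : B(H) → ℝ be a unitarily invariant seminorm. If R, S ∈ B(H) satisfy 0 ≤ R ≤ S (in the Loewner order), then N(R) ≤ N(S). -/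
set_option synthInstance.maxHeartbeats 1000000
set_option maxHeartbeats 1000000

namespace UISeminormAux

variable {H : Type*} [NormedAddCommGroup H] [InnerProductSpace ℂ H] [CompleteSpace H]

/-- A self-adjoint contraction is the mean of two unitaries. -/
lemma mean_two_unitaries [Nontrivial H] (a : H →L[ℂ] H) (ha : IsSelfAdjoint a) (ha1 : ‖a‖ ≤ 1) :
    ∃ u ∈ unitary (H →L[ℂ] H), a = (2:ℂ)⁻¹ • (u + star u) := by
  have hnorm : IsStarNormal a := ha.isStarNormal
  have hre : ∀ x ∈ spectrum ℂ a, (x.re : ℂ) = x := fun x hx => ha.spectrumRestricts.rightInvOn hx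
  have hb : ∀ x ∈ spectrum ℂ a, |x.re| ≤ 1 := by
    intro x hx
    calc |x.re| ≤ ‖x‖ := Complex.abs_re_le_norm x
    _ = ‖x‖ := rfl
    _ ≤ ‖a‖ := spectrum.norm_le_norm_of_mem hx
    _ ≤ 1 := ha1
  set f : ℂ → ℂ := fun z => (z.re : ℂ) + Complex.I * (Real.sqrt (1 - z.re^2) : ℝ) with hf
  have hcont : ContinuousOn f (spectrum ℂ a) := by
    apply Continuous.continuousOn; fun_prop
  refine ⟨cfc f a, ?_, ?_⟩
  · rw [cfc_unitary_iff f a]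
    intro x hx
    have h1 : (0:ℝ) ≤ 1 - x.re^2 := by
      have h2 : x.re^2 ≤ 1 := by rw [← sq_abs]; nlinarith [hb x hx, abs_nonneg x.re]
      linarith
    have key : star (f x) * f x = (((x.re)^2 + (Real.sqrt (1 - x.re^2))^2 : ℝ) : ℂ) := by
      simp only [hf, RCLike.star_def, map_add, map_mul, Complex.conj_ofReal, Complex.conj_I]
      push_cast
      ring_nf
      rw [Complex.I_sq]
      ring
    rw [key, Real.sq_sqrt h1]
    norm_num
  · have h1 : a = cfc (fun z : ℂ => z) a := (cfc_id ℂ a).symm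
    have h2 : star (cfc f a) = cfc (fun z => star (f z)) a := (cfc_star f a).symm
    rw [h2, ← cfc_add a f _]
    have h3 : cfc (fun z => f z + star (f z)) a = cfc (fun z : ℂ => 2 * z) a := by
      apply cfc_congr
      intro x hx
      simp only [hf, RCLike.star_def, map_add, map_mul, Complex.conj_I, Complex.conj_ofReal,
        Complex.ofReal_re]
      conv_rhs => rw [← hre x hx]
      ring
    rw [h3, cfc_const_mul (2:ℂ) (fun z : ℂ => z) a, ← h1, smul_smul]
    norm_num

lemma isUnit_sqrt {a : H →L[ℂ] H} (ha : 0 ≤ a) (haU : IsUnit a) : IsUnit (CFC.sqrt a) := by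
  have hPP : CFC.sqrt a * CFC.sqrt a = a := by rw [← sq]; exact CFC.sq_sqrt a
  refine isUnit_iff_exists_and_exists.mpr ⟨⟨CFC.sqrt a * Ring.inverse a, ?_⟩,
    ⟨Ring.inverse a * CFC.sqrt a, ?_⟩⟩
  · rw [← mul_assoc, hPP, Ring.mul_inverse_cancel _ haU]
  · rw [mul_assoc, hPP, Ring.inverse_mul_cancel _ haU]

lemma mem_unitary_of_isUnit {w : H →L[ℂ] H} (hw : IsUnit w) (h : star w * w = 1) :
    w ∈ unitary (H →L[ℂ] H) := by
  obtain ⟨c, hc1, hc2⟩ := isUnit_iff_exists.mp hw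
  have hsw : star w = c := by
    calc star w = star w * (w * c) := by rw [hc1, mul_one]
    _ = (star w * w) * c := by rw [mul_assoc]
    _ = c := by rw [h, one_mul]
  exact Unitary.mem_iff.mpr ⟨h, by rw [hsw, hc1]⟩

lemma norm_sqrt_le_one {a : H →L[ℂ] H} (ha : 0 ≤ a) (ha1 : ‖a‖ ≤ 1) : ‖CFC.sqrt a‖ ≤ 1 := by
  have hPsa : IsSelfAdjoint (CFC.sqrt a) := IsSelfAdjoint.of_nonneg (CFC.sqrt_nonneg a)
  have hPP : CFC.sqrt a * CFC.sqrt a = a := by rw [← sq]; exact CFC.sq_sqrt a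
  have h1 : ‖CFC.sqrt a‖ * ‖CFC.sqrt a‖ = ‖a‖ := by
    calc ‖CFC.sqrt a‖ * ‖CFC.sqrt a‖ = ‖star (CFC.sqrt a) * CFC.sqrt a‖ :=
          (CStarRing.norm_star_mul_self).symm
    _ = ‖CFC.sqrt a * CFC.sqrt a‖ := by rw [hPsa.star_eq]
    _ = ‖a‖ := by rw [hPP]
  nlinarith [norm_nonneg (CFC.sqrt a)]

variable (𝒩 : UnitarilyInvariantSeminorm H)

/-- Left multiplication by an invertible contraction does not increase `N`. -/
lemma N_mul_le_left [Nontrivial H] (X T : H →L[ℂ] H) (hX : IsUnit X) (hX1 : ‖X‖ ≤ 1) :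
    𝒩.N (X * T) ≤ 𝒩.N T := by
  set a := star X * X with ha_def
  have ha : 0 ≤ a := star_mul_self_nonneg X
  have haU : IsUnit a := hX.star.mul hX
  have ha1 : ‖a‖ ≤ 1 := by
    rw [ha_def, CStarRing.norm_star_mul_self]
    nlinarith [norm_nonneg X]
  set P := CFC.sqrt a with hP_def
  have hP0 : 0 ≤ P := CFC.sqrt_nonneg a
  have hPsa : IsSelfAdjoint P := IsSelfAdjoint.of_nonneg hP0
  have hPP : P * P = a := by rw [hP_def, ← sq]; exact CFC.sq_sqrt a
  have hPunit : IsUnit P := isUnit_sqrt ha haU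
  set Pi := Ring.inverse P with hPi_def
  have hPPi : P * Pi = 1 := Ring.mul_inverse_cancel _ hPunit
  have hPiP : Pi * P = 1 := Ring.inverse_mul_cancel _ hPunit
  have hPi_star : star Pi = Pi := by
    rw [hPi_def, ← Ring.inverse_star, hPsa.star_eq]
  set W := X * Pi with hW_def
  have hWunit : IsUnit W := hX.mul (isUnit_iff_exists.mpr ⟨P, hPiP, hPPi⟩)
  have hWW : star W * W = 1 := by
    rw [hW_def, star_mul, hPi_star]
    calc Pi * star X * (X * Pi) = Pi * (star X * X) * Pi := by simp only [mul_assoc]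
    _ = Pi * (P * P) * Pi := by rw [hPP]
    _ = (Pi * P) * (P * Pi) := by simp only [mul_assoc]
    _ = 1 := by rw [hPiP, hPPi, one_mul]
  have hWmem : W ∈ unitary (H →L[ℂ] H) := mem_unitary_of_isUnit hWunit hWW
  have hXWP : X = W * P := by rw [hW_def, mul_assoc, hPiP, mul_one]
  have hP1 : ‖P‖ ≤ 1 := norm_sqrt_le_one ha ha1
  obtain ⟨u, huMem, hu⟩ := mean_two_unitaries P hPsa hP1
  have hsplit : X * T = (2:ℂ)⁻¹ • ((W * u) * T * 1 + (W * star u) * T * 1) := by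
    rw [hXWP, hu]
    simp only [mul_one, smul_mul_assoc, mul_smul_comm, add_mul, mul_add, mul_assoc]
  rw [hsplit, 𝒩.smul]
  have hstar_u : star u ∈ unitary (H →L[ℂ] H) := Unitary.star_mem huMem
  have e1 : 𝒩.N ((W * u) * T * 1) = 𝒩.N T :=
    𝒩.unitary_invariant _ _ _ (mul_mem hWmem huMem) (one_mem _)
  have e2 : 𝒩.N ((W * star u) * T * 1) = 𝒩.N T :=
    𝒩.unitary_invariant _ _ _ (mul_mem hWmem hstar_u) (one_mem _)
  have hle := 𝒩.add_le ((W * u) * T * 1) ((W * star u) * T * 1)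
  rw [e1, e2] at hle
  have hn : ‖(2:ℂ)⁻¹‖ = 2⁻¹ := by norm_num
  rw [hn]
  nlinarith [𝒩.nonneg T]

/-- Right multiplication by an invertible contraction does not increase `N`. -/
lemma N_mul_le_right [Nontrivial H] (X T : H →L[ℂ] H) (hX : IsUnit X) (hX1 : ‖X‖ ≤ 1) :
    𝒩.N (T * X) ≤ 𝒩.N T := by
  set a := X * star X with ha_def
  have ha : 0 ≤ a := mul_star_self_nonneg X
  have haU : IsUnit a := hX.mul hX.star
  have ha1 : ‖a‖ ≤ 1 := by
    rw [ha_def, CStarRing.norm_self_mul_star]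
    nlinarith [norm_nonneg X]
  set P := CFC.sqrt a with hP_def
  have hP0 : 0 ≤ P := CFC.sqrt_nonneg a
  have hPsa : IsSelfAdjoint P := IsSelfAdjoint.of_nonneg hP0
  have hPP : P * P = a := by rw [hP_def, ← sq]; exact CFC.sq_sqrt a
  have hPunit : IsUnit P := isUnit_sqrt ha haU
  set Pi := Ring.inverse P with hPi_def
  have hPPi : P * Pi = 1 := Ring.mul_inverse_cancel _ hPunit
  have hPiP : Pi * P = 1 := Ring.inverse_mul_cancel _ hPunit
  have hPi_star : star Pi = Pi := by
    rw [hPi_def, ← Ring.inverse_star, hPsa.star_eq]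
  set W := Pi * X with hW_def
  have hWunit : IsUnit W := (isUnit_iff_exists.mpr ⟨P, hPiP, hPPi⟩).mul hX
  have hWW : W * star W = 1 := by
    rw [hW_def, star_mul, hPi_star]
    calc Pi * X * (star X * Pi) = Pi * (X * star X) * Pi := by simp only [mul_assoc]
    _ = Pi * (P * P) * Pi := by rw [hPP]
    _ = (Pi * P) * (P * Pi) := by simp only [mul_assoc]
    _ = 1 := by rw [hPiP, hPPi, one_mul]
  have hWW' : star W * W = 1 := by
    obtain ⟨c, hc1, hc2⟩ := isUnit_iff_exists.mp hWunit
    have hsw : star W = c := by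
      calc star W = (c * W) * star W := by rw [hc2, one_mul]
      _ = c * (W * star W) := by rw [mul_assoc]
      _ = c := by rw [hWW, mul_one]
    rw [hsw, hc2]
  have hWmem : W ∈ unitary (H →L[ℂ] H) := mem_unitary_of_isUnit hWunit hWW'
  have hXWP : X = P * W := by rw [hW_def, ← mul_assoc, hPPi, one_mul]
  have hP1 : ‖P‖ ≤ 1 := norm_sqrt_le_one ha ha1
  obtain ⟨u, huMem, hu⟩ := mean_two_unitaries P hPsa hP1
  have hsplit : T * X = (2:ℂ)⁻¹ • (1 * T * (u * W) + 1 * T * (star u * W)) := by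
    rw [hXWP, hu]
    simp only [one_mul, smul_mul_assoc, mul_smul_comm, add_mul, mul_add, mul_assoc]
  rw [hsplit, 𝒩.smul]
  have hstar_u : star u ∈ unitary (H →L[ℂ] H) := Unitary.star_mem huMem
  have e1 : 𝒩.N (1 * T * (u * W)) = 𝒩.N T :=
    𝒩.unitary_invariant _ _ _ (one_mem _) (mul_mem huMem hWmem)
  have e2 : 𝒩.N (1 * T * (star u * W)) = 𝒩.N T :=
    𝒩.unitary_invariant _ _ _ (one_mem _) (mul_mem hstar_u hWmem)
  have hle := 𝒩.add_le (1 * T * (u * W)) (1 * T * (star u * W))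
  rw [e1, e2] at hle
  have hn : ‖(2:ℂ)⁻¹‖ = 2⁻¹ := by norm_num
  rw [hn]
  nlinarith [𝒩.nonneg T]

lemma isUnit_add_smul_one (a : H →L[ℂ] H) (ha : 0 ≤ a) {ε : ℝ} (hε : 0 < ε) :
    IsUnit (a + ε • 1) := by
  have hsa : IsSelfAdjoint a := IsSelfAdjoint.of_nonneg ha
  have h1 : a + ε • 1 = cfc (fun x : ℝ => x + ε) a := by
    rw [cfc_add a _ _, cfc_id' ℝ a, cfc_const ε a, Algebra.algebraMap_eq_smul_one]
  rw [h1]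
  refine isUnit_cfc_iff (fun x : ℝ => x + ε) a |>.mpr fun x hx => ?_
  have := spectrum_nonneg_of_nonneg ha hx
  positivity

end UISeminormAux

/-- A unitarily invariant seminorm on `B(H)` is monotone on positive operators:
if `0 ≤ R ≤ S` then `N R ≤ N S`. -/
theorem uiSeminorm_monotone
    {H : Type*} [NormedAddCommGroup H] [InnerProductSpace ℂ H] [CompleteSpace H]
    (𝒩 : UnitarilyInvariantSeminorm H) (R S : H →L[ℂ] H)
    (hR : 0 ≤ R) (hRS : R ≤ S) :
    𝒩.N R ≤ 𝒩.N S := by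
  open UISeminormAux in
  rcases subsingleton_or_nontrivial H with hH | hH
  · have : Subsingleton (H →L[ℂ] H) := inferInstance
    rw [Subsingleton.elim R S]
  -- main case
  have key : ∀ ε : ℝ, 0 < ε → ε < 1 → 𝒩.N R ≤ 𝒩.N S + ε * (2 * 𝒩.N 1 + 𝒩.N R) := by
    intro ε hε hε1
    set M : H →L[ℂ] H := S + ε • 1 with hM_def
    have hS0 : 0 ≤ S := hR.trans hRS
    have hone : (0:H →L[ℂ] H) ≤ 1 := zero_le_one
    have hε1' : (0:H →L[ℂ] H) ≤ ε • 1 := smul_nonneg hε.le hone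
    have hM0 : 0 ≤ M := add_nonneg hS0 hε1'
    have hMU : IsUnit M := isUnit_add_smul_one S hS0 hε
    set R' : H →L[ℂ] H := (1 - ε) • R + (ε * ε) • 1 with hR'_def
    have hR'0 : 0 ≤ R' := add_nonneg (smul_nonneg (by linarith) hR)
      (smul_nonneg (by positivity) hone)
    have hR'U : IsUnit R' := by
      have := isUnit_add_smul_one ((1 - ε) • R) (smul_nonneg (by linarith) hR)
        (ε := ε * ε) (by positivity)
      exact this
    have hR'M : R' ≤ M := by
      apply add_le_add
      · calc (1 - ε) • R ≤ (1:ℝ) • R := smul_le_smul_of_nonneg_right (by linarith) hR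
        _ = R := one_smul ℝ R
        _ ≤ S := hRS
      · exact smul_le_smul_of_nonneg_right (by nlinarith) hone
    -- square roots
    set Q := CFC.sqrt M with hQ_def
    have hQ0 : 0 ≤ Q := CFC.sqrt_nonneg M
    have hQsa : IsSelfAdjoint Q := IsSelfAdjoint.of_nonneg hQ0
    have hQQ : Q * Q = M := by rw [hQ_def, ← sq]; exact CFC.sq_sqrt M
    have hQU : IsUnit Q := isUnit_sqrt hM0 hMU
    set Qi := Ring.inverse Q with hQi_def
    have hQQi : Q * Qi = 1 := Ring.mul_inverse_cancel _ hQU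
    have hQiQ : Qi * Q = 1 := Ring.inverse_mul_cancel _ hQU
    have hQiU : IsUnit Qi := isUnit_iff_exists.mpr ⟨Q, hQiQ, hQQi⟩
    have hQi_star : star Qi = Qi := by rw [hQi_def, ← Ring.inverse_star, hQsa.star_eq]
    have hQi_sa : IsSelfAdjoint Qi := hQi_star
    have hQMQ : Qi * M * Qi = 1 := by
      calc Qi * M * Qi = Qi * (Q * Q) * Qi := by rw [hQQ]
      _ = (Qi * Q) * (Q * Qi) := by simp only [mul_assoc]
      _ = 1 := by rw [hQiQ, hQQi, one_mul]
    set P := CFC.sqrt R' with hP_def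
    have hP0 : 0 ≤ P := CFC.sqrt_nonneg R'
    have hPsa : IsSelfAdjoint P := IsSelfAdjoint.of_nonneg hP0
    have hPP : P * P = R' := by rw [hP_def, ← sq]; exact CFC.sq_sqrt R'
    have hPU : IsUnit P := isUnit_sqrt hR'0 hR'U
    set D := P * Qi with hD_def
    have hDU : IsUnit D := hPU.mul hQiU
    have hDstar : star D = Qi * P := by rw [hD_def, star_mul, hQi_star, hPsa.star_eq]
    have hDD : star D * D = Qi * R' * Qi := by
      rw [hDstar, hD_def]
      calc Qi * P * (P * Qi) = Qi * (P * P) * Qi := by simp only [mul_assoc]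
      _ = Qi * R' * Qi := by rw [hPP]
    have hDD0 : 0 ≤ star D * D := star_mul_self_nonneg D
    have hDD1 : star D * D ≤ 1 := by
      rw [hDD]
      calc Qi * R' * Qi = star Qi * R' * Qi := by rw [hQi_star]
      _ ≤ star Qi * M * Qi := star_left_conjugate_le_conjugate hR'M Qi
      _ = Qi * M * Qi := by rw [hQi_star]
      _ = 1 := hQMQ
    have hDnorm : ‖D‖ ≤ 1 := by
      have h1 : ‖star D * D‖ ≤ ‖(1 : H →L[ℂ] H)‖ :=
        CStarAlgebra.norm_le_norm_of_nonneg_of_le hDD0 hDD1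
      rw [norm_one] at h1
      have h2 : ‖star D * D‖ = ‖D‖ * ‖D‖ := CStarRing.norm_star_mul_self
      nlinarith [norm_nonneg D]
    have hDMD : D * M * star D = R' := by
      rw [hDstar, hD_def]
      calc P * Qi * M * (Qi * P) = P * (Qi * M * Qi) * P := by simp only [mul_assoc]
      _ = P * P := by rw [hQMQ, mul_one]
      _ = R' := hPP
    -- the seminorm chain
    have step1 : 𝒩.N R' ≤ 𝒩.N M := by
      have h1 : R' = D * (M * star D) := by rw [← hDMD, mul_assoc]
      rw [h1]
      calc 𝒩.N (D * (M * star D)) ≤ 𝒩.N (M * star D) := N_mul_le_left 𝒩 D _ hDU hDnorm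
      _ ≤ 𝒩.N M := N_mul_le_right 𝒩 (star D) M hDU.star (by rwa [norm_star])
    have step2 : 𝒩.N M ≤ 𝒩.N S + ε * 𝒩.N 1 := by
      have h1 : M = S + (ε:ℂ) • 1 := by rw [hM_def, Complex.coe_smul]
      rw [h1]
      calc 𝒩.N (S + (ε:ℂ) • 1) ≤ 𝒩.N S + 𝒩.N ((ε:ℂ) • 1) := 𝒩.add_le _ _
      _ = 𝒩.N S + ε * 𝒩.N 1 := by
          rw [𝒩.smul]
          congr 1
          simp [abs_of_nonneg hε.le]
    have step3 : 𝒩.N R ≤ 𝒩.N R' + ε * (𝒩.N R + ε * 𝒩.N 1) := by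
      have hdiff : R - R' = (ε:ℂ) • (R - (ε:ℂ) • 1) := by
        rw [hR'_def, Complex.coe_smul, smul_sub, Complex.coe_smul, smul_smul]
        rw [sub_smul, one_smul]
        module
      calc 𝒩.N R = 𝒩.N (R' + (R - R')) := by congr 1; abel
      _ ≤ 𝒩.N R' + 𝒩.N (R - R') := 𝒩.add_le _ _
      _ ≤ 𝒩.N R' + ε * (𝒩.N R + ε * 𝒩.N 1) := by
          gcongr 𝒩.N R' + ?_
          rw [hdiff, 𝒩.smul]
          have hε' : ‖(ε:ℂ)‖ = ε := by simp [abs_of_nonneg hε.le]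
          rw [hε']
          apply mul_le_mul_of_nonneg_left _ hε.le
          calc 𝒩.N (R - (ε:ℂ) • 1) = 𝒩.N (R + (-(ε:ℂ)) • 1) := by
                congr 1
                module
          _ ≤ 𝒩.N R + 𝒩.N ((-(ε:ℂ)) • 1) := 𝒩.add_le _ _
          _ = 𝒩.N R + ε * 𝒩.N 1 := by
              rw [𝒩.smul]
              congr 1
              simp [abs_of_nonneg hε.le]
    have hN1 : 0 ≤ 𝒩.N 1 := 𝒩.nonneg 1
    have hNR : 0 ≤ 𝒩.N R := 𝒩.nonneg R
    calc 𝒩.N R ≤ 𝒩.N R' + ε * (𝒩.N R + ε * 𝒩.N 1) := step3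
    _ ≤ (𝒩.N S + ε * 𝒩.N 1) + ε * (𝒩.N R + ε * 𝒩.N 1) := by
        have := step1.trans step2
        linarith
    _ ≤ 𝒩.N S + ε * (2 * 𝒩.N 1 + 𝒩.N R) := by
        have h := mul_nonneg (mul_nonneg hε.le hN1) (sub_nonneg.mpr hε1.le)
        nlinarith
  -- conclude
  have hfin : ∀ η : ℝ, 0 < η → 𝒩.N R ≤ 𝒩.N S + η := by
    intro η hη
    have hN1 : 0 ≤ 𝒩.N 1 := 𝒩.nonneg 1
    have hNR : 0 ≤ 𝒩.N R := 𝒩.nonneg R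
    set C : ℝ := 2 * 𝒩.N 1 + 𝒩.N R + 1 with hC_def
    have hC : 0 < C := by
      have := 𝒩.nonneg 1; have := 𝒩.nonneg R; positivity
    set ε : ℝ := min (η / C) (1/2) with hε_def
    have hε0 : 0 < ε := lt_min (by positivity) (by norm_num)
    have hε1 : ε < 1 := (min_le_right _ _).trans_lt (by norm_num)
    calc 𝒩.N R ≤ 𝒩.N S + ε * (2 * 𝒩.N 1 + 𝒩.N R) := key ε hε0 hε1
    _ ≤ 𝒩.N S + (η / C) * C := by
        gcongr 𝒩.N S + ?_
        apply mul_le_mul (min_le_left _ _) (by simp only [hC_def]; linarith) (by linarith)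
          (by positivity)
    _ = 𝒩.N S + η := by rw [div_mul_cancel₀ _ hC.ne']
  exact le_of_forall_pos_le_add hfin
end

section
/- Let G be a countable discrete group, let m be a mean on the bounded complex-valued functions on G (a linear functional with m(1) = 1, m(f) real for real-valued f, and m(f) ≥ 0 for pointwise nonnegative f), let H be a complex Hilbert space, and let N : B(H) → ℝ be a unitarily invariant seminorm such that for every c ≥ 0 the set {T ∈ B(H) : N(T) ≤ c} is closed in the weak operator topology. Let φ : G → B(H) satisfy sup_{x ∈ G} ‖φ(x)‖_op < ∞ and sup_{x ∈ G} N(φ(x)) < ∞, and let A ∈ B(H) satisfy ⟨Aξ, η⟩ = m(x ↦ ⟨φ(x)ξ, η⟩) for all ξ, η ∈ H. Then N(A) ≤ m(x ↦ N(φ(x))). -/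
/-- A mean on the space of bounded complex-valued functions on `G`: a linear functional
`m` with `m 1 = 1`, `m f` real for real-valued `f`, and `m f ≥ 0` for pointwise
nonnegative (real-valued) `f`. -/
structure MeanC (G : Type*) where
  m : (G → ℂ) → ℂ
  add : ∀ f g : G → ℂ, (∃ C, ∀ x, ‖f x‖ ≤ C) → (∃ C, ∀ x, ‖g x‖ ≤ C) →
    m (fun x => f x + g x) = m f + m g
  smul : ∀ (c : ℂ) (f : G → ℂ), (∃ C, ∀ x, ‖f x‖ ≤ C) →
    m (fun x => c * f x) = c * m f
  one : m (fun _ => 1) = 1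
  real : ∀ f : G → ℂ, (∃ C, ∀ x, ‖f x‖ ≤ C) → (∀ x, (f x).im = 0) → (m f).im = 0
  pos : ∀ f : G → ℂ, (∃ C, ∀ x, ‖f x‖ ≤ C) → (∀ x, (f x).im = 0 ∧ 0 ≤ (f x).re) →
    0 ≤ (m f).re

namespace MeanAux

variable {G : Type*}

def Bdd (f : G → ℂ) : Prop := ∃ C, ∀ x, ‖f x‖ ≤ C

lemma Bdd.const (c : ℂ) : Bdd (fun _ : G => c) := ⟨‖c‖, fun _ => le_rfl⟩

lemma Bdd.mul_left {f : G → ℂ} (c : ℂ) (hf : Bdd f) : Bdd (fun x => c * f x) := by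
  obtain ⟨C, hC⟩ := hf
  exact ⟨‖c‖ * C, fun x => by
    rw [norm_mul]
    exact mul_le_mul_of_nonneg_left (hC x) (norm_nonneg c)⟩

lemma Bdd.add {f g : G → ℂ} (hf : Bdd f) (hg : Bdd g) : Bdd (fun x => f x + g x) := by
  obtain ⟨C, hC⟩ := hf; obtain ⟨D, hD⟩ := hg
  exact ⟨C + D, fun x => (norm_add_le _ _).trans (add_le_add (hC x) (hD x))⟩

lemma Bdd.sum {ι : Type*} (t : Finset ι) (f : ι → G → ℂ) (hf : ∀ j, Bdd (f j)) :
    Bdd (fun x => ∑ j ∈ t, f j x) := by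
  classical
  induction t using Finset.induction_on with
  | empty => simpa using Bdd.const 0
  | insert _ _ h ih =>
      simp only [Finset.sum_insert h]
      exact (hf _).add ih

variable (M : MeanC G)

lemma m_const (c : ℂ) : M.m (fun _ => c) = c := by
  have : (fun _ : G => c) = fun _ : G => c * 1 := by funext x; ring
  rw [this, M.smul c (fun _ => 1) (Bdd.const 1), M.one, mul_one]

lemma m_sum {ι : Type*} (t : Finset ι) (f : ι → G → ℂ) (hf : ∀ j, Bdd (f j)) :
    M.m (fun x => ∑ j ∈ t, f j x) = ∑ j ∈ t, M.m (f j) := by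
  classical
  induction t using Finset.induction_on with
  | empty => simpa using m_const M 0
  | @insert a s h ih =>
      simp only [Finset.sum_insert h]
      rw [M.add (f a) (fun x => ∑ j ∈ s, f j x) (hf a) (Bdd.sum s f hf), ih]

/-- The real part of the mean of a bounded function is at most any pointwise upper
bound on the real parts. -/
lemma m_re_le (g : G → ℂ) (hg : Bdd g) (r : ℝ) (hr : ∀ x, (g x).re ≤ r) :
    (M.m g).re ≤ r := by
  obtain ⟨C, hC⟩ := hg
  set gre : G → ℂ := fun x => ((g x).re : ℝ)
  set gim : G → ℂ := fun x => ((g x).im : ℝ)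
  have hgre : Bdd gre := ⟨C, fun x => by
    simpa [gre, Complex.norm_real] using (Complex.abs_re_le_norm (g x)).trans (hC x)⟩
  have hgim : Bdd gim := ⟨C, fun x => by
    simpa [gim, Complex.norm_real] using (Complex.abs_im_le_norm (g x)).trans (hC x)⟩
  have hsplit : M.m g = M.m gre + Complex.I * M.m gim := by
    have : g = fun x => gre x + Complex.I * gim x := by
      funext x
      simp [gre, gim, Complex.ext_iff]
    rw [this, M.add gre (fun x => Complex.I * gim x) hgre (hgim.mul_left Complex.I),
      M.smul Complex.I gim hgim]
  have hre_real : (M.m gre).im = 0 := M.real gre hgre (fun x => by simp [gre])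
  have him_real : (M.m gim).im = 0 := M.real gim hgim (fun x => by simp [gim])
  have hre_eq : (M.m g).re = (M.m gre).re := by
    rw [hsplit]; simp [him_real]
  have hpos : 0 ≤ (M.m (fun x => (r : ℂ) + (-1 : ℂ) * gre x)).re := by
    refine M.pos _ ((Bdd.const (r : ℂ)).add (hgre.mul_left _)) fun x => ?_
    constructor
    · simp [gre]
    · simp only [gre]
      push_cast
      simp only [Complex.add_re, Complex.ofReal_re]
      have := hr x
      simp [Complex.ext_iff]
      linarith [hr x]
  rw [M.add _ _ (Bdd.const _) (hgre.mul_left _), m_const, M.smul _ _ hgre] at hpos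
  simp only [Complex.add_re, Complex.ofReal_re, neg_one_mul, Complex.neg_re] at hpos
  linarith [hre_eq ▸ hpos, hre_eq]

end MeanAux

namespace MeanAux

open Finset in
/-- Simultaneous approximation of the mean of finitely many bounded functions by
convex combinations of point evaluations, via Hahn–Banach separation. -/
lemma mean_approx {G : Type*} [Nonempty G] (M : MeanC G) {ι : Type*} [Fintype ι]
    (f : ι → G → ℂ) (hf : ∀ j, Bdd (f j)) {ε : ℝ} (hε : 0 < ε) :
    ∃ (κ : Type) (t : Finset κ) (w : κ → ℝ) (z : κ → G),
      (∀ i ∈ t, 0 ≤ w i) ∧ (∑ i ∈ t, w i = 1) ∧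
      ∀ j, ‖(∑ i ∈ t, (w i : ℂ) * f j (z i)) - M.m (f j)‖ < ε := by
  classical
  set Φ : G → (ι → ℂ) := fun x j => f j x with hΦ
  set p : ι → ℂ := fun j => M.m (f j) with hp
  have hpD : p ∈ closure (convexHull ℝ (Set.range Φ)) := by
    by_contra hpc
    obtain ⟨L, u, hLs, hLp⟩ := geometric_hahn_banach_closed_point
      ((convex_convexHull ℝ _).closure) isClosed_closure hpc
    set c : ι → ℂ := fun j =>
      (L (Pi.single j 1) : ℂ) - (L (Pi.single j Complex.I) : ℂ) * Complex.I with hc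
    have hL_single : ∀ (j : ι) (v : ℂ), L (Pi.single j v) = (c j * v).re := by
      intro j v
      have hv : Pi.single j v = v.re • (Pi.single j (1 : ℂ) : ι → ℂ) + v.im • (Pi.single j Complex.I : ι → ℂ) := by
        rw [← Pi.single_smul, ← Pi.single_smul, ← Pi.single_add]
        congr 1
        simp [Complex.real_smul, Complex.ext_iff]
      rw [hv, map_add, map_smul, map_smul]
      simp [hc, Complex.mul_re, smul_eq_mul]
      ring
    have hL_eq : ∀ z : ι → ℂ, L z = (∑ j, c j * z j).re := by
      intro z
      conv_lhs => rw [← Finset.univ_sum_single z]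
      rw [map_sum, Complex.re_sum]
      exact Finset.sum_congr rfl fun j _ => hL_single j (z j)
    set g : G → ℂ := fun x => ∑ j, c j * f j x with hg
    have hgB : Bdd g := Bdd.sum _ _ fun j => (hf j).mul_left (c j)
    have hmg : M.m g = ∑ j, c j * M.m (f j) := by
      rw [hg, m_sum M _ _ (fun j => (hf j).mul_left (c j))]
      exact Finset.sum_congr rfl fun j _ => M.smul (c j) (f j) (hf j)
    have hub : ∀ x, (g x).re ≤ u := by
      intro x
      have := hLs (Φ x) (subset_closure (subset_convexHull ℝ _ (Set.mem_range_self x)))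
      rw [hL_eq (Φ x)] at this
      exact le_of_lt this
    have h1 : (M.m g).re ≤ u := m_re_le M g hgB u hub
    have h2 : L p = (M.m g).re := by
      rw [hL_eq p, hmg]
    rw [h2] at hLp
    linarith
  obtain ⟨b, hb, hbd⟩ := Metric.mem_closure_iff.mp hpD ε hε
  rw [_root_.convexHull_eq] at hb
  obtain ⟨κ, t, w, z', hw0, hw1, hz', hcm⟩ := hb
  set z : κ → G := fun i => if h : i ∈ t then (hz' i h).choose else Classical.arbitrary G with hzd
  have hΦz : ∀ i ∈ t, Φ (z i) = z' i := by
    intro i hi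
    simp only [hzd, dif_pos hi]
    exact (hz' i hi).choose_spec
  refine ⟨κ, t, w, z, hw0, hw1, fun j => ?_⟩
  have hbj : b j = ∑ i ∈ t, (w i : ℂ) * f j (z i) := by
    rw [← hcm, Finset.centerMass_eq_of_sum_1 _ _ hw1]
    rw [Finset.sum_apply]
    refine Finset.sum_congr rfl fun i hi => ?_
    rw [Pi.smul_apply, ← hΦz i hi]
    simp [Complex.real_smul, hΦ]
  rw [← hbj]
  have := dist_le_pi_dist p b j
  rw [dist_eq_norm] at this
  calc ‖b j - M.m (f j)‖ = ‖p j - b j‖ := by rw [norm_sub_rev]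
    _ ≤ dist p b := this
    _ < ε := hbd

end MeanAux


namespace MeanAux

variable {H : Type*} [NormedAddCommGroup H] [InnerProductSpace ℂ H] [CompleteSpace H]

lemma N_zero (𝒩 : UnitarilyInvariantSeminorm H) : 𝒩.N 0 = 0 := by
  have := 𝒩.smul 0 0
  simpa using this

lemma N_sum (𝒩 : UnitarilyInvariantSeminorm H) {κ : Type*} (t : Finset κ)
    (g : κ → (H →L[ℂ] H)) : 𝒩.N (∑ i ∈ t, g i) ≤ ∑ i ∈ t, 𝒩.N (g i) := by
  classical
  induction t using Finset.induction_on with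
  | empty => simp [N_zero]
  | @insert a s h ih =>
      rw [Finset.sum_insert h, Finset.sum_insert h]
      exact (𝒩.add_le _ _).trans (by linarith)

end MeanAux


open scoped InnerProductSpace in
/-- If the balls of a unitarily invariant seminorm `N` are closed in the weak operator
topology, then `N` of the mean of a uniformly bounded family `φ : G → B(H)` (defined
weakly via a mean `m`) is at most the mean of `x ↦ N (φ x)`. -/
theorem uiSeminorm_mean_le
    {G : Type*} [Group G] [Countable G] (M : MeanC G)
    {H : Type*} [NormedAddCommGroup H] [InnerProductSpace ℂ H] [CompleteSpace H]
    (𝒩 : UnitarilyInvariantSeminorm H)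
    (hclosed : ∀ c : ℝ, 0 ≤ c →
      IsClosed {T : H →WOT[ℂ] H | 𝒩.N (ContinuousLinearMapWOT.toCLM T) ≤ c})
    (φ : G → (H →L[ℂ] H))
    (hop : ∃ C, ∀ x : G, ‖φ x‖ ≤ C)
    (hN : ∃ C, ∀ x : G, 𝒩.N (φ x) ≤ C)
    (A : H →L[ℂ] H)
    (hA : ∀ ξ η : H, ⟪η, A ξ⟫_ℂ = M.m (fun x => ⟪η, φ x ξ⟫_ℂ)) :
    𝒩.N A ≤ (M.m (fun x => (𝒩.N (φ x) : ℂ))).re := by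
  classical
  open MeanAux in
  have hGne : Nonempty G := ⟨1⟩
  obtain ⟨Cop, hCop⟩ := hop
  obtain ⟨CN, hCN⟩ := hN
  set fN : G → ℂ := fun x => ((𝒩.N (φ x) : ℝ) : ℂ) with hfN
  have hfNB : MeanAux.Bdd fN := ⟨CN, fun x => by
    simp only [hfN, Complex.norm_real, Real.norm_eq_abs, abs_of_nonneg (𝒩.nonneg _)]
    exact hCN x⟩
  set c : ℝ := (M.m fN).re with hcdef
  have hc0 : 0 ≤ c := M.pos fN hfNB fun x => ⟨by simp [hfN], by simp [hfN, 𝒩.nonneg]⟩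
  suffices hsuff : ∀ ε : ℝ, 0 < ε → 𝒩.N A ≤ c + ε by
    by_contra hcon
    push_neg at hcon
    have := hsuff ((𝒩.N A - c) / 2) (by linarith)
    linarith
  intro ε hε
  set S : Set (H →WOT[ℂ] H) :=
    {T | 𝒩.N (ContinuousLinearMapWOT.toCLM T) ≤ c + ε} with hSdef
  have hSclosed : IsClosed S := hclosed (c + ε) (by linarith)
  have hmem : ContinuousLinearMapWOT.ofCLM A ∈ closure S := by
    rw [mem_closure_iff_nhds]
    intro U hU
    rw [ContinuousLinearMapWOT.isInducing_inducingFn.nhds_eq_comap, Filter.mem_comap] at hU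
    obtain ⟨V, hV, hVU⟩ := hU
    rw [nhds_pi, Filter.mem_pi] at hV
    obtain ⟨I, hIfin, tt, htt, hsub⟩ := hV
    have hδ : ∀ i, ∃ δ > 0, Metric.ball
        (ContinuousLinearMapWOT.inducingFn (RingHom.id ℂ) H H (ContinuousLinearMapWOT.ofCLM A) i) δ
        ⊆ tt i := fun i => Metric.mem_nhds_iff.mp (htt i)
    choose δ hδpos hδball using hδ
    set s : Finset (H × (H →L[ℂ] ℂ)) := hIfin.toFinset with hsdef
    obtain ⟨εm, hεm0, hεmε, hεmδ⟩ : ∃ εm, 0 < εm ∧ εm ≤ ε ∧ ∀ i ∈ s, εm ≤ δ i := by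
      rcases s.eq_empty_or_nonempty with h | h
      · exact ⟨ε, hε, le_rfl, by simp [h]⟩
      · refine ⟨min ε (s.inf' h δ), lt_min hε ?_, min_le_left _ _, fun i hi =>
          (min_le_right _ _).trans (Finset.inf'_le δ hi)⟩
        rw [Finset.lt_inf'_iff]
        exact fun i _ => hδpos i
    set η : (H × (H →L[ℂ] ℂ)) → H := fun i => (InnerProductSpace.toDual ℂ H).symm i.2 with hηdef
    set fam : Option {i // i ∈ s} → G → ℂ := fun j => match j with
      | none => fN
      | some i => fun x => ⟪η i.1, φ x i.1.1⟫_ℂ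
      with hfamdef
    have hfamB : ∀ j, MeanAux.Bdd (fam j) := by
      rintro (_ | i)
      · exact hfNB
      · refine ⟨‖η i.1‖ * (Cop * ‖i.1.1‖), fun x => ?_⟩
        refine (norm_inner_le_norm _ _).trans ?_
        refine mul_le_mul_of_nonneg_left ?_ (norm_nonneg _)
        exact ((φ x).le_opNorm _).trans
          (mul_le_mul_of_nonneg_right (hCop x) (norm_nonneg _))
    obtain ⟨κ, t, w, z, hw0, hw1, happrox⟩ := MeanAux.mean_approx M fam hfamB hεm0
    set T : H →L[ℂ] H := ∑ i ∈ t, (w i : ℂ) • φ (z i) with hTdef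
    have hNT : 𝒩.N T ≤ c + ε := by
      have h1 : 𝒩.N T ≤ ∑ i ∈ t, w i * 𝒩.N (φ (z i)) := by
        refine (MeanAux.N_sum 𝒩 t _).trans ?_
        refine le_of_eq (Finset.sum_congr rfl fun i hi => ?_)
        rw [𝒩.smul]
        simp [abs_of_nonneg (hw0 i hi)]
      have h2 : (∑ i ∈ t, (w i : ℂ) * fam none (z i)) =
          ((∑ i ∈ t, w i * 𝒩.N (φ (z i)) : ℝ) : ℂ) := by
        simp only [hfamdef, hfN]
        push_cast
        rfl
      have h3 := happrox none
      rw [h2] at h3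
      have h4 : |(∑ i ∈ t, w i * 𝒩.N (φ (z i))) - c| ≤
          ‖((∑ i ∈ t, w i * 𝒩.N (φ (z i)) : ℝ) : ℂ) - M.m (fam none)‖ := by
        have := Complex.abs_re_le_norm
          (((∑ i ∈ t, w i * 𝒩.N (φ (z i)) : ℝ) : ℂ) - M.m (fam none))
        simpa [hcdef, hfamdef] using this
      have h5 : (∑ i ∈ t, w i * 𝒩.N (φ (z i))) ≤ c + εm := by
        have := h4.trans_lt h3
        have := abs_lt.mp this
        linarith [this.2]
      linarith
    refine ⟨ContinuousLinearMapWOT.ofCLM T, hVU ?_, by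
      simpa [hSdef, S, LinearEquiv.symm_apply_apply, ContinuousLinearMapWOT.toCLM_ofCLM] using hNT⟩
    refine Set.mem_preimage.mpr (hsub ?_)
    rw [Set.mem_pi]
    intro i hi
    have hi' : i ∈ s := hIfin.mem_toFinset.mpr hi
    apply hδball i
    rw [Metric.mem_ball, dist_eq_norm]
    have hTi : ContinuousLinearMapWOT.inducingFn (RingHom.id ℂ) H H (ContinuousLinearMapWOT.ofCLM T) i
        = ∑ i' ∈ t, (w i' : ℂ) * fam (some ⟨i, hi'⟩) (z i') := by
      show i.2 (T i.1) = _
      rw [hTdef]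
      simp only [ContinuousLinearMap.sum_apply, ContinuousLinearMap.coe_smul', Pi.smul_apply,
        map_sum, map_smul, smul_eq_mul]
      refine Finset.sum_congr rfl fun i' _ => ?_
      congr 1
      simp only [hfamdef, hηdef]
      rw [InnerProductSpace.toDual_symm_apply]
    have hAi : ContinuousLinearMapWOT.inducingFn (RingHom.id ℂ) H H (ContinuousLinearMapWOT.ofCLM A) i
        = M.m (fam (some ⟨i, hi'⟩)) := by
      show i.2 (A i.1) = _
      have : i.2 (A i.1) = ⟪η i, A i.1⟫_ℂ := by
        rw [hηdef, InnerProductSpace.toDual_symm_apply]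
      rw [this, hA]
    rw [hTi, hAi]
    exact (happrox (some ⟨i, hi'⟩)).trans_le (hεmδ i hi')
  have := hSclosed.closure_eq ▸ hmem
  simpa [hSdef, S, LinearEquiv.symm_apply_apply, ContinuousLinearMapWOT.toCLM_ofCLM] using this
end

section
/- Let G be a (countable, discrete) group, let m be a symmetric bi-invariant mean on the bounded complex-valued functions on G, let n ≥ 1, and let φ : G → M_n(ℂ) satisfy ‖φ(x)‖_op ≤ 1 for all x ∈ G. Then the iterated mean m_x(m_y(m_z(tr(φ(x) φ(y)* φ(yz) φ(xz)*)))) is a nonnegative real number (its imaginary part is 0 and its real part is ≥ 0). -/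
set_option linter.unusedSectionVars false
set_option linter.unusedVariables false
set_option linter.dupNamespace false
set_option maxHeartbeats 1000000
set_option synthInstance.maxHeartbeats 400000

open Matrix ComplexConjugate

/-- A symmetric bi-invariant mean on the bounded complex-valued functions on `G`:
a linear functional `m` with `m 1 = 1`, `m f` real for real-valued `f`, `m f ≥ 0` for
pointwise nonnegative (real-valued) `f`, invariance under left and right translations,
and invariance under inversion. -/
structure SymmetricBiInvariantMean (G : Type*) [Group G] where
  m : (G → ℂ) → ℂ
  add : ∀ f g : G → ℂ, (∃ C, ∀ x, ‖f x‖ ≤ C) → (∃ C, ∀ x, ‖g x‖ ≤ C) →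
    m (fun x => f x + g x) = m f + m g
  smul : ∀ (c : ℂ) (f : G → ℂ), (∃ C, ∀ x, ‖f x‖ ≤ C) →
    m (fun x => c * f x) = c * m f
  one : m (fun _ => 1) = 1
  real : ∀ f : G → ℂ, (∃ C, ∀ x, ‖f x‖ ≤ C) → (∀ x, (f x).im = 0) → (m f).im = 0
  pos : ∀ f : G → ℂ, (∃ C, ∀ x, ‖f x‖ ≤ C) → (∀ x, (f x).im = 0 ∧ 0 ≤ (f x).re) →
    0 ≤ (m f).re
  left_inv : ∀ (g : G) (f : G → ℂ), (∃ C, ∀ x, ‖f x‖ ≤ C) →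
    m (fun x => f (g * x)) = m f
  right_inv : ∀ (g : G) (f : G → ℂ), (∃ C, ∀ x, ‖f x‖ ≤ C) →
    m (fun x => f (x * g)) = m f
  symm : ∀ f : G → ℂ, (∃ C, ∀ x, ‖f x‖ ≤ C) → m (fun x => f x⁻¹) = m f

/-- The operator norm of a complex `n × n` matrix, viewed as an operator
`ℓ²(Fin n) → ℓ²(Fin n)`. -/
noncomputable def matOpNorm {n : ℕ} (A : Matrix (Fin n) (Fin n) ℂ) : ℝ :=
  ‖Matrix.toEuclideanCLM (𝕜 := ℂ) A‖

namespace IterAux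

lemma norm_entry_le {n : ℕ} (A : Matrix (Fin n) (Fin n) ℂ) (i j : Fin n) :
    ‖A i j‖ ≤ matOpNorm A := by
  set T := Matrix.toEuclideanCLM (𝕜 := ℂ) A with hT
  set u : EuclideanSpace ℂ (Fin n) := EuclideanSpace.single j (1:ℂ) with hu
  have hv : ∀ k, (T u) k = A k j := by
    intro k
    have : T u = (WithLp.equiv _ _).symm (Matrix.toLin' A (Pi.single j 1)) := by
      rw [hu, EuclideanSpace.single, hT]
      exact Matrix.toEuclideanCLM_toLp A _
    rw [this]
    simp [Matrix.toLin'_apply, Matrix.mulVec_single]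
  have h1 : ‖A i j‖ ≤ ‖T u‖ := by
    have := EuclideanSpace.norm_eq (T u)
    rw [this]
    have : ‖A i j‖ = Real.sqrt (‖A i j‖^2) := (Real.sqrt_sq (norm_nonneg _)).symm
    rw [this]
    apply Real.sqrt_le_sqrt
    calc ‖A i j‖^2 = ‖(T u) i‖^2 := by rw [hv]
    _ ≤ ∑ k, ‖(T u) k‖^2 := Finset.single_le_sum (f := fun k => ‖(T u) k‖^2) (fun k _ => sq_nonneg _) (Finset.mem_univ i)
  refine h1.trans ?_
  calc ‖T u‖ ≤ ‖T‖ * ‖u‖ := ContinuousLinearMap.le_opNorm T u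
  _ = matOpNorm A := by rw [hu, EuclideanSpace.norm_single]; simp [matOpNorm, hT]


lemma real_opt (r δ P : ℝ) (hr : 0 ≤ r) (hP : 0 ≤ P)
    (h : ∀ t : ℝ, 2*t*r ≤ δ + t^2*P) : r^2 ≤ δ * P := by
  have hδ : 0 ≤ δ := by have := h 0; simpa using this
  rcases eq_or_lt_of_le hP with hP0 | hP0
  · -- P = 0 : show r = 0
    have hr0 : r = 0 := by
      by_contra hr0
      have hrpos : 0 < r := lt_of_le_of_ne hr (Ne.symm hr0)
      have := h ((δ + 1) / (2*r))
      rw [← hP0] at this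
      have h2 : 2 * ((δ+1)/(2*r)) * r = δ + 1 := by field_simp
      rw [h2] at this
      simp at this
      linarith
    rw [hr0]; nlinarith
  · have := h (r / P)
    have h2 : 2*(r/P)*r = 2*r^2/P := by ring
    have h3 : (r/P)^2*P = r^2/P := by field_simp
    rw [h2, h3] at this
    have h4 : 2*r^2/P - r^2/P ≤ δ := by linarith
    have h5 : 2*r^2/P - r^2/P = r^2/P := by ring
    rw [h5] at h4
    calc r^2 = (r^2/P)*P := by field_simp
    _ ≤ δ * P := mul_le_mul_of_nonneg_right h4 hP

lemma abs_le_of_key (w : ℂ) (δ P : ℝ) (hP : 0 ≤ P)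
    (h : ∀ c : ℂ, ‖c‖ = 1 → ∀ t : ℝ, 2*t*((c*w).re) ≤ δ + t^2*P) :
    ‖w‖^2 ≤ δ * P := by
  rcases eq_or_ne w 0 with hw | hw
  · have hδ : 0 ≤ δ := by have := h 1 (by simp) 0; simpa using this
    rw [hw]; simp; positivity
  · set c : ℂ := (‖w‖ : ℂ) / w with hc
    have hc1 : ‖c‖ = 1 := by
      rw [hc, norm_div, Complex.norm_real, norm_norm, div_self (by simpa using hw)]
    have hcm : c * w = (‖w‖ : ℂ) := by rw [hc, div_mul_cancel₀]; exact hw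
    have h2 := h c hc1
    rw [hcm] at h2
    exact real_opt ‖w‖ δ P (norm_nonneg w) hP (by simpa using h2)

lemma nonneg_of_eta (x K : ℝ) (hK : 0 < K)
    (h : ∀ η : ℝ, 0 < η → η ≤ 1 → -(K*η) ≤ x) : 0 ≤ x := by
  by_contra hx
  push_neg at hx
  set η : ℝ := min 1 (-x/(2*K)) with hη
  have hη1 : η ≤ 1 := min_le_left _ _
  have hη0 : 0 < η := lt_min one_pos (div_pos (by linarith) (by linarith))
  have h1 := h η hη0 hη1
  have h2 : K * η ≤ K * (-x/(2*K)) := mul_le_mul_of_nonneg_left (min_le_right _ _) hK.le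
  have h3 : K * (-x/(2*K)) = -x/2 := by field_simp
  nlinarith

lemma zero_of_eta (x K : ℝ) (hK : 0 < K)
    (h : ∀ η : ℝ, 0 < η → η ≤ 1 → |x| ≤ K*η) : x = 0 := by
  have h1 : 0 ≤ -|x| + 0 := by
    have := nonneg_of_eta (-|x|) K hK (fun η h0 h1 => by have := h η h0 h1; linarith)
    linarith
  have := abs_nonneg x
  have : |x| = 0 := le_antisymm (by linarith) (abs_nonneg x)
  exact abs_eq_zero.mp this


variable {G : Type*} [Group G] (M : SymmetricBiInvariantMean G)

/-- boundedness -/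
def Bc (f : G → ℂ) : Prop := ∃ C, ∀ x, ‖f x‖ ≤ C

lemma bc_of (f : G → ℂ) (C : ℝ) (h : ∀ x, ‖f x‖ ≤ C) : Bc f := ⟨C, h⟩

lemma Bc.add {f g : G → ℂ} (hf : Bc f) (hg : Bc g) : Bc (fun x => f x + g x) := by
  obtain ⟨C, hC⟩ := hf; obtain ⟨D, hD⟩ := hg
  exact ⟨C + D, fun x => (norm_add_le _ _).trans (add_le_add (hC x) (hD x))⟩

lemma Bc.const (c : ℂ) : Bc (fun _ : G => c) := ⟨‖c‖, fun _ => le_rfl⟩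

lemma Bc.mul_const {f : G → ℂ} (c : ℂ) (hf : Bc f) : Bc (fun x => c * f x) := by
  obtain ⟨C, hC⟩ := hf
  exact ⟨‖c‖ * C, fun x => by rw [norm_mul]; exact mul_le_mul_of_nonneg_left (hC x) (norm_nonneg c)⟩

lemma Bc.re {f : G → ℂ} (hf : Bc f) : Bc (fun x => ((f x).re : ℂ)) := by
  obtain ⟨C, hC⟩ := hf
  exact ⟨C, fun x => by rw [Complex.norm_real]; exact (Complex.abs_re_le_norm _).trans (hC x)⟩

lemma Bc.im {f : G → ℂ} (hf : Bc f) : Bc (fun x => ((f x).im : ℂ)) := by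
  obtain ⟨C, hC⟩ := hf
  exact ⟨C, fun x => by rw [Complex.norm_real]; exact (Complex.abs_im_le_norm _).trans (hC x)⟩

lemma Bc.sub {f g : G → ℂ} (hf : Bc f) (hg : Bc g) : Bc (fun x => f x - g x) := by
  have := hf.add (hg.mul_const (-1))
  simpa [sub_eq_add_neg] using this

lemma Bc.conj {f : G → ℂ} (hf : Bc f) : Bc (fun x => conj (f x)) := by
  obtain ⟨C, hC⟩ := hf
  exact ⟨C, fun x => by rw [RCLike.norm_conj]; exact hC x⟩

lemma m_const (c : ℂ) : M.m (fun _ => c) = c := by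
  have h := M.smul c (fun _ => 1) ⟨1, fun x => by simp⟩
  simpa [M.one] using h

lemma m_zero : M.m (fun _ => 0) = 0 := m_const M 0

lemma m_sub (f g : G → ℂ) (hf : Bc f) (hg : Bc g) :
    M.m (fun x => f x - g x) = M.m f - M.m g := by
  have h1 := M.add f (fun x => (-1) * g x) hf (hg.mul_const (-1))
  have h2 := M.smul (-1) g hg
  have : (fun x => f x - g x) = (fun x => f x + (-1) * g x) := by funext x; ring
  rw [this, h1, h2]; ring

lemma m_split (f : G → ℂ) (hf : Bc f) :
    M.m f = M.m (fun x => ((f x).re : ℂ)) + Complex.I * M.m (fun x => ((f x).im : ℂ)) := by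
  have h1 : f = fun x => ((f x).re : ℂ) + Complex.I * ((f x).im : ℂ) := by
    funext x; rw [mul_comm, Complex.re_add_im]
  have h2 := M.add (fun x => ((f x).re : ℂ)) (fun x => Complex.I * ((f x).im : ℂ))
    hf.re ((hf.im).mul_const Complex.I)
  have h3 := M.smul Complex.I (fun x => ((f x).im : ℂ)) hf.im
  calc M.m f = M.m (fun x => ((f x).re : ℂ) + Complex.I * ((f x).im : ℂ)) := by rw [← h1]
  _ = _ := by rw [h2, h3]

lemma m_re_im (f : G → ℂ) (hf : Bc f) :
    (M.m f).re = (M.m (fun x => ((f x).re : ℂ))).re ∧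
    (M.m f).im = (M.m (fun x => ((f x).im : ℂ))).re := by
  have ha := M.real _ hf.re (fun x => by simp)
  have hb := M.real _ hf.im (fun x => by simp)
  rw [m_split M f hf]
  constructor
  · simp [Complex.add_re, Complex.mul_re, hb]
  · simp [Complex.add_im, Complex.mul_im, ha]

lemma m_conj (f : G → ℂ) (hf : Bc f) :
    M.m (fun x => conj (f x)) = conj (M.m f) := by
  have h1 : (fun x => conj (f x)) = fun x => ((f x).re : ℂ) + (-Complex.I) * ((f x).im : ℂ) := by
    funext x
    rw [Complex.ext_iff]; simp
  have h2 := M.add (fun x => ((f x).re : ℂ)) (fun x => (-Complex.I) * ((f x).im : ℂ))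
    hf.re ((hf.im).mul_const (-Complex.I))
  have h3 := M.smul (-Complex.I) (fun x => ((f x).im : ℂ)) hf.im
  have ha := M.real _ hf.re (fun x => by simp)
  have hb := M.real _ hf.im (fun x => by simp)
  rw [h1, h2, h3, m_split M f hf]
  rw [Complex.ext_iff]
  constructor
  · simp [Complex.add_re, Complex.mul_re, ha, hb]
  · simp [Complex.add_im, Complex.mul_im, ha, hb]

lemma m_re_le (f : G → ℂ) (C : ℝ) (hf : ∀ x, ‖f x‖ ≤ C) : (M.m f).re ≤ C := by
  have hb : Bc f := ⟨C, hf⟩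
  rw [(m_re_im M f hb).1]
  set g : G → ℂ := fun x => ((f x).re : ℂ) with hg
  have hgb : Bc g := hb.re
  have hpos := M.pos (fun x => (C : ℂ) - g x) ((Bc.const C).sub hgb)
    (fun x => by
      constructor
      · simp [hg]
      · simp only [Complex.sub_re, Complex.ofReal_re, hg]
        have := (Complex.re_le_norm (f x)).trans (hf x)
        simpa using this)
  rw [m_sub M _ _ (Bc.const C) hgb, m_const] at hpos
  simp only [Complex.sub_re, Complex.ofReal_re] at hpos
  linarith

lemma m_norm_le (f : G → ℂ) (C : ℝ) (hf : ∀ x, ‖f x‖ ≤ C) : ‖M.m f‖ ≤ C := by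
  have hb : Bc f := ⟨C, hf⟩
  rcases eq_or_ne (M.m f) 0 with h | h
  · rw [h, norm_zero]; exact (norm_nonneg (f 1)).trans (hf 1)
  · set c : ℂ := (‖M.m f‖ : ℂ) / (M.m f) with hc
    have hc1 : ‖c‖ = 1 := by
      rw [hc, norm_div, Complex.norm_real, norm_norm, div_self]
      simpa using h
    have hcm : c * M.m f = (‖M.m f‖ : ℂ) := by
      rw [hc, div_mul_cancel₀]; exact h
    have h2 := M.smul c f hb
    have h3 : (M.m (fun x => c * f x)).re ≤ C := by
      apply m_re_le
      intro x
      rw [norm_mul, hc1, one_mul]; exact hf x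
    rw [h2, hcm] at h3
    simpa using h3

lemma m_nonneg (f : G → ℂ) (hf : Bc f) (h : ∀ x, (f x).im = 0 ∧ 0 ≤ (f x).re) :
    (M.m f).im = 0 ∧ 0 ≤ (M.m f).re :=
  ⟨M.real f hf (fun x => (h x).1), M.pos f hf h⟩


variable {n : ℕ}


lemma trace_eq_sum (A B : Matrix (Fin n) (Fin n) ℂ) :
    (Aᴴ * B).trace = ∑ j, ∑ k, conj (A k j) * B k j := by
  simp [Matrix.trace, Matrix.diag, Matrix.mul_apply, Matrix.conjTranspose_apply]

lemma trace_bound (A B : Matrix (Fin n) (Fin n) ℂ) (a b : ℝ)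
    (ha : ∀ i j, ‖A i j‖ ≤ a) (hb : ∀ i j, ‖B i j‖ ≤ b)
    (ha0 : 0 ≤ a) (hb0 : 0 ≤ b) :
    ‖(Aᴴ * B).trace‖ ≤ (n:ℝ)^2 * (a * b) := by
  rw [trace_eq_sum]
  calc ‖∑ j, ∑ k, conj (A k j) * B k j‖ ≤ ∑ j, ‖∑ k : Fin n, conj (A k j) * B k j‖ :=
        norm_sum_le _ _
  _ ≤ ∑ j : Fin n, ∑ k : Fin n, ‖conj (A k j) * B k j‖ :=
        Finset.sum_le_sum (fun j _ => norm_sum_le _ _)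
  _ ≤ ∑ j : Fin n, ∑ k : Fin n, a * b := by
        apply Finset.sum_le_sum; intro j _
        apply Finset.sum_le_sum; intro k _
        rw [norm_mul, RCLike.norm_conj]
        exact mul_le_mul (ha k j) (hb k j) (norm_nonneg _) ha0
  _ = (n:ℝ)^2 * (a * b) := by simp [Finset.sum_const]; ring

lemma trace_self (A : Matrix (Fin n) (Fin n) ℂ) :
    (Aᴴ * A).trace = ((∑ j, ∑ k, ‖A k j‖^2 : ℝ) : ℂ) := by
  rw [trace_eq_sum]
  push_cast
  apply Finset.sum_congr rfl; intro j _
  apply Finset.sum_congr rfl; intro k _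
  rw [RCLike.conj_mul]
  norm_cast

lemma trace_self_im_re (A : Matrix (Fin n) (Fin n) ℂ) :
    ((Aᴴ * A).trace).im = 0 ∧ 0 ≤ ((Aᴴ * A).trace).re := by
  rw [trace_self]
  constructor
  · rw [Complex.ofReal_im]
  · rw [Complex.ofReal_re]
    positivity

lemma mul_entry_bound (A B : Matrix (Fin n) (Fin n) ℂ) (a b : ℝ)
    (ha : ∀ i j, ‖A i j‖ ≤ a) (hb : ∀ i j, ‖B i j‖ ≤ b)
    (ha0 : 0 ≤ a) : ∀ i j, ‖(A * B) i j‖ ≤ (n:ℝ) * (a * b) := by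
  intro i j
  rw [Matrix.mul_apply]
  calc ‖∑ k, A i k * B k j‖ ≤ ∑ k : Fin n, ‖A i k * B k j‖ := norm_sum_le _ _
  _ ≤ ∑ k : Fin n, a * b := by
      apply Finset.sum_le_sum; intro k _
      rw [norm_mul]
      exact mul_le_mul (ha i k) (hb k j) (norm_nonneg _) ha0
  _ = (n:ℝ) * (a * b) := by simp [Finset.sum_const]


/-- entrywise-bounded matrix-valued functions -/
def MB (F : G → Matrix (Fin n) (Fin n) ℂ) : Prop := ∃ C, 0 ≤ C ∧ ∀ z i j, ‖F z i j‖ ≤ C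

lemma MB.add {F K : G → Matrix (Fin n) (Fin n) ℂ} (hF : MB F) (hK : MB K) :
    MB (fun z => F z + K z) := by
  obtain ⟨C, hC0, hC⟩ := hF; obtain ⟨D, hD0, hD⟩ := hK
  exact ⟨C + D, by linarith, fun z i j => by
    simpa using (norm_add_le _ _).trans (add_le_add (hC z i j) (hD z i j))⟩

lemma MB.smul {K : G → Matrix (Fin n) (Fin n) ℂ} (a : ℂ) (hK : MB K) :
    MB (fun z => a • K z) := by
  obtain ⟨D, hD0, hD⟩ := hK
  refine ⟨‖a‖ * D, by positivity, fun z i j => ?_⟩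
  simp only [Matrix.smul_apply, smul_eq_mul, norm_mul]
  exact mul_le_mul_of_nonneg_left (hD z i j) (norm_nonneg a)

lemma MB.zero : MB (fun _ : G => (0 : Matrix (Fin n) (Fin n) ℂ)) :=
  ⟨0, le_rfl, fun z i j => by simp⟩

noncomputable def ip (M : SymmetricBiInvariantMean G) (F K : G → Matrix (Fin n) (Fin n) ℂ) : ℂ :=
  M.m (fun z => ((F z)ᴴ * K z).trace)

lemma bc_trace {F K : G → Matrix (Fin n) (Fin n) ℂ} (hF : MB F) (hK : MB K) :
    Bc (fun z => ((F z)ᴴ * K z).trace) := by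
  obtain ⟨C, hC0, hC⟩ := hF; obtain ⟨D, hD0, hD⟩ := hK
  exact ⟨(n:ℝ)^2 * (C * D), fun z => trace_bound _ _ C D (hC z) (hD z) hC0 hD0⟩

lemma ip_norm_le (M : SymmetricBiInvariantMean G) {F K : G → Matrix (Fin n) (Fin n) ℂ}
    {C D : ℝ} (hC0 : 0 ≤ C) (hD0 : 0 ≤ D)
    (hF : ∀ z i j, ‖F z i j‖ ≤ C) (hK : ∀ z i j, ‖K z i j‖ ≤ D) :
    ‖ip M F K‖ ≤ (n:ℝ)^2 * (C * D) :=
  m_norm_le M _ _ (fun z => trace_bound _ _ C D (hF z) (hK z) hC0 hD0)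

lemma ip_self (M : SymmetricBiInvariantMean G) {K : G → Matrix (Fin n) (Fin n) ℂ}
    (hK : MB K) : (ip M K K).im = 0 ∧ 0 ≤ (ip M K K).re :=
  m_nonneg M _ (bc_trace hK hK) (fun z => trace_self_im_re (K z))

lemma ip_conj_symm (M : SymmetricBiInvariantMean G) {F K : G → Matrix (Fin n) (Fin n) ℂ}
    (hF : MB F) (hK : MB K) : ip M K F = conj (ip M F K) := by
  have h1 : (fun z => ((K z)ᴴ * F z).trace) = fun z => conj (((F z)ᴴ * K z).trace) := by
    funext z
    calc ((K z)ᴴ * F z).trace = (((F z)ᴴ * K z)ᴴ).trace := by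
          rw [Matrix.conjTranspose_mul, Matrix.conjTranspose_conjTranspose]
    _ = conj (((F z)ᴴ * K z).trace) := Matrix.trace_conjTranspose _
  rw [ip, h1, m_conj M _ (bc_trace hF hK)]
  rfl

lemma ip_add_right (M : SymmetricBiInvariantMean G) {F K L : G → Matrix (Fin n) (Fin n) ℂ}
    (hF : MB F) (hK : MB K) (hL : MB L) :
    ip M F (fun z => K z + L z) = ip M F K + ip M F L := by
  have h1 : (fun z => ((F z)ᴴ * (K z + L z)).trace)
      = fun z => ((F z)ᴴ * K z).trace + ((F z)ᴴ * L z).trace := by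
    funext z; rw [Matrix.mul_add, Matrix.trace_add]
  rw [ip, h1, M.add _ _ (bc_trace hF hK) (bc_trace hF hL)]
  rfl

lemma ip_smul_right (M : SymmetricBiInvariantMean G) {F K : G → Matrix (Fin n) (Fin n) ℂ}
    (a : ℂ) (hF : MB F) (hK : MB K) :
    ip M F (fun z => a • K z) = a * ip M F K := by
  have h1 : (fun z => ((F z)ᴴ * (a • K z)).trace)
      = fun z => a * ((F z)ᴴ * K z).trace := by
    funext z; rw [Matrix.mul_smul, Matrix.trace_smul]; rfl
  rw [ip, h1, M.smul _ _ (bc_trace hF hK)]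
  rfl

lemma ip_add_left (M : SymmetricBiInvariantMean G) {F K L : G → Matrix (Fin n) (Fin n) ℂ}
    (hF : MB F) (hK : MB K) (hL : MB L) :
    ip M (fun z => F z + K z) L = ip M F L + ip M K L := by
  have h1 : (fun z => ((F z + K z)ᴴ * L z).trace)
      = fun z => ((F z)ᴴ * L z).trace + ((K z)ᴴ * L z).trace := by
    funext z; rw [Matrix.conjTranspose_add, Matrix.add_mul, Matrix.trace_add]
  rw [ip, h1, M.add _ _ (bc_trace hF hL) (bc_trace hK hL)]
  rfl

lemma ip_smul_left (M : SymmetricBiInvariantMean G) {F K : G → Matrix (Fin n) (Fin n) ℂ}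
    (a : ℂ) (hF : MB F) (hK : MB K) :
    ip M (fun z => a • F z) K = conj a * ip M F K := by
  have h1 : (fun z => ((a • F z)ᴴ * K z).trace)
      = fun z => conj a * ((F z)ᴴ * K z).trace := by
    funext z
    rw [Matrix.conjTranspose_smul, Matrix.smul_mul, Matrix.trace_smul]
    rfl
  rw [ip, h1, M.smul _ _ (bc_trace hF hK)]
  rfl

lemma ip_expand_re (M : SymmetricBiInvariantMean G) {F K : G → Matrix (Fin n) (Fin n) ℂ}
    (hF : MB F) (hK : MB K) (t : ℝ) (c : ℂ) (hc : ‖c‖ = 1) :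
    (ip M (fun z => F z + ((t:ℂ)*c) • K z) (fun z => F z + ((t:ℂ)*c) • K z)).re
      = (ip M F F).re + 2*t*((c * ip M F K).re) + t^2 * (ip M K K).re := by
  set a : ℂ := (t:ℂ)*c with ha
  have haK : MB (fun z => a • K z) := hK.smul a
  have expand : ip M (fun z => F z + a • K z) (fun z => F z + a • K z)
      = ip M F F + a * ip M F K + conj a * ip M K F + (conj a * a) * ip M K K := by
    rw [ip_add_left M hF haK (hF.add haK),
        ip_add_right M hF hF haK, ip_add_right M haK hF haK,
        ip_smul_right M a hF hK, ip_smul_left M a hK hF,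
        ip_smul_left M a hK (hK.smul a), ip_smul_right M a hK hK]
    ring
  rw [expand]
  have h1 : conj a * ip M K F = conj (a * ip M F K) := by
    rw [ip_conj_symm M hF hK, RingHom.map_mul (starRingEnd ℂ) a (ip M F K)]
  have h2 : conj a * a = ((t^2 : ℝ) : ℂ) := by
    have hcc : conj c * c = 1 := by
      rw [RCLike.conj_mul, hc]
      norm_num
    calc conj a * a = ((t:ℂ) * conj c) * ((t:ℂ) * c) := by
          rw [ha, RingHom.map_mul (starRingEnd ℂ), Complex.conj_ofReal]
    _ = (t:ℂ)^2 * (conj c * c) := by ring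
    _ = ((t^2 : ℝ) : ℂ) := by rw [hcc]; push_cast; ring
  have h3 : (a * ip M F K).re = t * ((c * ip M F K).re) := by
    rw [ha, mul_assoc, Complex.re_ofReal_mul]
  rw [h1, h2]
  simp only [Complex.add_re, Complex.conj_re, Complex.re_ofReal_mul, h3]
  ring


lemma le_of_sq_le_sq (a b : ℝ) (ha : 0 ≤ a) (hb : 0 ≤ b) (h : a^2 ≤ b^2) : a ≤ b := by
  nlinarith

noncomputable def psi (φ : G → Matrix (Fin n) (Fin n) ℂ) (x : G) : G → Matrix (Fin n) (Fin n) ℂ :=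
  fun z => (φ x)ᴴ * φ (x * z)

noncomputable def Lf (M : SymmetricBiInvariantMean G) (φ : G → Matrix (Fin n) (Fin n) ℂ)
    (F : G → Matrix (Fin n) (Fin n) ℂ) : ℂ :=
  M.m (fun t => ip M (psi φ t) F)

noncomputable def qf (M : SymmetricBiInvariantMean G) (φ : G → Matrix (Fin n) (Fin n) ℂ)
    (F : G → Matrix (Fin n) (Fin n) ℂ) : ℝ :=
  (ip M F F).re - 2 * (Lf M φ F).re

section
variable (M : SymmetricBiInvariantMean G) (φ : G → Matrix (Fin n) (Fin n) ℂ)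
  (hφ1 : ∀ x i j, ‖φ x i j‖ ≤ 1)
include hφ1

lemma psi_bound : ∀ x z i j, ‖psi φ x z i j‖ ≤ (n:ℝ) := by
  intro x z i j
  have h := mul_entry_bound (φ x)ᴴ (φ (x*z)) 1 1
    (fun i j => by rw [Matrix.conjTranspose_apply]; simpa using hφ1 x j i)
    (fun i j => hφ1 _ i j) zero_le_one i j
  simpa [psi] using h

lemma MB_psi (x : G) : MB (psi φ x) := ⟨(n:ℝ), Nat.cast_nonneg n, psi_bound φ hφ1 x⟩

lemma bc_ip_psi {F : G → Matrix (Fin n) (Fin n) ℂ} {C : ℝ} (hC0 : 0 ≤ C)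
    (hFb : ∀ z i j, ‖F z i j‖ ≤ C) :
    ∀ t, ‖ip M (psi φ t) F‖ ≤ (n:ℝ)^2 * ((n:ℝ) * C) :=
  fun t => ip_norm_le M (Nat.cast_nonneg n) hC0 (psi_bound φ hφ1 t) hFb

lemma Lf_norm_le {F : G → Matrix (Fin n) (Fin n) ℂ} {C : ℝ} (hC0 : 0 ≤ C)
    (hFb : ∀ z i j, ‖F z i j‖ ≤ C) : ‖Lf M φ F‖ ≤ (n:ℝ)^2 * ((n:ℝ) * C) :=
  m_norm_le M _ _ (bc_ip_psi M φ hφ1 hC0 hFb)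

lemma ip_psi_self_le (x : G) : (ip M (psi φ x) (psi φ x)).re ≤ (n:ℝ)^4 := by
  have h1 : |(ip M (psi φ x) (psi φ x)).re| ≤ ‖ip M (psi φ x) (psi φ x)‖ := by
    exact Complex.abs_re_le_norm _
  have h2 := ip_norm_le M (Nat.cast_nonneg n) (Nat.cast_nonneg n)
    (psi_bound φ hφ1 x) (psi_bound φ hφ1 x)
  have h3 : (n:ℝ)^2 * ((n:ℝ)*(n:ℝ)) = (n:ℝ)^4 := by ring
  have := (le_abs_self _).trans (h1.trans h2)
  linarith

lemma CS {F K : G → Matrix (Fin n) (Fin n) ℂ} (hF : MB F) (hK : MB K) :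
    ‖ip M F K‖^2 ≤ (ip M F F).re * (ip M K K).re := by
  apply abs_le_of_key _ _ _ (ip_self M hK).2
  intro c hc t
  have h1 := (ip_self M (hF.add (hK.smul (((-t:ℝ):ℂ)*c)))).2
  have h2 := ip_expand_re M hF hK (-t) c hc
  rw [h2] at h1
  have h3 : (-t)^2 = t^2 := by ring
  rw [h3] at h1
  linarith

lemma L_bound_CS {K : G → Matrix (Fin n) (Fin n) ℂ} (hK : MB K) :
    ‖Lf M φ K‖ ≤ (n:ℝ)^2 * Real.sqrt ((ip M K K).re) := by
  apply m_norm_le M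
  intro t
  apply le_of_sq_le_sq _ _ (norm_nonneg _) (by positivity)
  have h1 := CS M φ hφ1 (MB_psi φ hφ1 t) hK
  have h2 : ((n:ℝ)^2 * Real.sqrt ((ip M K K).re))^2 = (n:ℝ)^4 * (ip M K K).re := by
    rw [mul_pow, Real.sq_sqrt (ip_self M hK).2]
    ring
  rw [h2]
  have h3 := ip_psi_self_le M φ hφ1 t
  have h4 := (ip_self M hK).2
  nlinarith [(ip_self M (MB_psi φ hφ1 t)).2]

lemma q_zero : qf M φ (fun _ => (0:Matrix (Fin n) (Fin n) ℂ)) = 0 := by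
  have h1 : ip M (fun _ : G => (0:Matrix (Fin n) (Fin n) ℂ)) (fun _ => 0) = 0 := by
    have : (fun z : G => (((fun _ : G => (0:Matrix (Fin n) (Fin n) ℂ)) z)ᴴ *
        ((fun _ : G => (0:Matrix (Fin n) (Fin n) ℂ)) z)).trace) = fun _ => (0:ℂ) := by
      funext z; simp
    rw [ip, this, m_zero]
  have h2 : Lf M φ (fun _ => (0:Matrix (Fin n) (Fin n) ℂ)) = 0 := by
    have : (fun t => ip M (psi φ t) (fun _ => (0:Matrix (Fin n) (Fin n) ℂ))) = fun _ => (0:ℂ) := by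
      funext t
      have : (fun z : G => (((psi φ t) z)ᴴ * ((fun _ : G => (0:Matrix (Fin n) (Fin n) ℂ)) z)).trace)
          = fun _ => (0:ℂ) := by funext z; simp
      rw [ip, this, m_zero]
    rw [Lf, this, m_zero]
  rw [qf, h1, h2]
  simp

lemma q_lower {F : G → Matrix (Fin n) (Fin n) ℂ} (hF : MB F) : -(n:ℝ)^4 ≤ qf M φ F := by
  obtain ⟨C, hC0, hFb⟩ := hF
  set P : ℝ := (ip M F F).re with hP
  have hP0 : 0 ≤ P := (ip_self M ⟨C, hC0, hFb⟩).2
  set p : ℝ := Real.sqrt P with hp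
  have hp2 : p^2 = P := Real.sq_sqrt hP0
  have hL := L_bound_CS M φ hφ1 ⟨C, hC0, hFb⟩
  have hLre : (Lf M φ F).re ≤ (n:ℝ)^2 * p := by
    have : |(Lf M φ F).re| ≤ ‖Lf M φ F‖ := by
      exact Complex.abs_re_le_norm _
    have := (le_abs_self _).trans this
    exact this.trans hL
  have : qf M φ F = P - 2*(Lf M φ F).re := rfl
  rw [this]
  nlinarith [sq_nonneg (p - (n:ℝ)^2), Real.sqrt_nonneg P]

lemma Lf_add_smul {F K : G → Matrix (Fin n) (Fin n) ℂ} (hF : MB F) (hK : MB K) (a : ℂ) :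
    Lf M φ (fun z => F z + a • K z) = Lf M φ F + a * Lf M φ K := by
  obtain ⟨C, hC0, hFb⟩ := hF
  obtain ⟨D, hD0, hKb⟩ := hK
  have h1 : (fun t => ip M (psi φ t) (fun z => F z + a • K z))
      = fun t => ip M (psi φ t) F + a * ip M (psi φ t) K := by
    funext t
    rw [ip_add_right M (MB_psi φ hφ1 t) ⟨C, hC0, hFb⟩ ((MB.smul a ⟨D, hD0, hKb⟩)),
      ip_smul_right M a (MB_psi φ hφ1 t) ⟨D, hD0, hKb⟩]
  rw [Lf, h1, M.add _ _ ⟨(n:ℝ)^2*((n:ℝ)*C), bc_ip_psi M φ hφ1 hC0 hFb⟩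
    ((Bc.mul_const a ⟨(n:ℝ)^2*((n:ℝ)*D), bc_ip_psi M φ hφ1 hD0 hKb⟩)),
    M.smul _ _ ⟨(n:ℝ)^2*((n:ℝ)*D), bc_ip_psi M φ hφ1 hD0 hKb⟩]
  rfl

lemma q_expand {F K : G → Matrix (Fin n) (Fin n) ℂ} (hF : MB F) (hK : MB K)
    (t : ℝ) (c : ℂ) (hc : ‖c‖ = 1) :
    qf M φ (fun z => F z + ((t:ℂ)*c) • K z)
      = qf M φ F - 2*t*((c * (Lf M φ K - ip M F K)).re) + t^2 * (ip M K K).re := by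
  have h1 := ip_expand_re M hF hK t c hc
  have h2 := Lf_add_smul M φ hφ1 hF hK ((t:ℂ)*c)
  have h3 : (Lf M φ F + ((t:ℂ)*c) * Lf M φ K).re
      = (Lf M φ F).re + t * ((c * Lf M φ K).re) := by
    rw [Complex.add_re, mul_assoc, Complex.re_ofReal_mul]
  have h4 : (c * (Lf M φ K - ip M F K)).re = (c * Lf M φ K).re - (c * ip M F K).re := by
    rw [mul_sub, Complex.sub_re]
  simp only [qf]
  rw [h1, h2, h3, h4]
  ring

end

end IterAux

/-- The iterated mean `𝔼_x 𝔼_y 𝔼_z tr (φ(x) φ(y)* φ(yz) φ(xz)*)` is a nonnegative real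
number, for any `φ : G → Mₙ(ℂ)` with `‖φ(x)‖_op ≤ 1`. -/
theorem iterated_mean_nonneg_first
    {G : Type*} [Group G] [Countable G] (M : SymmetricBiInvariantMean G)
    (n : ℕ) (hn : 1 ≤ n)
    (φ : G → Matrix (Fin n) (Fin n) ℂ)
    (hφ : ∀ x : G, matOpNorm (φ x) ≤ 1) :
    (M.m (fun x => M.m (fun y => M.m (fun z =>
        Matrix.trace (φ x * (φ y)ᴴ * φ (y * z) * (φ (x * z))ᴴ))))).im = 0 ∧
    0 ≤ (M.m (fun x => M.m (fun y => M.m (fun z =>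
        Matrix.trace (φ x * (φ y)ᴴ * φ (y * z) * (φ (x * z))ᴴ))))).re := by
  classical
  have hφ1 : ∀ x i j, ‖φ x i j‖ ≤ 1 :=
    fun x i j => (IterAux.norm_entry_le (φ x) i j).trans (hφ x)
  have habs_re : ∀ z : ℂ, |z.re| ≤ ‖z‖ := fun z => Complex.abs_re_le_norm z
  have habs_im : ∀ z : ℂ, |z.im| ≤ ‖z‖ := fun z => Complex.abs_im_le_norm z
  have hn0 : (0:ℝ) ≤ (n:ℝ) := Nat.cast_nonneg n
  set I : ℂ := M.m (fun x => M.m (fun y => M.m (fun z =>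
      Matrix.trace (φ x * (φ y)ᴴ * φ (y * z) * (φ (x * z))ᴴ)))) with hIdef
  -- Step A : inner mean is the semi-inner product of ψ x and ψ y
  have stepA : ∀ x y : G, M.m (fun z =>
      Matrix.trace (φ x * (φ y)ᴴ * φ (y * z) * (φ (x * z))ᴴ))
      = IterAux.ip M (IterAux.psi φ x) (IterAux.psi φ y) := by
    intro x y
    have h : (fun z => Matrix.trace (φ x * (φ y)ᴴ * φ (y * z) * (φ (x * z))ᴴ))
        = fun z => (((IterAux.psi φ x z)ᴴ) * (IterAux.psi φ y z)).trace := by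
      funext z
      simp only [IterAux.psi, Matrix.conjTranspose_mul, Matrix.conjTranspose_conjTranspose]
      rw [Matrix.trace_mul_comm]
      simp [Matrix.mul_assoc]
    rw [h]
    rfl
  -- Step B : the y-mean is the conjugate of L(ψ x)
  have stepB : ∀ x : G, M.m (fun y => IterAux.ip M (IterAux.psi φ x) (IterAux.psi φ y))
      = conj (IterAux.Lf M φ (IterAux.psi φ x)) := by
    intro x
    have h : (fun y => IterAux.ip M (IterAux.psi φ x) (IterAux.psi φ y))
        = fun y => conj (IterAux.ip M (IterAux.psi φ y) (IterAux.psi φ x)) :=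
      funext fun y => IterAux.ip_conj_symm M (IterAux.MB_psi φ hφ1 y) (IterAux.MB_psi φ hφ1 x)
    rw [h, IterAux.m_conj M _ ⟨(n:ℝ)^2*((n:ℝ)*(n:ℝ)),
      fun y => IterAux.bc_ip_psi M φ hφ1 hn0 (IterAux.psi_bound φ hφ1 x) y⟩]
    rfl
  have hLb : ∀ x, ‖IterAux.Lf M φ (IterAux.psi φ x)‖ ≤ (n:ℝ)^2*((n:ℝ)*(n:ℝ)) :=
    fun x => IterAux.Lf_norm_le M φ hφ1 hn0 (IterAux.psi_bound φ hφ1 x)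
  -- Step C : I = conj (m_x L(ψ x))
  have stepC : I = conj (M.m (fun x => IterAux.Lf M φ (IterAux.psi φ x))) := by
    rw [hIdef]
    have h1 : (fun x => M.m (fun y => M.m (fun z =>
        Matrix.trace (φ x * (φ y)ᴴ * φ (y * z) * (φ (x * z))ᴴ))))
        = fun x => conj (IterAux.Lf M φ (IterAux.psi φ x)) := by
      funext x
      have h2 : (fun y => M.m (fun z =>
          Matrix.trace (φ x * (φ y)ᴴ * φ (y * z) * (φ (x * z))ᴴ)))
          = fun y => IterAux.ip M (IterAux.psi φ x) (IterAux.psi φ y) :=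
        funext fun y => stepA x y
      rw [h2, stepB x]
    rw [h1, IterAux.m_conj M _ ⟨(n:ℝ)^2*((n:ℝ)*(n:ℝ)), hLb⟩]
  -- the infimum of the quadratic functional
  set S : Set ℝ := {r | ∃ F, IterAux.MB F ∧ IterAux.qf M φ F = r} with hSdef
  have hS0 : (0:ℝ) ∈ S := ⟨fun _ => 0, IterAux.MB.zero, IterAux.q_zero M φ hφ1⟩
  have hbdd : BddBelow S := by
    refine ⟨-(n:ℝ)^4, fun r hr => ?_⟩
    obtain ⟨F, hF, rfl⟩ := hr
    exact IterAux.q_lower M φ hφ1 hF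
  set s : ℝ := sInf S with hsdef
  have hsle0 : s ≤ 0 := csInf_le hbdd hS0
  have hslb : ∀ F, IterAux.MB F → s ≤ IterAux.qf M φ F :=
    fun F hF => csInf_le hbdd ⟨F, hF, rfl⟩
  set K₁ : ℝ := 3*(n:ℝ)^2 + 1 with hK₁def
  have hK₁ : 0 < K₁ := by positivity
  -- main estimate for every small η
  have main : ∀ η : ℝ, 0 < η → η ≤ 1 → |I.im| ≤ K₁*η ∧ -(K₁*η) ≤ I.re := by
    intro η hη0 hη1
    obtain ⟨r, hrS, hrlt⟩ := exists_lt_of_csInf_lt ⟨0, hS0⟩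
      (show sInf S < s + η^2 by rw [← hsdef]; nlinarith)
    obtain ⟨F, hF, rfl⟩ := hrS
    have hF' : IterAux.MB F := hF
    obtain ⟨CF, hCF0, hFb⟩ := hF
    have hδ0 : 0 ≤ IterAux.qf M φ F - s := by linarith [hslb F hF']
    have hδη : IterAux.qf M φ F - s ≤ η^2 := by linarith
    -- quantitative bound on the defect functional D K = L K - <F, K>
    have hD : ∀ K, IterAux.MB K → ‖IterAux.Lf M φ K - IterAux.ip M F K‖^2
        ≤ (IterAux.qf M φ F - s) * (IterAux.ip M K K).re := by
      intro K hK
      apply IterAux.abs_le_of_key _ _ _ (IterAux.ip_self M hK).2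
      intro c hc t
      have h1 := hslb _ (hF'.add (hK.smul ((t:ℂ)*c)))
      rw [IterAux.q_expand M φ hφ1 hF' hK t c hc] at h1
      linarith
    have hDpsi : ∀ x, ‖IterAux.Lf M φ (IterAux.psi φ x) - IterAux.ip M F (IterAux.psi φ x)‖
        ≤ η * (n:ℝ)^2 := by
      intro x
      apply IterAux.le_of_sq_le_sq _ _ (norm_nonneg _) (by positivity)
      have h1 := hD _ (IterAux.MB_psi φ hφ1 x)
      have h2 := IterAux.ip_psi_self_le M φ hφ1 x
      have h3 := (IterAux.ip_self M (IterAux.MB_psi φ hφ1 x)).2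
      nlinarith
    set E : ℂ := M.m (fun x => IterAux.Lf M φ (IterAux.psi φ x)
      - IterAux.ip M F (IterAux.psi φ x)) with hEdef
    have hEnorm : ‖E‖ ≤ η * (n:ℝ)^2 := IterAux.m_norm_le M _ _ hDpsi
    have hBc1 : IterAux.Bc (fun x => IterAux.Lf M φ (IterAux.psi φ x)) := ⟨_, hLb⟩
    have hBc2 : IterAux.Bc (fun x => IterAux.ip M F (IterAux.psi φ x)) :=
      ⟨(n:ℝ)^2 * (CF * (n:ℝ)), fun x => IterAux.ip_norm_le M hCF0 hn0 hFb
        (IterAux.psi_bound φ hφ1 x)⟩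
    have hsplit : M.m (fun x => IterAux.Lf M φ (IterAux.psi φ x))
        = E + M.m (fun x => IterAux.ip M F (IterAux.psi φ x)) := by
      have h : (fun x => IterAux.Lf M φ (IterAux.psi φ x))
          = fun x => (IterAux.Lf M φ (IterAux.psi φ x)
            - IterAux.ip M F (IterAux.psi φ x)) + IterAux.ip M F (IterAux.psi φ x) := by
        funext x; ring
      rw [h, M.add _ _ (hBc1.sub hBc2) hBc2, hEdef]
    have hconjLF : M.m (fun x => IterAux.ip M F (IterAux.psi φ x))
        = conj (IterAux.Lf M φ F) := by
      have h : (fun x => IterAux.ip M F (IterAux.psi φ x))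
          = fun x => conj (IterAux.ip M (IterAux.psi φ x) F) :=
        funext fun x => IterAux.ip_conj_symm M (IterAux.MB_psi φ hφ1 x) hF'
      rw [h, IterAux.m_conj M _ ⟨(n:ℝ)^2*((n:ℝ)*CF),
        fun x => IterAux.bc_ip_psi M φ hφ1 hCF0 hFb x⟩]
      rfl
    have hI : I = conj E + IterAux.Lf M φ F := by
      rw [stepC, hsplit, hconjLF, map_add, Complex.conj_conj]
    have hPF := IterAux.ip_self M hF'
    have hp2 : (Real.sqrt ((IterAux.ip M F F).re))^2 = (IterAux.ip M F F).re :=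
      Real.sq_sqrt hPF.2
    have hp0 : 0 ≤ Real.sqrt ((IterAux.ip M F F).re) := Real.sqrt_nonneg _
    have hLFb : ‖IterAux.Lf M φ F‖ ≤ (n:ℝ)^2 * Real.sqrt ((IterAux.ip M F F).re) :=
      IterAux.L_bound_CS M φ hφ1 hF'
    have hpbound : Real.sqrt ((IterAux.ip M F F).re) ≤ 2*(n:ℝ)^2 + 1 := by
      have hre : (IterAux.Lf M φ F).re ≤ ‖IterAux.Lf M φ F‖ :=
        (le_abs_self _).trans (habs_re _)
      have hqF : IterAux.qf M φ F
          = (IterAux.ip M F F).re - 2*(IterAux.Lf M φ F).re := rfl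
      nlinarith [sq_nonneg (Real.sqrt ((IterAux.ip M F F).re) - (2*(n:ℝ)^2+1))]
    have hDF : ‖IterAux.Lf M φ F - IterAux.ip M F F‖
        ≤ η * (2*(n:ℝ)^2 + 1) := by
      have h0 : ‖IterAux.Lf M φ F - IterAux.ip M F F‖
          ≤ η * Real.sqrt ((IterAux.ip M F F).re) := by
        apply IterAux.le_of_sq_le_sq _ _ (norm_nonneg _) (by positivity)
        have h1 := hD F hF'
        nlinarith [hPF.2]
      refine h0.trans ?_
      exact mul_le_mul_of_nonneg_left hpbound hη0.le
    -- put the pieces together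
    have hIim : I.im = -E.im + (IterAux.Lf M φ F - IterAux.ip M F F).im
        + (IterAux.ip M F F).im := by
      have h : IterAux.Lf M φ F = (IterAux.Lf M φ F - IterAux.ip M F F)
          + IterAux.ip M F F := by ring
      rw [hI, h]
      simp [Complex.add_im, Complex.conj_im]
      ring
    have hIre : I.re = E.re + (IterAux.Lf M φ F - IterAux.ip M F F).re
        + (IterAux.ip M F F).re := by
      have h : IterAux.Lf M φ F = (IterAux.Lf M φ F - IterAux.ip M F F)
          + IterAux.ip M F F := by ring
      rw [hI, h]
      simp [Complex.add_re, Complex.conj_re]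
      ring
    have hEim : |E.im| ≤ η * (n:ℝ)^2 := (habs_im E).trans hEnorm
    have hEre : |E.re| ≤ η * (n:ℝ)^2 := (habs_re E).trans hEnorm
    have hDFim : |(IterAux.Lf M φ F - IterAux.ip M F F).im| ≤ η * (2*(n:ℝ)^2+1) :=
      (habs_im _).trans hDF
    have hDFre : |(IterAux.Lf M φ F - IterAux.ip M F F).re| ≤ η * (2*(n:ℝ)^2+1) :=
      (habs_re _).trans hDF
    constructor
    · rw [hIim, hPF.1, hK₁def]
      have h1 := abs_add_le (-E.im) ((IterAux.Lf M φ F - IterAux.ip M F F).im)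
      rw [abs_neg] at h1
      have h2 : |(-E.im + (IterAux.Lf M φ F - IterAux.ip M F F).im) + 0|
          = |(-E.im + (IterAux.Lf M φ F - IterAux.ip M F F).im)| := by rw [add_zero]
      rw [h2]
      calc |(-E.im + (IterAux.Lf M φ F - IterAux.ip M F F).im)|
          ≤ |E.im| + |(IterAux.Lf M φ F - IterAux.ip M F F).im| := h1
      _ ≤ η * (n:ℝ)^2 + η * (2*(n:ℝ)^2+1) := add_le_add hEim hDFim
      _ = (3*(n:ℝ)^2+1) * η := by ring
    · rw [hIre, hK₁def]
      have h1 : -(η * (n:ℝ)^2) ≤ E.re := by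
        have := neg_abs_le E.re; linarith [hEre, abs_nonneg E.re]
      have h2 : -(η * (2*(n:ℝ)^2+1)) ≤ (IterAux.Lf M φ F - IterAux.ip M F F).re := by
        have := neg_abs_le (IterAux.Lf M φ F - IterAux.ip M F F).re
        linarith [hDFre]
      have h3 : 0 ≤ (IterAux.ip M F F).re := hPF.2
      nlinarith
  constructor
  · exact IterAux.zero_of_eta I.im K₁ hK₁
      (fun η h0 h1 => by have := (main η h0 h1).1; linarith [mul_comm K₁ η])
  · exact IterAux.nonneg_of_eta I.re K₁ hK₁
      (fun η h0 h1 => by have := (main η h0 h1).2; linarith)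
end
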